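/- arXiv:2508.02802 — 3 statements merged into one kernel-verified Lean document; each statement's English description precedes it below -/
import Mathlib

section
/- Let H be a complex separable Hilbert space and let {(x_k, y_k)}_{k=1}^∞ be an unconditional Schauder frame in H, i.e., for every u ∈ H the series ∑_{k=1}^∞ ⟨u, y_k⟩ x_k converges unconditionally to u. Then there exists a sequence of nonzero complex numbers {α_k}_{k=1}^∞ such that both {α_k x_k}_{k=1}^∞ and {conj(α_k)^{-1} y_k}_{k=1}^∞ are frames in H. -/
/-- A sequence `z` in a complex Hilbert space is a frame: there are constants
`C, c > 0` with `c‖u‖² ≤ ∑ₖ |⟨u, zₖ⟩|² ≤ C‖u‖²` for every `u`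
(in particular the series converges). Here `⟨u, zₖ⟩` (linear in the first
argument) corresponds to Mathlib's `inner (z k) u`. -/
def IsFrame {H : Type*} [NormedAddCommGroup H] [InnerProductSpace ℂ H]
    (z : ℕ → H) : Prop :=
  ∃ C c : ℝ, 0 < C ∧ 0 < c ∧ ∀ u : H,
    Summable (fun k => ‖(inner ℂ (z k) u : ℂ)‖ ^ 2) ∧
    c * ‖u‖ ^ 2 ≤ ∑' k, ‖(inner ℂ (z k) u : ℂ)‖ ^ 2 ∧
    ∑' k, ‖(inner ℂ (z k) u : ℂ)‖ ^ 2 ≤ C * ‖u‖ ^ 2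

set_option linter.unusedSectionVars false

namespace RescalingAux

open Finset Filter

noncomputable section

variable {E : Type*} [NormedAddCommGroup E] [InnerProductSpace ℂ E]

/-- sign as a complex scalar -/
def sgn (b : Bool) : ℂ := if b then 1 else -1

lemma norm_sgn (b : Bool) : ‖sgn b‖ = 1 := by cases b <;> simp [sgn]

/-- signed sum of a finite family -/
def radsum {p : ℕ} (m : Fin p → E) (ε : Fin p → Bool) : E := ∑ i, sgn (ε i) • m i

lemma radsum_zero (m : Fin 0 → E) (ε : Fin 0 → Bool) : radsum m ε = 0 := by
  simp [radsum]

lemma sum_pi_bool {p : ℕ} (f : (Fin (p+1) → Bool) → ℝ) :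
    ∑ ε : Fin (p+1) → Bool, f ε
      = ∑ ε : Fin p → Bool, (f (Fin.cons true ε) + f (Fin.cons false ε)) := by
  rw [← Fintype.sum_equiv (Fin.consEquiv (fun _ => Bool))
      (fun x => f ((Fin.consEquiv (fun _ => Bool)) x)) f (fun x => rfl)]
  rw [Fintype.sum_prod_type]
  rw [Fintype.sum_bool]
  rw [← Finset.sum_add_distrib]
  rfl

@[simp] lemma sgn_true : sgn true = 1 := rfl
@[simp] lemma sgn_false : sgn false = -1 := rfl

lemma radsum_cons {p : ℕ} (m : Fin (p+1) → E) (b : Bool) (ε : Fin p → Bool) :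
    radsum m (Fin.cons b ε) = sgn b • m 0 + radsum (fun i => m i.succ) ε := by
  unfold radsum
  rw [Fin.sum_univ_succ]
  simp

lemma radsum_cons_true {p : ℕ} (m : Fin (p+1) → E) (ε : Fin p → Bool) :
    radsum m (Fin.cons true ε) = m 0 + radsum (fun i => m i.succ) ε := by
  rw [radsum_cons]; simp

lemma radsum_cons_false {p : ℕ} (m : Fin (p+1) → E) (ε : Fin p → Bool) :
    radsum m (Fin.cons false ε) = -(m 0 - radsum (fun i => m i.succ) ε) := by
  rw [radsum_cons]; simp; abel

lemma sum_sq_succ {p : ℕ} (m : Fin (p+1) → E) :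
    ∑ i, ‖m i‖^2 = ‖m 0‖^2 + ∑ i : Fin p, ‖m i.succ‖^2 := by
  rw [Fin.sum_univ_succ]

lemma rad_sq : ∀ {p : ℕ} (m : Fin p → E),
    ∑ ε : Fin p → Bool, ‖radsum m ε‖^2 = 2^p * ∑ i, ‖m i‖^2 := by
  intro p
  induction p with
  | zero =>
    intro m
    simp [radsum]
  | succ p ih =>
    intro m
    rw [sum_pi_bool (fun ε => ‖radsum m ε‖^2)]
    have key : ∀ ε : Fin p → Bool,
        ‖radsum m (Fin.cons true ε)‖^2 + ‖radsum m (Fin.cons false ε)‖^2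
          = 2 * (‖m 0‖^2 + ‖radsum (fun i => m i.succ) ε‖^2) := by
      intro ε
      rw [radsum_cons_true, radsum_cons_false, norm_neg]
      have h := parallelogram_law_with_norm ℂ (m 0) (radsum (fun i => m i.succ) ε)
      nlinarith [h]
    rw [Finset.sum_congr rfl (fun ε _ => key ε)]
    rw [← Finset.mul_sum, Finset.sum_add_distrib]
    rw [Finset.sum_const, ih (fun i => m i.succ), sum_sq_succ m]
    simp only [card_univ, Fintype.card_pi, Fintype.card_bool, Finset.prod_const,
      Fintype.card_fin, nsmul_eq_mul]
    push_cast
    ring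

lemma rad_quad : ∀ {p : ℕ} (m : Fin p → E),
    ∑ ε : Fin p → Bool, ‖radsum m ε‖^4 ≤ 3 * 2^p * (∑ i, ‖m i‖^2)^2 := by
  intro p
  induction p with
  | zero =>
    intro m
    simp [radsum]
  | succ p ih =>
    intro m
    rw [sum_pi_bool (fun ε => ‖radsum m ε‖^4)]
    set S := fun ε : Fin p → Bool => radsum (fun i => m i.succ) ε with hS
    have key : ∀ ε : Fin p → Bool,
        ‖radsum m (Fin.cons true ε)‖^4 + ‖radsum m (Fin.cons false ε)‖^4
          ≤ 2*‖S ε‖^4 + 12*‖S ε‖^2*‖m 0‖^2 + 2*‖m 0‖^4 := by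
      intro ε
      rw [radsum_cons_true, radsum_cons_false, norm_neg]
      have e1 : ‖m 0 + S ε‖^2 = ‖m 0‖^2 + 2 * RCLike.re (inner ℂ (m 0) (S ε) : ℂ) + ‖S ε‖^2 :=
        norm_add_sq (𝕜 := ℂ) _ _
      have e2' : ‖m 0 - S ε‖^2 = ‖m 0‖^2 - 2 * RCLike.re (inner ℂ (m 0) (S ε) : ℂ) + ‖S ε‖^2 :=
        norm_sub_sq (𝕜 := ℂ) _ _
      have hre : |RCLike.re (inner ℂ (m 0) (S ε) : ℂ)| ≤ ‖m 0‖ * ‖S ε‖ :=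
        le_trans (RCLike.abs_re_le_norm _) (norm_inner_le_norm _ _)
      have h4 : ‖m 0 + S ε‖^4 = (‖m 0 + S ε‖^2)^2 := by ring
      have h5 : ‖m 0 - S ε‖^4 = (‖m 0 - S ε‖^2)^2 := by ring
      rw [h4, h5, e1, e2']
      have hm0 : (0:ℝ) ≤ ‖m 0‖ := norm_nonneg _
      have hs0 : (0:ℝ) ≤ ‖S ε‖ := norm_nonneg _
      nlinarith [abs_le.mp hre, sq_nonneg (‖m 0‖*‖S ε‖ - RCLike.re (inner ℂ (m 0) (S ε) : ℂ)),
        sq_nonneg (‖m 0‖*‖S ε‖ + RCLike.re (inner ℂ (m 0) (S ε) : ℂ))]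
    refine le_trans (Finset.sum_le_sum (fun ε _ => key ε)) ?_
    have hq : ∑ ε : Fin p → Bool, ‖S ε‖^2 = 2^p * ∑ i : Fin p, ‖m i.succ‖^2 :=
      rad_sq (fun i => m i.succ)
    have hq4 : ∑ ε : Fin p → Bool, ‖S ε‖^4 ≤ 3 * 2^p * (∑ i : Fin p, ‖m i.succ‖^2)^2 :=
      ih (fun i => m i.succ)
    rw [sum_sq_succ m]
    have e12 : ∑ ε : Fin p → Bool, 12*‖S ε‖^2*‖m 0‖^2
        = 12*‖m 0‖^2*(∑ ε : Fin p → Bool, ‖S ε‖^2) := by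
      rw [Finset.mul_sum]; apply Finset.sum_congr rfl; intro ε _; ring
    have e2s : ∑ ε : Fin p → Bool, 2*‖S ε‖^4 = 2*(∑ ε : Fin p → Bool, ‖S ε‖^4) := by
      rw [Finset.mul_sum]
    have ec : ∑ _ε : Fin p → Bool, 2*‖m 0‖^4 = (2^p : ℝ) * (2*‖m 0‖^4) := by
      rw [Finset.sum_const]
      simp only [card_univ, Fintype.card_pi, Fintype.card_bool, Finset.prod_const,
        Fintype.card_fin, nsmul_eq_mul]
      push_cast; ring
    rw [Finset.sum_add_distrib, Finset.sum_add_distrib, e12, e2s, ec, hq]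
    have h2p : (0:ℝ) < 2^p := by positivity
    set Q := ∑ i : Fin p, ‖m i.succ‖^2 with hQdef
    have hQ0 : 0 ≤ Q := Finset.sum_nonneg (fun i _ => by positivity)
    have hpow : (2:ℝ)^(p+1) = 2 * 2^p := by ring
    rw [hpow]
    nlinarith [hq4, mul_nonneg h2p.le (sq_nonneg (‖m 0‖^2)), sq_nonneg (‖m 0‖^2 + Q)]


lemma sum_norm_radsum_sq_le {p : ℕ} (m : Fin p → E) :
    (∑ ε : Fin p → Bool, ‖radsum m ε‖)^2 ≤ (2^p : ℝ) * ∑ ε : Fin p → Bool, ‖radsum m ε‖^2 := by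
  have h := Finset.sum_mul_sq_le_sq_mul_sq Finset.univ (fun _ : Fin p → Bool => (1:ℝ))
    (fun ε => ‖radsum m ε‖)
  simp only [one_mul, one_pow] at h
  refine le_trans h ?_
  rw [Finset.sum_const]
  simp only [card_univ, Fintype.card_pi, Fintype.card_bool, Finset.prod_const,
    Fintype.card_fin, nsmul_eq_mul, mul_one]
  push_cast
  exact le_rfl

/-- averaged L¹ norm of the signed sums is at most `2^p √(∑‖mᵢ‖²)`. -/
lemma rad_norm_le {p : ℕ} (m : Fin p → E) (hm : ∑ i, ‖m i‖^2 ≤ 1) :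
    ∑ ε : Fin p → Bool, ‖radsum m ε‖ ≤ 2^p := by
  have h1 : (∑ ε : Fin p → Bool, ‖radsum m ε‖)^2 ≤ (2^p : ℝ) * ∑ ε : Fin p → Bool, ‖radsum m ε‖^2 :=
    sum_norm_radsum_sq_le m
  rw [rad_sq m] at h1
  have hp : (0:ℝ) ≤ 2^p := by positivity
  have h2 : (∑ ε : Fin p → Bool, ‖radsum m ε‖)^2 ≤ ((2:ℝ)^p)^2 := by
    refine le_trans h1 ?_
    have hmm : (2:ℝ)^p * (∑ i, ‖m i‖^2) ≤ 2^p * 1 := mul_le_mul_of_nonneg_left hm hp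
    calc (2:ℝ)^p * (2^p * ∑ i, ‖m i‖^2) = 2^p * ((2:ℝ)^p * ∑ i, ‖m i‖^2) := by ring
    _ ≤ 2^p * (2^p * 1) := mul_le_mul_of_nonneg_left hmm hp
    _ = ((2:ℝ)^p)^2 := by ring
  have h3 : (0:ℝ) ≤ ∑ ε : Fin p → Bool, ‖radsum m ε‖ :=
    Finset.sum_nonneg (fun ε _ => norm_nonneg _)
  calc ∑ ε : Fin p → Bool, ‖radsum m ε‖ = Real.sqrt ((∑ ε : Fin p → Bool, ‖radsum m ε‖)^2) :=
        (Real.sqrt_sq h3).symm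
  _ ≤ Real.sqrt (((2:ℝ)^p)^2) := Real.sqrt_le_sqrt h2
  _ = 2^p := Real.sqrt_sq hp

/-- Khintchine-type lower bound for the averaged L¹ norm. -/
lemma rad_abs {p : ℕ} (m : Fin p → E) :
    2^p * Real.sqrt (∑ i, ‖m i‖^2) ≤ Real.sqrt 3 * ∑ ε : Fin p → Bool, ‖radsum m ε‖ := by
  set X := fun ε : Fin p → Bool => ‖radsum m ε‖ with hX
  have hX0 : ∀ ε, 0 ≤ X ε := fun ε => norm_nonneg _
  set Q := ∑ i, ‖m i‖^2 with hQ
  have hQ0 : 0 ≤ Q := Finset.sum_nonneg (fun i _ => by positivity)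
  set S1 := ∑ ε : Fin p → Bool, X ε with hS1
  set S2 := ∑ ε : Fin p → Bool, (X ε)^2 with hS2
  set S3 := ∑ ε : Fin p → Bool, (X ε)^3 with hS3
  set S4 := ∑ ε : Fin p → Bool, (X ε)^4 with hS4
  have hS10 : 0 ≤ S1 := Finset.sum_nonneg (fun ε _ => hX0 ε)
  have hS20 : 0 ≤ S2 := Finset.sum_nonneg (fun ε _ => by positivity)
  have hS30 : 0 ≤ S3 := Finset.sum_nonneg (fun ε _ => pow_nonneg (hX0 ε) 3)
  have hS40 : 0 ≤ S4 := Finset.sum_nonneg (fun ε _ => by positivity)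
  have hs2 : S2 = 2^p * Q := rad_sq m
  have hs4 : S4 ≤ 3 * 2^p * Q^2 := rad_quad m
  -- Cauchy–Schwarz: S2² ≤ S1·S3
  have cs1 : S2^2 ≤ S1 * S3 := by
    have h := Finset.sum_mul_sq_le_sq_mul_sq Finset.univ
      (fun ε : Fin p → Bool => Real.sqrt (X ε)) (fun ε => X ε * Real.sqrt (X ε))
    have he : ∀ ε : Fin p → Bool, Real.sqrt (X ε) * (X ε * Real.sqrt (X ε)) = (X ε)^2 := by
      intro ε
      rw [show Real.sqrt (X ε) * (X ε * Real.sqrt (X ε)) = (Real.sqrt (X ε) * Real.sqrt (X ε)) * X ε by ring,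
        Real.mul_self_sqrt (hX0 ε)]
      ring
    have he2 : ∀ ε : Fin p → Bool, (Real.sqrt (X ε))^2 = X ε := fun ε => Real.sq_sqrt (hX0 ε)
    have he3 : ∀ ε : Fin p → Bool, (X ε * Real.sqrt (X ε))^2 = (X ε)^3 := by
      intro ε
      rw [mul_pow, Real.sq_sqrt (hX0 ε)]
      ring
    rw [Finset.sum_congr rfl (fun ε _ => he ε), Finset.sum_congr rfl (fun ε _ => he2 ε),
      Finset.sum_congr rfl (fun ε _ => he3 ε)] at h
    exact h
  -- Cauchy–Schwarz: S3² ≤ S2·S4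
  have cs2 : S3^2 ≤ S2 * S4 := by
    have h := Finset.sum_mul_sq_le_sq_mul_sq Finset.univ
      (fun ε : Fin p → Bool => X ε) (fun ε => (X ε)^2)
    have he : ∀ ε : Fin p → Bool, X ε * (X ε)^2 = (X ε)^3 := fun ε => by ring
    have he3 : ∀ ε : Fin p → Bool, ((X ε)^2)^2 = (X ε)^4 := fun ε => by ring
    rw [Finset.sum_congr rfl (fun ε _ => he ε), Finset.sum_congr rfl (fun ε _ => he3 ε)] at h
    exact h
  -- combine: (2^p)² Q ≤ 3 S1²
  have h2p : (0:ℝ) < 2^p := by positivity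
  have key : (2^p)^2 * Q ≤ 3 * S1^2 := by
    rcases eq_or_lt_of_le hQ0 with hq0 | hq0
    · rw [← hq0]; nlinarith [sq_nonneg S1]
    · -- S2⁴ ≤ S1²S3² ≤ S1² S2 S4 ≤ S1² S2 3 2^p Q²
      have c1 : S2^4 ≤ S1^2 * S3^2 := by nlinarith [cs1, sq_nonneg S2, hS10, hS30]
      have c2 : S1^2 * S3^2 ≤ S1^2 * (S2 * S4) := by nlinarith [cs2, sq_nonneg S1]
      have c3 : S1^2 * (S2 * S4) ≤ S1^2 * (S2 * (3 * 2^p * Q^2)) := by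
        have : S2 * S4 ≤ S2 * (3 * 2^p * Q^2) := by nlinarith [hs4, hS20]
        nlinarith [this, sq_nonneg S1]
      have hS2pos : S2 = 2^p * Q := hs2
      have hQ3 : 0 < 2^p * Q := by positivity
      have call : S2^4 ≤ S1^2 * (S2 * (3 * 2^p * Q^2)) := le_trans c1 (le_trans c2 c3)
      rw [hS2pos] at call
      -- (2^p Q)⁴ ≤ S1² (2^p Q)(3·2^p Q²) = 3 S1² (2^p)² Q³
      have hfour : (2^p * Q)^4 = ((2^p)^2 * Q) * ((2^p)^2 * Q^3) := by ring
      have hrhs : S1^2 * ((2^p * Q) * (3 * 2^p * Q^2)) = (3 * S1^2) * ((2^p)^2 * Q^3) := by ring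
      rw [hfour, hrhs] at call
      have hpos : (0:ℝ) < (2^p)^2 * Q^3 := by positivity
      exact le_of_mul_le_mul_right call hpos
  -- take square roots
  have lhs_eq : 2^p * Real.sqrt Q = Real.sqrt ((2^p)^2 * Q) := by
    rw [Real.sqrt_mul (by positivity), Real.sqrt_sq (by positivity)]
  have rhs_eq : Real.sqrt 3 * S1 = Real.sqrt (3 * S1^2) := by
    rw [Real.sqrt_mul (by norm_num), Real.sqrt_sq hS10]
  rw [lhs_eq, rhs_eq]
  exact Real.sqrt_le_sqrt key

/-! ### Uniform bounds from unconditionality -/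

/-- A summable family has uniformly bounded finite partial sums. -/
lemma exists_subset_sum_bound (f : ℕ → E) (hf : Summable f) :
    ∃ M : ℝ, 0 ≤ M ∧ ∀ F : Finset ℕ, ‖∑ k ∈ F, f k‖ ≤ M := by
  obtain ⟨s, hs⟩ := hf.vanishing (Metric.ball_mem_nhds (0:E) one_pos)
  refine ⟨∑ k ∈ s, ‖f k‖ + 1, by positivity, fun F => ?_⟩
  have hmem := hs (F \ s) Finset.sdiff_disjoint
  rw [mem_ball_zero_iff] at hmem
  have hsplit : ∑ k ∈ F, f k = ∑ k ∈ F ∩ s, f k + ∑ k ∈ F \ s, f k :=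
    (Finset.sum_inter_add_sum_sdiff F s f).symm
  rw [hsplit]
  have h1 : ‖∑ k ∈ F ∩ s, f k‖ ≤ ∑ k ∈ s, ‖f k‖ := by
    refine le_trans (norm_sum_le _ _) ?_
    exact Finset.sum_le_sum_of_subset_of_nonneg (Finset.inter_subset_right)
      (fun k _ _ => norm_nonneg _)
  calc ‖∑ k ∈ F ∩ s, f k + ∑ k ∈ F \ s, f k‖ ≤ ‖∑ k ∈ F ∩ s, f k‖ + ‖∑ k ∈ F \ s, f k‖ :=
        norm_add_le _ _
  _ ≤ ∑ k ∈ s, ‖f k‖ + 1 := add_le_add h1 hmem.le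

/-- convex coefficients: a `[0,1]`-combination of subset sums, with an offset. -/
lemma convex_coeff_bound_aux {M : ℝ} (v : ℕ → E) (t : ℕ → ℝ)
    (h0 : ∀ k, 0 ≤ t k) (h1 : ∀ k, t k ≤ 1) :
    ∀ (F : Finset ℕ) (z : E), (∀ G ⊆ F, ‖z + ∑ k ∈ G, v k‖ ≤ M) →
      ‖z + ∑ k ∈ F, t k • v k‖ ≤ M := by
  intro F
  induction F using Finset.induction_on with
  | empty => intro z hz; simpa using hz ∅ (by simp)
  | @insert a F ha ih =>
    intro z hz
    have key : z + ∑ k ∈ insert a F, t k • v k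
        = t a • ((z + v a) + ∑ k ∈ F, t k • v k) + (1 - t a) • (z + ∑ k ∈ F, t k • v k) := by
      rw [Finset.sum_insert ha]
      rw [smul_add, smul_add, smul_add]
      rw [sub_smul, one_smul, sub_smul, one_smul]
      abel
    have b1 : ‖(z + v a) + ∑ k ∈ F, t k • v k‖ ≤ M := by
      refine ih (z + v a) (fun G hG => ?_)
      have : (z + v a) + ∑ k ∈ G, v k = z + ∑ k ∈ insert a G, v k := by
        rw [Finset.sum_insert (fun hmem => ha (hG hmem))]
        abel
      rw [this]
      exact hz (insert a G) (Finset.insert_subset_insert a hG)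
    have b2 : ‖z + ∑ k ∈ F, t k • v k‖ ≤ M := by
      refine ih z (fun G hG => hz G (hG.trans (Finset.subset_insert a F)))
    calc ‖z + ∑ k ∈ insert a F, t k • v k‖
        ≤ ‖t a • ((z + v a) + ∑ k ∈ F, t k • v k)‖ + ‖(1 - t a) • (z + ∑ k ∈ F, t k • v k)‖ := by
          rw [key]; exact norm_add_le _ _
    _ = t a * ‖(z + v a) + ∑ k ∈ F, t k • v k‖ + (1 - t a) * ‖z + ∑ k ∈ F, t k • v k‖ := by
          rw [norm_smul, norm_smul, Real.norm_eq_abs, Real.norm_eq_abs,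
            abs_of_nonneg (h0 a), abs_of_nonneg (by linarith [h1 a])]
    _ ≤ t a * M + (1 - t a) * M :=
          add_le_add (mul_le_mul_of_nonneg_left b1 (h0 a))
            (mul_le_mul_of_nonneg_left b2 (by linarith [h1 a]))
    _ = M := by ring

/-- complex coefficients of modulus at most 1. -/
lemma complex_coeff_bound {M : ℝ} (v : ℕ → E) (σ : ℕ → ℂ) (hσ : ∀ k, ‖σ k‖ ≤ 1)
    (F : Finset ℕ) (hb : ∀ G ⊆ F, ‖∑ k ∈ G, v k‖ ≤ M) :
    ‖∑ k ∈ F, σ k • v k‖ ≤ 4 * M := by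
  have hre : ∀ k, |(σ k).re| ≤ 1 := fun k =>
    le_trans (Complex.abs_re_le_norm _) (hσ k)
  have him : ∀ k, |(σ k).im| ≤ 1 := fun k =>
    le_trans (Complex.abs_im_le_norm _) (hσ k)
  have hdecomp : ∀ k, σ k • v k
      = (max (σ k).re 0) • v k - (max (-(σ k).re) 0) • v k
        + ((max (σ k).im 0) • (Complex.I • v k) - (max (-(σ k).im) 0) • (Complex.I • v k)) := by
    intro k
    have hres : max (σ k).re 0 - max (-(σ k).re) 0 = (σ k).re := by
      rcases le_total 0 (σ k).re with h | h
      · rw [max_eq_left h, max_eq_right (by linarith)]; ring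
      · rw [max_eq_right h, max_eq_left (by linarith)]; ring
    have hims : max (σ k).im 0 - max (-(σ k).im) 0 = (σ k).im := by
      rcases le_total 0 (σ k).im with h | h
      · rw [max_eq_left h, max_eq_right (by linarith)]; ring
      · rw [max_eq_right h, max_eq_left (by linarith)]; ring
    have final : (max (σ k).re 0) • v k - (max (-(σ k).re) 0) • v k
        + ((max (σ k).im 0) • (Complex.I • v k) - (max (-(σ k).im) 0) • (Complex.I • v k))
        = σ k • v k := by
      rw [← sub_smul, ← sub_smul, hres, hims]
      have h1 : ((σ k).re) • v k = (((σ k).re : ℝ) : ℂ) • v k := by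
        rw [← Complex.coe_algebraMap, algebraMap_smul]
      have h2 : ((σ k).im) • (Complex.I • v k) = ((((σ k).im : ℝ) : ℂ) * Complex.I) • v k := by
        rw [mul_smul, ← Complex.coe_algebraMap, algebraMap_smul]
      rw [h1, h2, ← add_smul, Complex.re_add_im]
    exact final.symm
  have split : ∑ k ∈ F, σ k • v k
      = (∑ k ∈ F, (max (σ k).re 0) • v k) - (∑ k ∈ F, (max (-(σ k).re) 0) • v k)
        + ((∑ k ∈ F, (max (σ k).im 0) • (Complex.I • v k))
          - (∑ k ∈ F, (max (-(σ k).im) 0) • (Complex.I • v k))) := by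
    rw [Finset.sum_congr rfl (fun k _ => hdecomp k)]
    rw [Finset.sum_add_distrib, Finset.sum_sub_distrib, Finset.sum_sub_distrib]
  have hbI : ∀ G ⊆ F, ‖(0:E) + ∑ k ∈ G, Complex.I • v k‖ ≤ M := by
    intro G hG
    rw [zero_add, ← Finset.smul_sum, norm_smul, Complex.norm_I, one_mul]
    exact hb G hG
  have hb0 : ∀ G ⊆ F, ‖(0:E) + ∑ k ∈ G, v k‖ ≤ M := by
    intro G hG; rw [zero_add]; exact hb G hG
  have B1 : ‖∑ k ∈ F, (max (σ k).re 0) • v k‖ ≤ M := by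
    have := convex_coeff_bound_aux v (fun k => max (σ k).re 0)
      (fun k => le_max_right _ _)
      (fun k => max_le (le_trans (le_abs_self _) (hre k)) zero_le_one) F 0 hb0
    simpa using this
  have B2 : ‖∑ k ∈ F, (max (-(σ k).re) 0) • v k‖ ≤ M := by
    have := convex_coeff_bound_aux v (fun k => max (-(σ k).re) 0)
      (fun k => le_max_right _ _)
      (fun k => max_le (le_trans (le_abs_self _) (by rw [abs_neg]; exact hre k)) zero_le_one) F 0 hb0
    simpa using this
  have B3 : ‖∑ k ∈ F, (max (σ k).im 0) • (Complex.I • v k)‖ ≤ M := by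
    have := convex_coeff_bound_aux (fun k => Complex.I • v k) (fun k => max (σ k).im 0)
      (fun k => le_max_right _ _)
      (fun k => max_le (le_trans (le_abs_self _) (him k)) zero_le_one) F 0 hbI
    simpa using this
  have B4 : ‖∑ k ∈ F, (max (-(σ k).im) 0) • (Complex.I • v k)‖ ≤ M := by
    have := convex_coeff_bound_aux (fun k => Complex.I • v k) (fun k => max (-(σ k).im) 0)
      (fun k => le_max_right _ _)
      (fun k => max_le (le_trans (le_abs_self _) (by rw [abs_neg]; exact him k)) zero_le_one) F 0 hbI
    simpa using this
  rw [split]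
  calc ‖_ - _ + (_ - _)‖ ≤ ‖(∑ k ∈ F, (max (σ k).re 0) • v k) - (∑ k ∈ F, (max (-(σ k).re) 0) • v k)‖
        + ‖(∑ k ∈ F, (max (σ k).im 0) • (Complex.I • v k))
            - (∑ k ∈ F, (max (-(σ k).im) 0) • (Complex.I • v k))‖ := norm_add_le _ _
  _ ≤ (‖∑ k ∈ F, (max (σ k).re 0) • v k‖ + ‖∑ k ∈ F, (max (-(σ k).re) 0) • v k‖)
        + (‖∑ k ∈ F, (max (σ k).im 0) • (Complex.I • v k)‖
          + ‖∑ k ∈ F, (max (-(σ k).im) 0) • (Complex.I • v k)‖) :=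
      add_le_add (norm_sub_le _ _) (norm_sub_le _ _)
  _ ≤ M + M + (M + M) := by gcongr
  _ = 4 * M := by ring

/-- Banach–Steinhaus: uniform bound for the partial sum operators. -/
lemma exists_C1 [CompleteSpace E] (x y : ℕ → E)
    (hS : ∀ u : E, HasSum (fun k => (inner ℂ (y k) u : ℂ) • x k) u) :
    ∃ C₁ : ℝ, 1 ≤ C₁ ∧ ∀ (F : Finset ℕ) (u : E),
      ‖∑ k ∈ F, (inner ℂ (y k) u : ℂ) • x k‖ ≤ C₁ * ‖u‖ := by
  set g : Finset ℕ → E →L[ℂ] E := fun F => ∑ k ∈ F, (innerSL ℂ (y k)).smulRight (x k) with hg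
  have happ : ∀ (F : Finset ℕ) (u : E), g F u = ∑ k ∈ F, (inner ℂ (y k) u : ℂ) • x k := by
    intro F u
    rw [hg]
    simp [ContinuousLinearMap.sum_apply, ContinuousLinearMap.smulRight_apply, innerSL_apply_apply]
  have hpt : ∀ u : E, ∃ C, ∀ F : Finset ℕ, ‖g F u‖ ≤ C := by
    intro u
    obtain ⟨M, _, hM⟩ := exists_subset_sum_bound (fun k => (inner ℂ (y k) u : ℂ) • x k)
      (hS u).summable
    exact ⟨M, fun F => by rw [happ]; exact hM F⟩
  obtain ⟨C', hC'⟩ := banach_steinhaus hpt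
  refine ⟨max C' 1, le_max_right _ _, fun F u => ?_⟩
  calc ‖∑ k ∈ F, (inner ℂ (y k) u : ℂ) • x k‖ = ‖g F u‖ := by rw [happ]
  _ ≤ ‖g F‖ * ‖u‖ := (g F).le_opNorm u
  _ ≤ max C' 1 * ‖u‖ := by
      have := (hC' F).trans (le_max_left C' 1)
      exact mul_le_mul_of_nonneg_right this (norm_nonneg u)

/-- The key absolute-sum inequality (D). -/
lemma D_bound (x y : ℕ → E) (C₁ : ℝ)
    (hC : ∀ (F : Finset ℕ) (u : E), ‖∑ k ∈ F, (inner ℂ (y k) u : ℂ) • x k‖ ≤ C₁ * ‖u‖) :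
    ∀ (F : Finset ℕ) (u v : E),
      ∑ k ∈ F, ‖(inner ℂ (y k) u : ℂ)‖ * ‖(inner ℂ (x k) v : ℂ)‖ ≤ 4 * C₁ * (‖u‖ * ‖v‖) := by
  intro F u v
  set c : ℕ → ℂ := fun k => (inner ℂ (y k) u : ℂ) with hc
  set ζ : ℕ → ℂ := fun k => (starRingEnd ℂ) (c k) * (inner ℂ (x k) v : ℂ) with hζ
  set σ : ℕ → ℂ := fun k => if ζ k = 0 then 1 else ζ k / ‖ζ k‖ with hσdef
  have hσ : ∀ k, ‖σ k‖ ≤ 1 := by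
    intro k
    rw [hσdef]
    by_cases h : ζ k = 0
    · simp [h]
    · simp only [h, if_false]
      rw [norm_div, Complex.norm_real, norm_norm,
        div_self (norm_ne_zero_iff.mpr h)]
  have hconj : ∀ k, (starRingEnd ℂ) (σ k) * ζ k = ((‖ζ k‖ : ℝ) : ℂ) := by
    intro k
    rw [hσdef]
    by_cases h : ζ k = 0
    · simp [h]
    · simp only [h, if_false]
      have hA : ‖ζ k‖ ≠ 0 := norm_ne_zero_iff.mpr h
      rw [map_div₀, Complex.conj_ofReal, div_mul_eq_mul_div,
        mul_comm ((starRingEnd ℂ) (ζ k)) (ζ k), Complex.mul_conj, Complex.normSq_eq_norm_sq]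
      rw [div_eq_iff (by exact_mod_cast hA)]
      push_cast
      ring
  have hTnorm : ‖∑ k ∈ F, σ k • (c k • x k)‖ ≤ 4 * (C₁ * ‖u‖) := by
    refine complex_coeff_bound (fun k => c k • x k) σ hσ F (fun G _ => hC G u)
  have hinner : (inner ℂ (∑ k ∈ F, σ k • (c k • x k)) v : ℂ) = ((∑ k ∈ F, ‖ζ k‖ : ℝ) : ℂ) := by
    rw [sum_inner]
    push_cast
    refine Finset.sum_congr rfl (fun k _ => ?_)
    rw [inner_smul_left, inner_smul_left, ← hconj k]
  have habs : (∑ k ∈ F, ‖ζ k‖ : ℝ) ≤ 4 * (C₁ * ‖u‖) * ‖v‖ := by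
    have h1 : ‖(inner ℂ (∑ k ∈ F, σ k • (c k • x k)) v : ℂ)‖ ≤ ‖∑ k ∈ F, σ k • (c k • x k)‖ * ‖v‖ :=
      norm_inner_le_norm _ _
    rw [hinner] at h1
    rw [Complex.norm_real, Real.norm_eq_abs] at h1
    refine le_trans (le_abs_self _) (le_trans h1 ?_)
    exact mul_le_mul_of_nonneg_right hTnorm (norm_nonneg v)
  have heq : ∀ k, ‖ζ k‖ = ‖(inner ℂ (y k) u : ℂ)‖ * ‖(inner ℂ (x k) v : ℂ)‖ := by
    intro k
    rw [hζ, norm_mul, RCLike.norm_conj]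
  calc ∑ k ∈ F, ‖(inner ℂ (y k) u : ℂ)‖ * ‖(inner ℂ (x k) v : ℂ)‖ = ∑ k ∈ F, ‖ζ k‖ := by
        exact (Finset.sum_congr rfl (fun k _ => (heq k))).symm
  _ ≤ 4 * (C₁ * ‖u‖) * ‖v‖ := habs
  _ = 4 * C₁ * (‖u‖ * ‖v‖) := by ring

/-! ### Scalar calculus for the clipped geometric-mean weight -/

lemma sqrt_add_le {a b : ℝ} (ha : 0 ≤ a) (hb : 0 ≤ b) :
    Real.sqrt (a+b) ≤ Real.sqrt a + Real.sqrt b := by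
  rw [← Real.sqrt_sq (by positivity : (0:ℝ) ≤ Real.sqrt a + Real.sqrt b)]
  apply Real.sqrt_le_sqrt
  nlinarith [Real.sq_sqrt ha, Real.sq_sqrt hb, Real.sqrt_nonneg a, Real.sqrt_nonneg b]

/-- the weight: `√(β/τ)` clipped to `[lo, hi]`. -/
def wbar (lo hi τ β : ℝ) : ℝ := min hi (max lo (Real.sqrt (β/τ)))

lemma wbar_mem {lo hi : ℝ} (h0 : 0 < lo) (hlh : lo ≤ hi) (τ β : ℝ) :
    lo ≤ wbar lo hi τ β ∧ wbar lo hi τ β ≤ hi :=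
  ⟨le_min hlh (le_max_left _ _), min_le_left _ _⟩

lemma wbar_pos {lo hi : ℝ} (h0 : 0 < lo) (hlh : lo ≤ hi) (τ β : ℝ) :
    0 < wbar lo hi τ β := lt_of_lt_of_le h0 (wbar_mem h0 hlh τ β).1

/-- helper: weighted AM-GM bound. -/
lemma amgm {w τ β : ℝ} (hw : 0 < w) (hτ : 0 ≤ τ) (hβ : 0 ≤ β) :
    2 * Real.sqrt (τ*β) ≤ w*τ + β/w := by
  have h1 : Real.sqrt (w*τ) * Real.sqrt (β/w) = Real.sqrt (τ*β) := by
    rw [← Real.sqrt_mul (by positivity)]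
    congr 1
    field_simp
  nlinarith [sq_nonneg (Real.sqrt (w*τ) - Real.sqrt (β/w)),
    Real.sq_sqrt (mul_nonneg hw.le hτ), Real.sq_sqrt (div_nonneg hβ hw.le)]

/-- helper: larger evaluation point is better when `β ≤ a*b*τ`. -/
lemma fdiff_up {a b τ β : ℝ} (ha : 0 < a) (hb : 0 < b) (hab : a ≤ b) (hβ : 0 ≤ β)
    (h : β ≤ a*b*τ) : a*τ + β/a ≤ b*τ + β/b := by
  have key : (b*τ + β/b) - (a*τ + β/a) = (b - a) * (a*b*τ - β) / (a*b) := by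
    field_simp
    ring
  have h2 : 0 ≤ (b - a) * (a*b*τ - β) / (a*b) :=
    div_nonneg (mul_nonneg (sub_nonneg.mpr hab) (sub_nonneg.mpr h)) (by positivity)
  linarith [key ▸ h2]

/-- helper: smaller evaluation point is better when `a*b*τ ≤ β`. -/
lemma fdiff_down {a b τ β : ℝ} (ha : 0 < a) (hb : 0 < b) (hab : a ≤ b) (hτ : 0 ≤ τ)
    (h : a*b*τ ≤ β) : b*τ + β/b ≤ a*τ + β/a := by
  have key : (a*τ + β/a) - (b*τ + β/b) = (b - a) * (β - a*b*τ) / (a*b) := by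
    field_simp
    ring
  have h2 : 0 ≤ (b - a) * (β - a*b*τ) / (a*b) :=
    div_nonneg (mul_nonneg (sub_nonneg.mpr hab) (sub_nonneg.mpr h)) (by positivity)
  linarith [key ▸ h2]

lemma wbar_sqrt_value {τ β : ℝ} (hτ : 0 < τ) (hβ : 0 < β) :
    Real.sqrt (β/τ) * τ = Real.sqrt (τ*β) ∧ β / Real.sqrt (β/τ) = Real.sqrt (τ*β) := by
  have hr : 0 < Real.sqrt (β/τ) := Real.sqrt_pos.mpr (by positivity)
  have hr2 : (Real.sqrt (β/τ))^2 = β/τ := Real.sq_sqrt (by positivity)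
  constructor
  · rw [← Real.sqrt_sq (by positivity : (0:ℝ) ≤ Real.sqrt (β/τ) * τ)]
    congr 1
    rw [mul_pow, hr2]
    field_simp
  · rw [← Real.sqrt_sq (by positivity : (0:ℝ) ≤ β / Real.sqrt (β/τ))]
    congr 1
    rw [div_pow, hr2]
    field_simp

/-- wbar minimizes `w τ + β/w` over `[lo,hi]`. -/
lemma wbar_min_le {lo hi τ β : ℝ} (h0 : 0 < lo) (hlh : lo ≤ hi) (hτ : 0 < τ) (hβ : 0 < β)
    {w : ℝ} (hw1 : lo ≤ w) (hw2 : w ≤ hi) :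
    wbar lo hi τ β * τ + β / wbar lo hi τ β ≤ w * τ + β / w := by
  set r := Real.sqrt (β/τ) with hrdef
  have hr : 0 < r := Real.sqrt_pos.mpr (by positivity)
  have hr2 : r^2 = β/τ := Real.sq_sqrt (by positivity)
  have hw : 0 < w := lt_of_lt_of_le h0 hw1
  rcases le_total r lo with hcase | hcase
  · -- wbar = lo
    have hwb : wbar lo hi τ β = lo := by
      rw [wbar, max_eq_left hcase, min_eq_right hlh]
    rw [hwb]
    have hkey : β ≤ lo*w*τ := by
      have : β/τ ≤ lo^2 := by rw [← hr2]; nlinarith [hr.le]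
      have h2 : lo^2 ≤ lo*w := by nlinarith
      rw [div_le_iff₀ hτ] at this
      nlinarith
    exact fdiff_up h0 hw hw1 hβ.le hkey
  rcases le_total hi r with hcase2 | hcase2
  · -- wbar = hi
    have hwb : wbar lo hi τ β = hi := by
      rw [wbar, min_eq_left (le_max_of_le_right hcase2)]
    rw [hwb]
    have hkey : w*hi*τ ≤ β := by
      have h1 : hi^2 ≤ β/τ := by rw [← hr2]; nlinarith [hr.le, lt_of_lt_of_le h0 hlh]
      have h2 : w*hi ≤ hi^2 := by nlinarith [lt_of_lt_of_le h0 hlh]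
      rw [le_div_iff₀ hτ] at h1
      nlinarith
    exact fdiff_down hw (lt_of_lt_of_le h0 hlh) hw2 hτ.le hkey
  · -- wbar = r, value = 2√(τβ)
    have hwb : wbar lo hi τ β = r := by
      rw [wbar, max_eq_right hcase, min_eq_right hcase2]
    rw [hwb]
    obtain ⟨e1, e2⟩ := wbar_sqrt_value hτ hβ
    rw [← hrdef] at e1 e2
    rw [e1, e2, ← two_mul]
    exact amgm hw hτ.le hβ.le

/-- value bound for the optimal weight. -/
lemma wbar_val_le {lo hi τ β : ℝ} (h0 : 0 < lo) (hlh : lo ≤ hi) (hτ : 0 < τ) (hβ : 0 < β) :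
    wbar lo hi τ β * τ + β / wbar lo hi τ β ≤ 2*Real.sqrt (τ*β) + β/hi + 2*lo*τ := by
  set r := Real.sqrt (β/τ) with hrdef
  have hr : 0 < r := Real.sqrt_pos.mpr (by positivity)
  have hr2 : r^2 = β/τ := Real.sq_sqrt (by positivity)
  have hhi : 0 < hi := lt_of_lt_of_le h0 hlh
  have hsq : 0 ≤ Real.sqrt (τ*β) := Real.sqrt_nonneg _
  have hβhi : 0 ≤ β/hi := by positivity
  rcases le_total r lo with hcase | hcase
  · have hwb : wbar lo hi τ β = lo := by
      rw [wbar, max_eq_left hcase, min_eq_right hlh]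
    rw [hwb]
    have hkey : β/lo ≤ lo*τ := by
      have h1 : β/τ ≤ lo^2 := by rw [← hr2]; nlinarith [hr.le]
      rw [div_le_iff₀ hτ] at h1
      rw [div_le_iff₀ h0]
      nlinarith
    nlinarith
  rcases le_total hi r with hcase2 | hcase2
  · have hwb : wbar lo hi τ β = hi := by
      rw [wbar, min_eq_left (le_max_of_le_right hcase2)]
    rw [hwb]
    have hkey : hi*τ ≤ Real.sqrt (τ*β) := by
      rw [← Real.sqrt_sq (by positivity : (0:ℝ) ≤ hi*τ)]
      apply Real.sqrt_le_sqrt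
      have h1 : hi^2 ≤ β/τ := by rw [← hr2]; nlinarith [hr.le]
      rw [le_div_iff₀ hτ] at h1
      nlinarith
    nlinarith [mul_pos h0 hτ]
  · have hwb : wbar lo hi τ β = r := by
      rw [wbar, max_eq_right hcase, min_eq_right hcase2]
    rw [hwb]
    obtain ⟨e1, e2⟩ := wbar_sqrt_value hτ hβ
    rw [← hrdef] at e1 e2
    rw [e1, e2]
    nlinarith [mul_pos h0 hτ]

lemma abs_min_sub_min_le (c a b : ℝ) : |min c a - min c b| ≤ |a - b| := by
  rcases le_total c a with h1 | h1 <;> rcases le_total c b with h2 | h2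
  · rw [min_eq_left h1, min_eq_left h2]; simp
  · rw [min_eq_left h1, min_eq_right h2]
    rw [abs_of_nonneg (by linarith), abs_of_nonneg (by linarith)]
    linarith
  · rw [min_eq_right h1, min_eq_left h2]
    rw [abs_of_nonpos (by linarith), abs_of_nonpos (by linarith)]
    linarith
  · rw [min_eq_right h1, min_eq_right h2]

lemma abs_max_sub_max_le (c a b : ℝ) : |max c a - max c b| ≤ |a - b| := by
  rcases le_total c a with h1 | h1 <;> rcases le_total c b with h2 | h2
  · rw [max_eq_right h1, max_eq_right h2]
  · rw [max_eq_right h1, max_eq_left h2]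
    rw [abs_of_nonneg (by linarith), abs_of_nonneg (by linarith)]
    linarith
  · rw [max_eq_left h1, max_eq_right h2]
    rw [abs_of_nonpos (by linarith), abs_of_nonpos (by linarith)]
    linarith
  · rw [max_eq_left h1, max_eq_left h2]; simp

/-- one-sided sqrt Lipschitz estimate on `[β/hi², ∞)`. -/
lemma sqrt_lip_aux {hi β s s' : ℝ} (hhi : 0 < hi) (hβ : 0 < β)
    (hs : β/hi^2 ≤ s) (hs' : β/hi^2 ≤ s') (hss : s ≤ s') :
    Real.sqrt (β/s) - Real.sqrt (β/s') ≤ hi^3/β * (s' - s) := by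
  have hc : 0 < β/hi^2 := by positivity
  have hspos : 0 < s := lt_of_lt_of_le hc hs
  have hs'pos : 0 < s' := lt_of_lt_of_le hc hs'
  set a := Real.sqrt (β/s) with ha
  set b := Real.sqrt (β/s') with hb
  have ha2 : a^2 = β/s := Real.sq_sqrt (by positivity)
  have hb2 : b^2 = β/s' := Real.sq_sqrt (by positivity)
  have hbpos : 0 < b := Real.sqrt_pos.mpr (by positivity)
  have hapos : 0 < a := Real.sqrt_pos.mpr (by positivity)
  have hab : b ≤ a := by
    apply Real.sqrt_le_sqrt
    apply div_le_div_of_nonneg_left hβ.le hspos hss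
  -- (a-b)(a+b) = β (s'-s)/(s s')
  have hdiff : (a - b) * (a + b) = β * (s' - s) / (s * s') := by
    have : (a-b)*(a+b) = a^2 - b^2 := by ring
    rw [this, ha2, hb2]
    field_simp
  -- lower bound for s*s'*b
  have hb_eq : b = Real.sqrt β / Real.sqrt s' := by
    rw [hb, Real.sqrt_div hβ.le]
  have hsq' : Real.sqrt s' * Real.sqrt s' = s' := Real.mul_self_sqrt hs'pos.le
  have hs'sqrtpos : 0 < Real.sqrt s' := Real.sqrt_pos.mpr hs'pos
  have h1 : s * s' * b = s * Real.sqrt s' * Real.sqrt β := by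
    rw [hb_eq]
    field_simp
    linear_combination (-1 : ℝ) * hsq'
  have hc_sqrt : Real.sqrt (β/hi^2) = Real.sqrt β / hi := by
    rw [Real.sqrt_div hβ.le, Real.sqrt_sq hhi.le]
  have hsb : Real.sqrt β / hi ≤ Real.sqrt s' := by
    rw [← hc_sqrt]; exact Real.sqrt_le_sqrt hs'
  have hβs : Real.sqrt β * Real.sqrt β = β := Real.mul_self_sqrt hβ.le
  have hid : (β/hi^2) * (Real.sqrt β/hi) * Real.sqrt β = β^2/hi^3 := by
    field_simp
    linear_combination hβs
  have hkey : β^2/hi^3 ≤ s * s' * b := by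
    rw [h1, ← hid]
    have hg1 : 0 ≤ Real.sqrt β := Real.sqrt_nonneg β
    have hg2 : (0:ℝ) ≤ Real.sqrt β / hi := by positivity
    gcongr
  -- finish
  have habsum : 0 < a + b := by linarith
  have hformula : a - b = β * (s' - s) / (s * s') / (a + b) := by
    rw [eq_div_iff (ne_of_gt habsum)]
    exact hdiff
  rw [hformula]
  have hnum : 0 ≤ β * (s' - s) := mul_nonneg hβ.le (by linarith)
  have hkeypos : 0 < β^2/hi^3 := by positivity
  have hX : 0 ≤ β * (s' - s) / (s * s') := div_nonneg hnum (by positivity)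
  calc β * (s' - s) / (s * s') / (a + b) ≤ β * (s' - s) / (s * s') / b := by
        rw [div_le_div_iff₀ habsum hbpos]
        nlinarith [mul_nonneg hX hapos.le]
  _ = β * (s' - s) / (s * s' * b) := by rw [div_div]
  _ ≤ β * (s' - s) / (β^2/hi^3) := by gcongr
  _ = hi^3/β * (s' - s) := by field_simp

/-- Lipschitz bound for `wbar` in the third argument. -/
lemma wbar_lip {lo hi β : ℝ} (h0 : 0 < lo) (hlh : lo ≤ hi) (hβ : 0 < β) {τ τ' : ℝ}
    (hτ : 0 < τ) (hτ' : 0 < τ') :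
    |wbar lo hi τ β - wbar lo hi τ' β| ≤ hi^3/β * |τ - τ'| := by
  have hhi : 0 < hi := lt_of_lt_of_le h0 hlh
  set c := β/hi^2 with hc
  have hcpos : 0 < c := by positivity
  have step1 : ∀ s : ℝ, 0 < s → wbar lo hi s β
      = min hi (max lo (Real.sqrt (β / max s c))) := by
    intro s hs
    rcases le_total c s with h | h
    · rw [wbar, max_eq_left h]
    · rw [max_eq_right h]
      have h' : s * hi^2 ≤ β := by
        have := (le_div_iff₀ (by positivity : (0:ℝ) < hi^2)).mp h
        linarith
      have h1 : hi ≤ Real.sqrt (β/s) := by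
        rw [show hi = Real.sqrt (hi^2) from (Real.sqrt_sq hhi.le).symm]
        apply Real.sqrt_le_sqrt
        rw [le_div_iff₀ hs]
        nlinarith
      have h2 : Real.sqrt (β/c) = hi := by
        rw [hc, show β / (β/hi^2) = hi^2 from by field_simp]
        exact Real.sqrt_sq hhi.le
      rw [wbar, min_eq_left (le_max_of_le_right h1), h2, max_eq_right hlh, min_self]
  rw [step1 τ hτ, step1 τ' hτ']
  refine le_trans (abs_min_sub_min_le hi _ _) ?_
  refine le_trans (abs_max_sub_max_le lo _ _) ?_
  set S := max τ c with hS
  set S' := max τ' c with hS'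
  have hcS : β/hi^2 ≤ S := le_max_right _ _
  have hcS' : β/hi^2 ≤ S' := le_max_right _ _
  have habs : |S - S'| ≤ |τ - τ'| := by
    rw [hS, hS', max_comm τ c, max_comm τ' c]
    exact abs_max_sub_max_le c τ τ'
  have hK : 0 ≤ hi^3/β := by positivity
  rcases le_total S S' with h | h
  · have key := sqrt_lip_aux hhi hβ hcS hcS' h
    have hmono : Real.sqrt (β/S') ≤ Real.sqrt (β/S) := by
      apply Real.sqrt_le_sqrt
      apply div_le_div_of_nonneg_left hβ.le (lt_of_lt_of_le hcpos hcS) h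
    rw [abs_of_nonneg (by linarith)]
    have h2 : S' - S ≤ |τ - τ'| := by
      rw [abs_sub_comm] at habs
      calc S' - S ≤ |S' - S| := le_abs_self _
      _ ≤ |τ - τ'| := by rw [abs_sub_comm] at habs ⊢; exact habs
    calc Real.sqrt (β/S) - Real.sqrt (β/S') ≤ hi^3/β * (S' - S) := key
    _ ≤ hi^3/β * |τ - τ'| := mul_le_mul_of_nonneg_left h2 hK
  · have key := sqrt_lip_aux hhi hβ hcS' hcS h
    have hmono : Real.sqrt (β/S) ≤ Real.sqrt (β/S') := by
      apply Real.sqrt_le_sqrt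
      apply div_le_div_of_nonneg_left hβ.le (lt_of_lt_of_le hcpos hcS') h
    rw [abs_of_nonpos (by linarith)]
    have h2 : S - S' ≤ |τ - τ'| := by
      calc S - S' ≤ |S - S'| := le_abs_self _
      _ ≤ |τ - τ'| := habs
    calc -(Real.sqrt (β/S) - Real.sqrt (β/S')) = Real.sqrt (β/S') - Real.sqrt (β/S) := by ring
    _ ≤ hi^3/β * (S - S') := key
    _ ≤ hi^3/β * |τ - τ'| := mul_le_mul_of_nonneg_left h2 hK

/-- inverse of wbar is a wbar with swapped data. -/
lemma wbar_inv {lo hi τ β : ℝ} (h0 : 0 < lo) (hlh : lo ≤ hi) (hτ : 0 < τ) (hβ : 0 < β) :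
    (wbar lo hi τ β)⁻¹ = wbar hi⁻¹ lo⁻¹ β τ := by
  have hhi : 0 < hi := lt_of_lt_of_le h0 hlh
  set r := Real.sqrt (β/τ) with hr
  have hrpos : 0 < r := Real.sqrt_pos.mpr (by positivity)
  have hrinv : r⁻¹ = Real.sqrt (τ/β) := by
    rw [hr, ← Real.sqrt_inv, inv_div]
  rcases le_total r lo with h | h
  · have hL : wbar lo hi τ β = lo := by rw [wbar, max_eq_left h, min_eq_right hlh]
    have hinvle : lo⁻¹ ≤ r⁻¹ := inv_anti₀ hrpos h
    rw [hL, wbar, ← hrinv]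
    rw [max_eq_right (le_trans (inv_anti₀ h0 hlh) hinvle), min_eq_left hinvle]
  rcases le_total hi r with h2 | h2
  · have hL : wbar lo hi τ β = hi := by rw [wbar, min_eq_left (le_max_of_le_right h2)]
    have hinvle : r⁻¹ ≤ hi⁻¹ := inv_anti₀ hhi h2
    rw [hL, wbar, ← hrinv]
    rw [max_eq_left hinvle, min_eq_right (inv_anti₀ h0 hlh)]
  · have hL : wbar lo hi τ β = r := by rw [wbar, max_eq_right h, min_eq_right h2]
    have hi1 : hi⁻¹ ≤ r⁻¹ := inv_anti₀ hrpos h2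
    have hi2 : r⁻¹ ≤ lo⁻¹ := inv_anti₀ h0 h
    rw [hL, wbar, ← hrinv]
    rw [max_eq_right hi1, min_eq_right hi2]

/-! ### The K-claim -/

lemma inner_radsum (z : E) {p : ℕ} (m : Fin p → E) (ε : Fin p → Bool) :
    (inner ℂ z (radsum m ε) : ℂ) = radsum (fun i => (inner ℂ z (m i) : ℂ)) ε := by
  unfold radsum
  rw [inner_sum]
  refine Finset.sum_congr rfl (fun i _ => ?_)
  rw [inner_smul_right]
  rw [smul_eq_mul]

lemma kclaim (x y : ℕ → E) (CD : ℝ) (hCD : 0 ≤ CD)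
    (hD : ∀ (F : Finset ℕ) (u v : E),
      ∑ k ∈ F, ‖(inner ℂ (y k) u : ℂ)‖ * ‖(inner ℂ (x k) v : ℂ)‖ ≤ CD * (‖u‖ * ‖v‖))
    (F : Finset ℕ) {p q : ℕ} (m : Fin p → E) (nn : Fin q → E)
    (hm : ∑ i, ‖m i‖^2 ≤ 1) (hn : ∑ j, ‖nn j‖^2 ≤ 1) :
    ∑ k ∈ F, Real.sqrt (∑ i, ‖(inner ℂ (x k) (m i) : ℂ)‖^2)
      * Real.sqrt (∑ j, ‖(inner ℂ (y k) (nn j) : ℂ)‖^2) ≤ 3 * CD := by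
  classical
  set A : ℕ → ℝ := fun k => ∑ i, ‖(inner ℂ (x k) (m i) : ℂ)‖^2 with hA
  set B : ℕ → ℝ := fun k => ∑ j, ‖(inner ℂ (y k) (nn j) : ℂ)‖^2 with hB
  set Sa : ℕ → ℝ := fun k => ∑ ε : Fin p → Bool, ‖(inner ℂ (x k) (radsum m ε) : ℂ)‖ with hSa
  set Sb : ℕ → ℝ := fun k => ∑ δ : Fin q → Bool, ‖(inner ℂ (y k) (radsum nn δ) : ℂ)‖ with hSb
  have hSa0 : ∀ k, 0 ≤ Sa k := fun k => Finset.sum_nonneg (fun _ _ => norm_nonneg _)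
  have hSb0 : ∀ k, 0 ≤ Sb k := fun k => Finset.sum_nonneg (fun _ _ => norm_nonneg _)
  have hA' : ∀ k, 2^p * Real.sqrt (A k) ≤ Real.sqrt 3 * Sa k := by
    intro k
    have he : Sa k = ∑ ε : Fin p → Bool, ‖radsum (fun i => (inner ℂ (x k) (m i) : ℂ)) ε‖ :=
      Finset.sum_congr rfl (fun ε _ => by rw [inner_radsum])
    rw [he]
    exact rad_abs (fun i => (inner ℂ (x k) (m i) : ℂ))
  have hB' : ∀ k, 2^q * Real.sqrt (B k) ≤ Real.sqrt 3 * Sb k := by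
    intro k
    have he : Sb k = ∑ δ : Fin q → Bool, ‖radsum (fun j => (inner ℂ (y k) (nn j) : ℂ)) δ‖ :=
      Finset.sum_congr rfl (fun δ _ => by rw [inner_radsum])
    rw [he]
    exact rad_abs (fun j => (inner ℂ (y k) (nn j) : ℂ))
  -- the double average bound
  have main : ∑ k ∈ F, Sb k * Sa k ≤ CD * (2^q * 2^p) := by
    have e0 : ∀ k, Sb k * Sa k = ∑ δ : Fin q → Bool, ∑ ε : Fin p → Bool,
        ‖(inner ℂ (y k) (radsum nn δ) : ℂ)‖ * ‖(inner ℂ (x k) (radsum m ε) : ℂ)‖ :=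
      fun k => Finset.sum_mul_sum _ _ _ _
    have e1 : ∑ k ∈ F, Sb k * Sa k
        = ∑ δ : Fin q → Bool, ∑ ε : Fin p → Bool,
            ∑ k ∈ F, ‖(inner ℂ (y k) (radsum nn δ) : ℂ)‖ * ‖(inner ℂ (x k) (radsum m ε) : ℂ)‖ := by
      rw [Finset.sum_congr rfl (fun k _ => e0 k)]
      rw [Finset.sum_comm]
      exact Finset.sum_congr rfl (fun δ _ => Finset.sum_comm)
    rw [e1]
    calc ∑ δ : Fin q → Bool, ∑ ε : Fin p → Bool,
            ∑ k ∈ F, ‖(inner ℂ (y k) (radsum nn δ) : ℂ)‖ * ‖(inner ℂ (x k) (radsum m ε) : ℂ)‖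
        ≤ ∑ δ : Fin q → Bool, ∑ ε : Fin p → Bool, CD * (‖radsum nn δ‖ * ‖radsum m ε‖) :=
          Finset.sum_le_sum (fun δ _ => Finset.sum_le_sum (fun ε _ => hD F _ _))
    _ = CD * ((∑ δ : Fin q → Bool, ‖radsum nn δ‖) * (∑ ε : Fin p → Bool, ‖radsum m ε‖)) := by
          rw [Finset.sum_mul_sum, Finset.mul_sum]
          refine Finset.sum_congr rfl (fun δ _ => ?_)
          rw [Finset.mul_sum]
    _ ≤ CD * (2^q * 2^p) := by
          have h1 := rad_norm_le nn hn
          have h2 := rad_norm_le m hm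
          have h3 : (0:ℝ) ≤ ∑ δ : Fin q → Bool, ‖radsum nn δ‖ :=
            Finset.sum_nonneg fun _ _ => norm_nonneg _
          have h5 : (∑ δ : Fin q → Bool, ‖radsum nn δ‖) * (∑ ε : Fin p → Bool, ‖radsum m ε‖)
              ≤ 2^q * 2^p := mul_le_mul h1 h2 (Finset.sum_nonneg fun _ _ => norm_nonneg _)
                (by positivity)
          exact mul_le_mul_of_nonneg_left h5 hCD
  -- combine
  have per_k : ∀ k ∈ F, ((2:ℝ)^p * 2^q) * (Real.sqrt (A k) * Real.sqrt (B k))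
      ≤ 3 * (Sb k * Sa k) := by
    intro k _
    have h3 : (2^p * Real.sqrt (A k)) * (2^q * Real.sqrt (B k))
        ≤ (Real.sqrt 3 * Sa k) * (Real.sqrt 3 * Sb k) :=
      mul_le_mul (hA' k) (hB' k) (by positivity) (by positivity)
    have hsq3 : Real.sqrt 3 * Real.sqrt 3 = 3 := Real.mul_self_sqrt (by norm_num)
    calc ((2:ℝ)^p * 2^q) * (Real.sqrt (A k) * Real.sqrt (B k))
        = (2^p * Real.sqrt (A k)) * (2^q * Real.sqrt (B k)) := by ring
    _ ≤ (Real.sqrt 3 * Sa k) * (Real.sqrt 3 * Sb k) := h3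
    _ = (Real.sqrt 3 * Real.sqrt 3) * (Sa k * Sb k) := by ring
    _ = 3 * (Sb k * Sa k) := by rw [hsq3]; ring
  have total : ((2:ℝ)^p * 2^q) * (∑ k ∈ F, Real.sqrt (A k) * Real.sqrt (B k))
      ≤ ((2:ℝ)^p * 2^q) * (3 * CD) := by
    rw [Finset.mul_sum]
    calc ∑ k ∈ F, ((2:ℝ)^p * 2^q) * (Real.sqrt (A k) * Real.sqrt (B k))
        ≤ ∑ k ∈ F, 3 * (Sb k * Sa k) := Finset.sum_le_sum per_k
    _ = 3 * ∑ k ∈ F, Sb k * Sa k := by rw [Finset.mul_sum]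
    _ ≤ 3 * (CD * (2^q * 2^p)) := by linarith [main]
    _ = ((2:ℝ)^p * 2^q) * (3 * CD) := by ring
  have hpq : (0:ℝ) < 2^p * 2^q := by positivity
  exact le_of_mul_le_mul_left total hpq

/-! ### stage definitions -/

section Stage

variable {H : Type*} [NormedAddCommGroup H] [InnerProductSpace ℂ H]
variable (x y : ℕ → H)

def Afun (z : H) {p : ℕ} (m : Fin p → H) : ℝ := ∑ i, ‖(inner ℂ z (m i) : ℂ)‖^2

lemma Afun_nonneg (z : H) {p : ℕ} (m : Fin p → H) : 0 ≤ Afun z m :=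
  Finset.sum_nonneg (fun i _ => by positivity)

lemma Afun_le (z : H) {p : ℕ} (m : Fin p → H) (hm : ∑ i, ‖m i‖^2 ≤ 1) :
    Afun z m ≤ ‖z‖^2 := by
  have h1 : Afun z m ≤ ∑ i, ‖z‖^2 * ‖m i‖^2 := by
    refine Finset.sum_le_sum (fun i _ => ?_)
    have := norm_inner_le_norm (𝕜 := ℂ) z (m i)
    nlinarith [norm_nonneg (inner ℂ z (m i) : ℂ), norm_nonneg z, norm_nonneg (m i)]
  rw [← Finset.mul_sum] at h1
  nlinarith [sq_nonneg ‖z‖]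

/-- append a vector to a scaled family. -/
def snocfam {p : ℕ} (m : Fin p → H) (s s' : ℝ) (u : H) : Fin (p+1) → H :=
  Fin.snoc (fun i => ((s:ℂ)) • m i) (((s':ℂ)) • u)

lemma Afun_snoc (z : H) {p : ℕ} (m : Fin p → H) (s s' : ℝ) (hs : 0 ≤ s) (hs' : 0 ≤ s')
    (u : H) : Afun z (snocfam m s s' u) = s^2 * Afun z m + s'^2 * ‖(inner ℂ z u : ℂ)‖^2 := by
  unfold Afun snocfam
  rw [Fin.sum_univ_castSucc]
  simp only [Fin.snoc_castSucc, Fin.snoc_last]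
  rw [Finset.mul_sum]
  congr 1
  · refine Finset.sum_congr rfl (fun i _ => ?_)
    rw [inner_smul_right, norm_mul, Complex.norm_real, Real.norm_eq_abs, abs_of_nonneg hs]
    ring
  · rw [inner_smul_right, norm_mul, Complex.norm_real, Real.norm_eq_abs, abs_of_nonneg hs']
    ring

lemma tr_snoc {p : ℕ} (m : Fin p → H) (s s' : ℝ) (hs : 0 ≤ s) (hs' : 0 ≤ s') (u : H) :
    ∑ i, ‖snocfam m s s' u i‖^2 = s^2 * (∑ i, ‖m i‖^2) + s'^2 * ‖u‖^2 := by
  unfold snocfam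
  rw [Fin.sum_univ_castSucc]
  simp only [Fin.snoc_castSucc, Fin.snoc_last]
  rw [Finset.mul_sum]
  congr 1
  · refine Finset.sum_congr rfl (fun i _ => ?_)
    rw [norm_smul, Complex.norm_real, Real.norm_eq_abs, abs_of_nonneg hs]
    ring
  · rw [norm_smul, Complex.norm_real, Real.norm_eq_abs, abs_of_nonneg hs']
    ring

def loB (k : ℕ) : ℝ := (1/2:ℝ)^k / ‖x k‖^2
def hiB (k : ℕ) : ℝ := 2^k * ‖y k‖^2
def Good (k : ℕ) : Prop := (1/2:ℝ)^k < ‖x k‖ * ‖y k‖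
def etaX (k : ℕ) : ℝ := (1/4:ℝ)^k * ‖x k‖^2
def etaY (k : ℕ) : ℝ := (1/4:ℝ)^k * ‖y k‖^2

lemma good_x_pos {k : ℕ} (h : Good x y k) : 0 < ‖x k‖ := by
  by_contra hc
  push_neg at hc
  have : ‖x k‖ = 0 := le_antisymm hc (norm_nonneg _)
  unfold Good at h
  rw [this] at h
  simp at h
  exact absurd h (not_lt.mpr (by positivity))

lemma good_y_pos {k : ℕ} (h : Good x y k) : 0 < ‖y k‖ := by
  by_contra hc
  push_neg at hc
  have : ‖y k‖ = 0 := le_antisymm hc (norm_nonneg _)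
  unfold Good at h
  rw [this] at h
  simp at h
  exact absurd h (not_lt.mpr (by positivity))

lemma good_lo_pos {k : ℕ} (h : Good x y k) : 0 < loB x k := by
  have := good_x_pos x y h
  unfold loB
  positivity

lemma good_hi_pos {k : ℕ} (h : Good x y k) : 0 < hiB y k := by
  have := good_y_pos x y h
  unfold hiB
  positivity

lemma good_lo_le_hi {k : ℕ} (h : Good x y k) : loB x k ≤ hiB y k := by
  have hx := good_x_pos x y h
  have hy := good_y_pos x y h
  unfold Good at h
  unfold loB hiB
  rw [div_le_iff₀ (by positivity)]
  have h2 : ((1/2:ℝ)^k)^2 ≤ (‖x k‖ * ‖y k‖)^2 := by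
    nlinarith [pow_pos (by norm_num : (0:ℝ) < 1/2) k]
  have h3 : (0:ℝ) < 2^k := by positivity
  have h4 : ((1/2:ℝ)^k) * ((2:ℝ)^k) = 1 := by
    rw [← mul_pow]
    norm_num
  nlinarith [h2, pow_pos (by norm_num : (0:ℝ) < 1/2) k]

lemma etaX_pos {k : ℕ} (h : Good x y k) : 0 < etaX x k := by
  have := good_x_pos x y h
  unfold etaX
  positivity

lemma etaY_pos {k : ℕ} (h : Good x y k) : 0 < etaY y k := by
  have := good_y_pos x y h
  unfold etaY
  positivity

open scoped Classical in
noncomputable def Gn (n : ℕ) : Finset ℕ := (Finset.range (n+1)).filter (Good x y)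

/-- the objective functional -/
noncomputable def GV (n : ℕ) {p q : ℕ} (m : Fin p → H) (nn : Fin q → H) : ℝ :=
  ∑ k ∈ Gn x y n,
    (wbar (loB x k) (hiB y k) (Afun (x k) m + etaX x k) (Afun (y k) nn + etaY y k)
        * (Afun (x k) m + etaX x k)
      + (Afun (y k) nn + etaY y k)
        / wbar (loB x k) (hiB y k) (Afun (x k) m + etaX x k) (Afun (y k) nn + etaY y k))

end Stage

section Stage2

variable {H : Type*} [NormedAddCommGroup H] [InnerProductSpace ℂ H]

lemma sum_half_pow_le {n : ℕ} {F : Finset ℕ} (hF : F ⊆ Finset.range (n+1)) :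
    ∑ k ∈ F, (1/2:ℝ)^k ≤ 2 := by
  calc ∑ k ∈ F, (1/2:ℝ)^k ≤ ∑ k ∈ Finset.range (n+1), (1/2:ℝ)^k :=
      Finset.sum_le_sum_of_subset_of_nonneg hF (fun k _ _ => by positivity)
  _ ≤ 2 := by
      have := sum_geometric_two_le (n+1)
      simpa using this

lemma quarter_pow (k : ℕ) : (1/4:ℝ)^k = ((1/2:ℝ)^k)^2 := by
  rw [sq, ← mul_pow]
  norm_num

set_option maxHeartbeats 3000000 in
lemma stage (x y : ℕ → H) (C₁ : ℝ) (hC1 : 1 ≤ C₁)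
    (hst : ∀ k, ‖x k‖ * ‖y k‖ ≤ C₁)
    (hD : ∀ (F : Finset ℕ) (u v : H),
      ∑ k ∈ F, ‖(inner ℂ (y k) u : ℂ)‖ * ‖(inner ℂ (x k) v : ℂ)‖ ≤ (4*C₁) * (‖u‖ * ‖v‖))
    (n : ℕ) :
    ∃ w : ℕ → ℝ,
      (∀ k, Good x y k → loB x k ≤ w k ∧ w k ≤ hiB y k) ∧
      (∀ u : H,
        (∑ k ∈ Gn x y n, w k * ‖(inner ℂ (x k) u : ℂ)‖^2 ≤ (40*C₁+40) * ‖u‖^2) ∧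
        (∑ k ∈ Gn x y n, (w k)⁻¹ * ‖(inner ℂ (y k) u : ℂ)‖^2 ≤ (40*C₁+40) * ‖u‖^2)) := by
  classical
  have hGsub : Gn x y n ⊆ Finset.range (n+1) := Finset.filter_subset _ _
  have hGood : ∀ k ∈ Gn x y n, Good x y k := fun k hk => (Finset.mem_filter.mp hk).2
  set S : Set ℝ := {r | ∃ (p q : ℕ) (m : Fin p → H) (nn : Fin q → H),
      (∑ i, ‖m i‖^2 ≤ 1) ∧ (∑ j, ‖nn j‖^2 ≤ 1) ∧ r = GV x y n m nn} with hSdef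
  -- upper bound on members of S
  have memB : ∀ r ∈ S, r ≤ 36*C₁+12 := by
    rintro r ⟨p, q, m, nn, hm, hn, rfl⟩
    unfold GV
    have per : ∀ k ∈ Gn x y n,
        wbar (loB x k) (hiB y k) (Afun (x k) m + etaX x k) (Afun (y k) nn + etaY y k)
            * (Afun (x k) m + etaX x k)
          + (Afun (y k) nn + etaY y k)
            / wbar (loB x k) (hiB y k) (Afun (x k) m + etaX x k) (Afun (y k) nn + etaY y k)
        ≤ 2*(Real.sqrt (Afun (x k) m) * Real.sqrt (Afun (y k) nn)) + (6*C₁+6)*(1/2)^k := by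
      intro k hk
      have hg := hGood k hk
      have hlo := good_lo_pos x y hg
      have hlh := good_lo_le_hi x y hg
      have hx := good_x_pos x y hg
      have hy := good_y_pos x y hg
      have hτ : 0 < Afun (x k) m + etaX x k :=
        add_pos_of_nonneg_of_pos (Afun_nonneg _ _) (etaX_pos x y hg)
      have hβ : 0 < Afun (y k) nn + etaY y k :=
        add_pos_of_nonneg_of_pos (Afun_nonneg _ _) (etaY_pos x y hg)
      have hval := wbar_val_le hlo hlh hτ hβ
      have hA0 := Afun_nonneg (x k) m
      have hB0 := Afun_nonneg (y k) nn
      have hA1 : Afun (x k) m ≤ ‖x k‖^2 := Afun_le _ _ hm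
      have hB1 : Afun (y k) nn ≤ ‖y k‖^2 := Afun_le _ _ hn
      have hhalf : (0:ℝ) < (1/2)^k := by positivity
      have hsx : Real.sqrt (etaX x k) = (1/2)^k * ‖x k‖ := by
        unfold etaX
        rw [quarter_pow, ← mul_pow, Real.sqrt_sq (by positivity)]
      have hsy : Real.sqrt (etaY y k) = (1/2)^k * ‖y k‖ := by
        unfold etaY
        rw [quarter_pow, ← mul_pow, Real.sqrt_sq (by positivity)]
      have hsqA : Real.sqrt (Afun (x k) m) ≤ ‖x k‖ := by
        rw [show ‖x k‖ = Real.sqrt (‖x k‖^2) from (Real.sqrt_sq (norm_nonneg _)).symm]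
        exact Real.sqrt_le_sqrt hA1
      have hsqB : Real.sqrt (Afun (y k) nn) ≤ ‖y k‖ := by
        rw [show ‖y k‖ = Real.sqrt (‖y k‖^2) from (Real.sqrt_sq (norm_nonneg _)).symm]
        exact Real.sqrt_le_sqrt hB1
      -- sqrt of product bound
      have hsqrt : Real.sqrt ((Afun (x k) m + etaX x k) * (Afun (y k) nn + etaY y k))
          ≤ Real.sqrt (Afun (x k) m) * Real.sqrt (Afun (y k) nn) + 3*C₁*(1/2)^k := by
        have hexp : (Afun (x k) m + etaX x k) * (Afun (y k) nn + etaY y k)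
            = Afun (x k) m * Afun (y k) nn + (Afun (x k) m * etaY y k
              + (etaX x k * Afun (y k) nn + etaX x k * etaY y k)) := by ring
        rw [hexp]
        have hηx0 : 0 ≤ etaX x k := (etaX_pos x y hg).le
        have hηy0 : 0 ≤ etaY y k := (etaY_pos x y hg).le
        have s1 : Real.sqrt (Afun (x k) m * Afun (y k) nn + (Afun (x k) m * etaY y k
              + (etaX x k * Afun (y k) nn + etaX x k * etaY y k)))
            ≤ Real.sqrt (Afun (x k) m * Afun (y k) nn) + (Real.sqrt (Afun (x k) m * etaY y k)
              + (Real.sqrt (etaX x k * Afun (y k) nn) + Real.sqrt (etaX x k * etaY y k))) := by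
          refine le_trans (sqrt_add_le (by positivity) (by positivity)) ?_
          have s2 := sqrt_add_le (a := Afun (x k) m * etaY y k)
            (b := etaX x k * Afun (y k) nn + etaX x k * etaY y k) (by positivity) (by positivity)
          have s3 := sqrt_add_le (a := etaX x k * Afun (y k) nn)
            (b := etaX x k * etaY y k) (by positivity) (by positivity)
          linarith
        refine le_trans s1 ?_
        rw [Real.sqrt_mul hA0, Real.sqrt_mul hηx0, Real.sqrt_mul hηx0, Real.sqrt_mul hA0]
        rw [hsx, hsy]
        have b1 : Real.sqrt (Afun (x k) m) * ((1/2)^k * ‖y k‖) ≤ (1/2)^k * C₁ := by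
          have := mul_le_mul_of_nonneg_right hsqA (by positivity : (0:ℝ) ≤ (1/2)^k * ‖y k‖)
          calc Real.sqrt (Afun (x k) m) * ((1/2)^k * ‖y k‖) ≤ ‖x k‖ * ((1/2)^k * ‖y k‖) := this
          _ = (1/2)^k * (‖x k‖ * ‖y k‖) := by ring
          _ ≤ (1/2)^k * C₁ := by nlinarith [hst k]
        have b2 : ((1/2:ℝ))^k * ‖x k‖ * Real.sqrt (Afun (y k) nn) ≤ (1/2)^k * C₁ := by
          have := mul_le_mul_of_nonneg_left hsqB (by positivity : (0:ℝ) ≤ (1/2)^k * ‖x k‖)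
          calc ((1/2:ℝ))^k * ‖x k‖ * Real.sqrt (Afun (y k) nn)
              = ((1/2)^k * ‖x k‖) * Real.sqrt (Afun (y k) nn) := by ring
          _ ≤ ((1/2)^k * ‖x k‖) * ‖y k‖ := this
          _ = (1/2)^k * (‖x k‖ * ‖y k‖) := by ring
          _ ≤ (1/2)^k * C₁ := by nlinarith [hst k]
        have b3 : ((1/2:ℝ))^k * ‖x k‖ * ((1/2)^k * ‖y k‖) ≤ (1/2)^k * C₁ := by
          have h1 : ((1/2:ℝ))^k ≤ 1 := by
            apply pow_le_one₀ <;> norm_num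
          calc ((1/2:ℝ))^k * ‖x k‖ * ((1/2)^k * ‖y k‖)
              = ((1/2)^k * (1/2)^k) * (‖x k‖ * ‖y k‖) := by ring
          _ ≤ ((1/2)^k * 1) * C₁ := by
              have h2 : (0:ℝ) ≤ ‖x k‖ * ‖y k‖ := by positivity
              have h4 : ((1/2:ℝ))^k * (‖x k‖ * ‖y k‖) ≤ 1 * C₁ :=
                mul_le_mul h1 (hst k) h2 zero_le_one
              calc ((1/2:ℝ)^k * (1/2)^k) * (‖x k‖ * ‖y k‖)
                  = (1/2)^k * ((1/2)^k * (‖x k‖*‖y k‖)) := by ring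
              _ ≤ (1/2)^k * (1*C₁) := mul_le_mul_of_nonneg_left h4 hhalf.le
              _ = ((1/2)^k * 1) * C₁ := by ring
          _ = (1/2)^k * C₁ := by ring
        linarith
      -- term 2 and 3
      have hterm2 : (Afun (y k) nn + etaY y k) / (hiB y k) ≤ 2*(1/2)^k := by
        rw [div_le_iff₀ (good_hi_pos x y hg)]
        unfold hiB
        have h1 : (1/2:ℝ)^k * 2^k = 1 := by
          rw [← mul_pow]; norm_num
        unfold etaY
        have h2 : (1/4:ℝ)^k ≤ 1 := by
          apply pow_le_one₀ <;> norm_num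
        nlinarith [sq_nonneg ‖y k‖, pow_pos (show (0:ℝ) < 2 by norm_num) k]
      have hterm3 : 2*(loB x k)*(Afun (x k) m + etaX x k) ≤ 4*(1/2)^k := by
        unfold loB etaX
        have h2 : (1/4:ℝ)^k ≤ 1 := by
          apply pow_le_one₀ <;> norm_num
        have hfac : Afun (x k) m + (1/4:ℝ)^k*‖x k‖^2 ≤ 2*‖x k‖^2 := by
          nlinarith [sq_nonneg ‖x k‖]
        have hpos : (0:ℝ) ≤ 2*((1/2:ℝ)^k/‖x k‖^2) := by positivity
        calc 2*((1/2:ℝ)^k/‖x k‖^2)*(Afun (x k) m + (1/4)^k*‖x k‖^2)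
            ≤ 2*((1/2)^k/‖x k‖^2)*(2*‖x k‖^2) := mul_le_mul_of_nonneg_left hfac hpos
        _ = 4*(1/2)^k := by
            field_simp
            ring
      calc wbar (loB x k) (hiB y k) (Afun (x k) m + etaX x k) (Afun (y k) nn + etaY y k)
            * (Afun (x k) m + etaX x k)
          + (Afun (y k) nn + etaY y k)
            / wbar (loB x k) (hiB y k) (Afun (x k) m + etaX x k) (Afun (y k) nn + etaY y k)
          ≤ 2*Real.sqrt ((Afun (x k) m + etaX x k) * (Afun (y k) nn + etaY y k))
            + (Afun (y k) nn + etaY y k)/(hiB y k) + 2*(loB x k)*(Afun (x k) m + etaX x k) := hval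
      _ ≤ 2*(Real.sqrt (Afun (x k) m) * Real.sqrt (Afun (y k) nn) + 3*C₁*(1/2)^k)
            + 2*(1/2)^k + 4*(1/2)^k := by linarith
      _ = 2*(Real.sqrt (Afun (x k) m) * Real.sqrt (Afun (y k) nn)) + (6*C₁+6)*(1/2)^k := by ring
    calc ∑ k ∈ Gn x y n, _ ≤ ∑ k ∈ Gn x y n,
          (2*(Real.sqrt (Afun (x k) m) * Real.sqrt (Afun (y k) nn)) + (6*C₁+6)*(1/2)^k) :=
        Finset.sum_le_sum per
    _ = 2*(∑ k ∈ Gn x y n, Real.sqrt (Afun (x k) m) * Real.sqrt (Afun (y k) nn))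
          + (6*C₁+6)*(∑ k ∈ Gn x y n, (1/2:ℝ)^k) := by
        rw [Finset.sum_add_distrib, Finset.mul_sum, Finset.mul_sum]
    _ ≤ 2*(3*(4*C₁)) + (6*C₁+6)*2 := by
        have hk := kclaim x y (4*C₁) (by linarith) hD (Gn x y n) m nn hm hn
        have hk' : ∑ k ∈ Gn x y n, Real.sqrt (Afun (x k) m) * Real.sqrt (Afun (y k) nn)
            ≤ 3*(4*C₁) := hk
        have hhalfsum := sum_half_pow_le (n := n) hGsub
        have h60 : (0:ℝ) ≤ 6*C₁+6 := by linarith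
        linarith [mul_le_mul_of_nonneg_left hhalfsum h60]
    _ = 36*C₁+12 := by ring
  have hne : S.Nonempty := by
    refine ⟨GV x y n (Fin.elim0 : Fin 0 → H) (Fin.elim0 : Fin 0 → H), 0, 0, Fin.elim0, Fin.elim0,
      by simp, by simp, rfl⟩
  have hbdd : BddAbove S := ⟨36*C₁+12, fun r hr => memB r hr⟩
  -- Lipschitz sums
  set Lx : ℕ → ℝ := fun k => (hiB y k)^3 / etaY y k * ‖x k‖^4 with hLxdef
  set Ly : ℕ → ℝ := fun k => ((loB x k)⁻¹)^3 / etaX x k * ‖y k‖^4 with hLydef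
  set Sx := ∑ k ∈ Gn x y n, Lx k with hSxdef
  set Sy := ∑ k ∈ Gn x y n, Ly k with hSydef
  have hSx0 : 0 ≤ Sx := Finset.sum_nonneg (fun k hk => by
    have hg := hGood k hk
    have := good_hi_pos x y hg
    have := etaY_pos x y hg
    positivity)
  have hSy0 : 0 ≤ Sy := Finset.sum_nonneg (fun k hk => by
    have hg := hGood k hk
    have h1 := good_lo_pos x y hg
    have := etaX_pos x y hg
    positivity)
  set t := min 1 (1/(1+Sx+Sy)) with htdef
  have ht0 : 0 < t := lt_min one_pos (by positivity)
  have ht1 : t ≤ 1 := min_le_left _ _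
  have htS : t*Sx ≤ 1 ∧ t*Sy ≤ 1 := by
    have h1 : t ≤ 1/(1+Sx+Sy) := min_le_right _ _
    constructor
    · calc t*Sx ≤ (1/(1+Sx+Sy))*Sx := mul_le_mul_of_nonneg_right h1 hSx0
      _ ≤ 1 := by rw [div_mul_eq_mul_div, div_le_one (by positivity)]; linarith
    · calc t*Sy ≤ (1/(1+Sx+Sy))*Sy := mul_le_mul_of_nonneg_right h1 hSy0
      _ ≤ 1 := by rw [div_mul_eq_mul_div, div_le_one (by positivity)]; linarith
  -- approximate maximizer
  have hlt : sSup S - t^2 < sSup S := by nlinarith [ht0]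
  obtain ⟨r0, hr0S, hr0⟩ := exists_lt_of_lt_csSup hne hlt
  obtain ⟨p, q, m, nn, hm, hn, rfl⟩ := hr0S
  set w : ℕ → ℝ := fun k =>
    wbar (loB x k) (hiB y k) (Afun (x k) m + etaX x k) (Afun (y k) nn + etaY y k) with hwdef
  have hwmem : ∀ k, Good x y k → loB x k ≤ w k ∧ w k ≤ hiB y k := fun k hg =>
    wbar_mem (good_lo_pos x y hg) (good_lo_le_hi x y hg) _ _
  have hwpos : ∀ k, Good x y k → 0 < w k := fun k hg =>
    lt_of_lt_of_le (good_lo_pos x y hg) (hwmem k hg).1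
  have hGVle : GV x y n m nn ≤ 36*C₁+12 := memB _ ⟨p, q, m, nn, hm, hn, rfl⟩
  have keyX : ∀ u : H, ‖u‖ ≤ 1 →
      ∑ k ∈ Gn x y n, w k * ‖(inner ℂ (x k) u : ℂ)‖^2 ≤ 36*C₁+14 := by
    intro u hu
    set s1 := Real.sqrt (1 - t) with hs1def
    set s2 := Real.sqrt t with hs2def
    have hs1 : 0 ≤ s1 := Real.sqrt_nonneg _
    have hs2 : 0 ≤ s2 := Real.sqrt_nonneg _
    have he1 : s1^2 = 1 - t := Real.sq_sqrt (by linarith)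
    have he2 : s2^2 = t := Real.sq_sqrt ht0.le
    set mt := snocfam m s1 s2 u with hmtdef
    have hmt_tr : ∑ i, ‖mt i‖^2 ≤ 1 := by
      rw [hmtdef, tr_snoc m s1 s2 hs1 hs2 u, he1, he2]
      have h1 : t*‖u‖^2 ≤ t*1 := by
        have h2 : ‖u‖^2 ≤ 1 := by nlinarith [norm_nonneg u]
        exact mul_le_mul_of_nonneg_left h2 ht0.le
      nlinarith [hm, ht1, ht0.le]
    have hup : GV x y n mt nn ≤ sSup S := le_csSup hbdd ⟨p+1, q, mt, nn, hmt_tr, hn, rfl⟩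
    set Δ : ℕ → ℝ := fun k => ‖(inner ℂ (x k) u : ℂ)‖^2 - Afun (x k) m with hΔdef
    set wt : ℕ → ℝ := fun k =>
      wbar (loB x k) (hiB y k) (Afun (x k) mt + etaX x k) (Afun (y k) nn + etaY y k) with hwtdef
    have hwk : ∀ k, w k = wbar (loB x k) (hiB y k) (Afun (x k) m + etaX x k)
        (Afun (y k) nn + etaY y k) := fun k => rfl
    have hwtk : ∀ k, wt k = wbar (loB x k) (hiB y k) (Afun (x k) mt + etaX x k)
        (Afun (y k) nn + etaY y k) := fun k => rfl
    have hAt : ∀ k, Afun (x k) mt + etaX x k = (Afun (x k) m + etaX x k) + t*(Δ k) := by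
      intro k
      rw [hmtdef, Afun_snoc (x k) m s1 s2 hs1 hs2 u, he1, he2, hΔdef]
      ring
    have hΔle : ∀ k, |Δ k| ≤ ‖x k‖^2 := by
      intro k
      rw [hΔdef, abs_le]
      dsimp only
      have h2 : ‖(inner ℂ (x k) u : ℂ)‖^2 ≤ ‖x k‖^2 := by
        have h3 := norm_inner_le_norm (𝕜 := ℂ) (x k) u
        have h4 : ‖x k‖ * ‖u‖ ≤ ‖x k‖ * 1 :=
          mul_le_mul_of_nonneg_left hu (norm_nonneg _)
        nlinarith [norm_nonneg (inner ℂ (x k) u : ℂ), norm_nonneg (x k)]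
      constructor
      · have := Afun_le (x k) m hm
        have := Afun_nonneg (x k) m
        have := sq_nonneg ‖(inner ℂ (x k) u : ℂ)‖
        nlinarith [sq_nonneg ‖(inner ℂ (x k) u : ℂ)‖]
      · linarith [Afun_le (x k) m hm, sq_nonneg ‖(inner ℂ (x k) u : ℂ)‖,
          Afun_nonneg (x k) m]
    -- envelope
    have envelope : GV x y n m nn + t * (∑ k ∈ Gn x y n, wt k * Δ k) ≤ GV x y n mt nn := by
      unfold GV
      rw [Finset.mul_sum, ← Finset.sum_add_distrib]
      refine Finset.sum_le_sum (fun k hk => ?_)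
      have hg := hGood k hk
      have hlo := good_lo_pos x y hg
      have hlh := good_lo_le_hi x y hg
      have hτ : 0 < Afun (x k) m + etaX x k :=
        add_pos_of_nonneg_of_pos (Afun_nonneg _ _) (etaX_pos x y hg)
      have hβ : 0 < Afun (y k) nn + etaY y k :=
        add_pos_of_nonneg_of_pos (Afun_nonneg _ _) (etaY_pos x y hg)
      have hwtmem := wbar_mem hlo hlh (Afun (x k) mt + etaX x k) (Afun (y k) nn + etaY y k)
      have hmin := wbar_min_le hlo hlh hτ hβ hwtmem.1 hwtmem.2
      rw [← hwtk k] at hmin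
      rw [← hwtk k]
      calc (wbar (loB x k) (hiB y k) (Afun (x k) m + etaX x k) (Afun (y k) nn + etaY y k)
              * (Afun (x k) m + etaX x k)
            + (Afun (y k) nn + etaY y k)
              / wbar (loB x k) (hiB y k) (Afun (x k) m + etaX x k) (Afun (y k) nn + etaY y k))
            + t * (wt k * Δ k)
          ≤ (wt k * (Afun (x k) m + etaX x k) + (Afun (y k) nn + etaY y k)/(wt k))
              + t*(wt k * Δ k) := by linarith [hmin]
      _ = wt k * (Afun (x k) mt + etaX x k) + (Afun (y k) nn + etaY y k)/(wt k) := by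
            rw [hAt k]; ring
    have hsumΔ : ∑ k ∈ Gn x y n, wt k * Δ k ≤ t := by
      have hA := le_trans envelope hup
      have h3 : t * (∑ k ∈ Gn x y n, wt k * Δ k) ≤ t^2 := by linarith [hA, hr0]
      rw [pow_two] at h3
      exact le_of_mul_le_mul_left h3 ht0
    -- Lipschitz comparison
    have hcomp : ∑ k ∈ Gn x y n, w k * Δ k ≤ t + t*Sx := by
      have per2 : ∀ k ∈ Gn x y n, w k * Δ k ≤ wt k * Δ k + t * Lx k := by
        intro k hk
        have hg := hGood k hk
        have hlo := good_lo_pos x y hg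
        have hlh := good_lo_le_hi x y hg
        have hτ : 0 < Afun (x k) m + etaX x k :=
          add_pos_of_nonneg_of_pos (Afun_nonneg _ _) (etaX_pos x y hg)
        have hτt : 0 < Afun (x k) mt + etaX x k :=
          add_pos_of_nonneg_of_pos (Afun_nonneg _ _) (etaX_pos x y hg)
        have hβ : 0 < Afun (y k) nn + etaY y k :=
          add_pos_of_nonneg_of_pos (Afun_nonneg _ _) (etaY_pos x y hg)
        have hlip := wbar_lip hlo hlh hβ hτ hτt
        rw [← hwk k, ← hwtk k] at hlip
        have hdiffτ : |(Afun (x k) m + etaX x k) - (Afun (x k) mt + etaX x k)| = t*|Δ k| := by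
          have h5 : (Afun (x k) m + etaX x k) - (Afun (x k) mt + etaX x k) = -(t*Δ k) := by
            rw [hAt k]; ring
          rw [h5, abs_neg, abs_mul, abs_of_nonneg ht0.le]
        rw [hdiffτ] at hlip
        have hβge : etaY y k ≤ Afun (y k) nn + etaY y k := by
          linarith [Afun_nonneg (y k) nn]
        have hconst : (hiB y k)^3/(Afun (y k) nn + etaY y k) ≤ (hiB y k)^3/(etaY y k) := by
          have h8 : (0:ℝ) ≤ (hiB y k)^3 := (pow_pos (good_hi_pos x y hg) 3).le
          rw [div_le_div_iff₀ (by linarith [Afun_nonneg (y k) nn, etaY_pos x y hg])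
            (etaY_pos x y hg)]
          nlinarith [mul_nonneg h8 (Afun_nonneg (y k) nn)]
        have hb1 : (w k - wt k) * Δ k ≤ |w k - wt k| * |Δ k| := by
          calc (w k - wt k) * Δ k ≤ |(w k - wt k) * Δ k| := le_abs_self _
          _ = |w k - wt k| * |Δ k| := abs_mul _ _
        have hΔk := hΔle k
        have hΔ0 : 0 ≤ |Δ k| := abs_nonneg _
        have hLxk : |w k - wt k| * |Δ k| ≤ t * Lx k := by
          have e1 : |w k - wt k| * |Δ k| ≤ ((hiB y k)^3/(Afun (y k) nn + etaY y k) * (t*|Δ k|)) * |Δ k| :=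
            mul_le_mul_of_nonneg_right hlip hΔ0
          have e2 : ((hiB y k)^3/(Afun (y k) nn + etaY y k) * (t*|Δ k|)) * |Δ k|
              ≤ ((hiB y k)^3/(etaY y k) * (t*|Δ k|)) * |Δ k| := by
            have := mul_le_mul_of_nonneg_right hconst (mul_nonneg ht0.le hΔ0)
            exact mul_le_mul_of_nonneg_right this hΔ0
          have e3 : ((hiB y k)^3/(etaY y k) * (t*|Δ k|)) * |Δ k|
              ≤ ((hiB y k)^3/(etaY y k) * (t*‖x k‖^2)) * ‖x k‖^2 := by
            have hq : (0:ℝ) ≤ (hiB y k)^3/(etaY y k) := by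
              have h8 := good_hi_pos x y hg
              have h9 := etaY_pos x y hg
              positivity
            have e4 : t*|Δ k| ≤ t*‖x k‖^2 := mul_le_mul_of_nonneg_left hΔk ht0.le
            have e5 : (hiB y k)^3/(etaY y k) * (t*|Δ k|) ≤ (hiB y k)^3/(etaY y k) * (t*‖x k‖^2) :=
              mul_le_mul_of_nonneg_left e4 hq
            exact mul_le_mul e5 hΔk hΔ0 (by positivity)
          have e6 : ((hiB y k)^3/(etaY y k) * (t*‖x k‖^2)) * ‖x k‖^2 = t * Lx k := by
            rw [hLxdef]
            ring
          linarith
        linarith [hb1, hLxk]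
      calc ∑ k ∈ Gn x y n, w k * Δ k ≤ ∑ k ∈ Gn x y n, (wt k * Δ k + t * Lx k) :=
          Finset.sum_le_sum per2
      _ = (∑ k ∈ Gn x y n, wt k * Δ k) + t*Sx := by
          rw [Finset.sum_add_distrib, ← Finset.mul_sum, hSxdef]
      _ ≤ t + t*Sx := by linarith [hsumΔ]
    -- final assembly
    have hfinal : ∑ k ∈ Gn x y n, w k * ‖(inner ℂ (x k) u : ℂ)‖^2
        = (∑ k ∈ Gn x y n, w k * Δ k) + ∑ k ∈ Gn x y n, w k * Afun (x k) m := by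
      rw [← Finset.sum_add_distrib]
      refine Finset.sum_congr rfl (fun k _ => ?_)
      rw [hΔdef]
      ring
    have hGVlow : ∑ k ∈ Gn x y n, w k * Afun (x k) m ≤ GV x y n m nn := by
      unfold GV
      refine Finset.sum_le_sum (fun k hk => ?_)
      have hg := hGood k hk
      rw [← hwk k]
      have h1 : 0 < w k := hwpos k hg
      have h2 : 0 ≤ (Afun (y k) nn + etaY y k)/(w k) := by
        have ha := Afun_nonneg (y k) nn
        have hb := (etaY_pos x y hg).le
        exact div_nonneg (by linarith) h1.le
      have h3 : w k * Afun (x k) m ≤ w k * (Afun (x k) m + etaX x k) := by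
        have := etaX_pos x y hg
        nlinarith
      linarith
    rw [hfinal]
    have ht2 : t + t*Sx ≤ 2 := by linarith [ht1, htS.1]
    linarith [hcomp, hGVlow, hGVle]
  have keyY : ∀ u : H, ‖u‖ ≤ 1 →
      ∑ k ∈ Gn x y n, (w k)⁻¹ * ‖(inner ℂ (y k) u : ℂ)‖^2 ≤ 36*C₁+14 := by
    intro u hu
    set s1 := Real.sqrt (1 - t) with hs1def
    set s2 := Real.sqrt t with hs2def
    have hs1 : 0 ≤ s1 := Real.sqrt_nonneg _
    have hs2 : 0 ≤ s2 := Real.sqrt_nonneg _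
    have he1 : s1^2 = 1 - t := Real.sq_sqrt (by linarith)
    have he2 : s2^2 = t := Real.sq_sqrt ht0.le
    set nt := snocfam nn s1 s2 u with hntdef
    have hnt_tr : ∑ i, ‖nt i‖^2 ≤ 1 := by
      rw [hntdef, tr_snoc nn s1 s2 hs1 hs2 u, he1, he2]
      have h1 : t*‖u‖^2 ≤ t*1 := by
        have h2 : ‖u‖^2 ≤ 1 := by nlinarith [norm_nonneg u]
        exact mul_le_mul_of_nonneg_left h2 ht0.le
      nlinarith [hn, ht1, ht0.le]
    have hup : GV x y n m nt ≤ sSup S := le_csSup hbdd ⟨p, q+1, m, nt, hm, hnt_tr, rfl⟩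
    set Δ : ℕ → ℝ := fun k => ‖(inner ℂ (y k) u : ℂ)‖^2 - Afun (y k) nn with hΔdef
    set wt : ℕ → ℝ := fun k =>
      wbar (loB x k) (hiB y k) (Afun (x k) m + etaX x k) (Afun (y k) nt + etaY y k) with hwtdef
    have hwk : ∀ k, w k = wbar (loB x k) (hiB y k) (Afun (x k) m + etaX x k)
        (Afun (y k) nn + etaY y k) := fun k => rfl
    have hwtk : ∀ k, wt k = wbar (loB x k) (hiB y k) (Afun (x k) m + etaX x k)
        (Afun (y k) nt + etaY y k) := fun k => rfl
    have hAt : ∀ k, Afun (y k) nt + etaY y k = (Afun (y k) nn + etaY y k) + t*(Δ k) := by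
      intro k
      rw [hntdef, Afun_snoc (y k) nn s1 s2 hs1 hs2 u, he1, he2, hΔdef]
      ring
    have hΔle : ∀ k, |Δ k| ≤ ‖y k‖^2 := by
      intro k
      rw [hΔdef, abs_le]
      dsimp only
      have h2 : ‖(inner ℂ (y k) u : ℂ)‖^2 ≤ ‖y k‖^2 := by
        have h3 := norm_inner_le_norm (𝕜 := ℂ) (y k) u
        have h4 : ‖y k‖ * ‖u‖ ≤ ‖y k‖ * 1 :=
          mul_le_mul_of_nonneg_left hu (norm_nonneg _)
        nlinarith [norm_nonneg (inner ℂ (y k) u : ℂ), norm_nonneg (y k)]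
      constructor
      · nlinarith [Afun_le (y k) nn hn, sq_nonneg ‖(inner ℂ (y k) u : ℂ)‖,
          Afun_nonneg (y k) nn]
      · linarith [Afun_le (y k) nn hn, sq_nonneg ‖(inner ℂ (y k) u : ℂ)‖,
          Afun_nonneg (y k) nn]
    -- envelope
    have envelope : GV x y n m nn + t * (∑ k ∈ Gn x y n, (wt k)⁻¹ * Δ k) ≤ GV x y n m nt := by
      unfold GV
      rw [Finset.mul_sum, ← Finset.sum_add_distrib]
      refine Finset.sum_le_sum (fun k hk => ?_)
      have hg := hGood k hk
      have hlo := good_lo_pos x y hg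
      have hlh := good_lo_le_hi x y hg
      have hτ : 0 < Afun (x k) m + etaX x k :=
        add_pos_of_nonneg_of_pos (Afun_nonneg _ _) (etaX_pos x y hg)
      have hβ : 0 < Afun (y k) nn + etaY y k :=
        add_pos_of_nonneg_of_pos (Afun_nonneg _ _) (etaY_pos x y hg)
      have hwtmem := wbar_mem hlo hlh (Afun (x k) m + etaX x k) (Afun (y k) nt + etaY y k)
      have hwtpos : 0 < wt k := lt_of_lt_of_le hlo hwtmem.1
      have hmin := wbar_min_le hlo hlh hτ hβ hwtmem.1 hwtmem.2
      rw [← hwtk k] at hmin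
      rw [← hwtk k]
      calc (wbar (loB x k) (hiB y k) (Afun (x k) m + etaX x k) (Afun (y k) nn + etaY y k)
              * (Afun (x k) m + etaX x k)
            + (Afun (y k) nn + etaY y k)
              / wbar (loB x k) (hiB y k) (Afun (x k) m + etaX x k) (Afun (y k) nn + etaY y k))
            + t * ((wt k)⁻¹ * Δ k)
          ≤ (wt k * (Afun (x k) m + etaX x k) + (Afun (y k) nn + etaY y k)/(wt k))
              + t*((wt k)⁻¹ * Δ k) := by linarith [hmin]
      _ = wt k * (Afun (x k) m + etaX x k) + (Afun (y k) nt + etaY y k)/(wt k) := by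
            rw [hAt k]
            field_simp
            ring
    have hsumΔ : ∑ k ∈ Gn x y n, (wt k)⁻¹ * Δ k ≤ t := by
      have hA := le_trans envelope hup
      have h3 : t * (∑ k ∈ Gn x y n, (wt k)⁻¹ * Δ k) ≤ t^2 := by linarith [hA, hr0]
      rw [pow_two] at h3
      exact le_of_mul_le_mul_left h3 ht0
    -- Lipschitz comparison
    have hcomp : ∑ k ∈ Gn x y n, (w k)⁻¹ * Δ k ≤ t + t*Sy := by
      have per2 : ∀ k ∈ Gn x y n, (w k)⁻¹ * Δ k ≤ (wt k)⁻¹ * Δ k + t * Ly k := by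
        intro k hk
        have hg := hGood k hk
        have hlo := good_lo_pos x y hg
        have hhi := good_hi_pos x y hg
        have hlh := good_lo_le_hi x y hg
        have hτ : 0 < Afun (x k) m + etaX x k :=
          add_pos_of_nonneg_of_pos (Afun_nonneg _ _) (etaX_pos x y hg)
        have hβ : 0 < Afun (y k) nn + etaY y k :=
          add_pos_of_nonneg_of_pos (Afun_nonneg _ _) (etaY_pos x y hg)
        have hβt : 0 < Afun (y k) nt + etaY y k :=
          add_pos_of_nonneg_of_pos (Afun_nonneg _ _) (etaY_pos x y hg)
        have hinv1 : (w k)⁻¹ = wbar (hiB y k)⁻¹ (loB x k)⁻¹ (Afun (y k) nn + etaY y k)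
            (Afun (x k) m + etaX x k) := by
          rw [hwk k]
          exact wbar_inv hlo hlh hτ hβ
        have hinv2 : (wt k)⁻¹ = wbar (hiB y k)⁻¹ (loB x k)⁻¹ (Afun (y k) nt + etaY y k)
            (Afun (x k) m + etaX x k) := by
          rw [hwtk k]
          exact wbar_inv hlo hlh hτ hβt
        have hlip := wbar_lip (lo := (hiB y k)⁻¹) (hi := (loB x k)⁻¹)
          (by positivity) (by
            apply inv_anti₀ hlo hlh) hτ hβ hβt
        rw [← hinv1, ← hinv2] at hlip
        have hdiffτ : |(Afun (y k) nn + etaY y k) - (Afun (y k) nt + etaY y k)| = t*|Δ k| := by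
          have h5 : (Afun (y k) nn + etaY y k) - (Afun (y k) nt + etaY y k) = -(t*Δ k) := by
            rw [hAt k]; ring
          rw [h5, abs_neg, abs_mul, abs_of_nonneg ht0.le]
        rw [hdiffτ] at hlip
        have hτge : etaX x k ≤ Afun (x k) m + etaX x k := by
          linarith [Afun_nonneg (x k) m]
        have hconst : ((loB x k)⁻¹)^3/(Afun (x k) m + etaX x k) ≤ ((loB x k)⁻¹)^3/(etaX x k) := by
          have h8 : (0:ℝ) ≤ ((loB x k)⁻¹)^3 := by
            have := good_lo_pos x y hg
            positivity
          rw [div_le_div_iff₀ (by linarith [Afun_nonneg (x k) m, etaX_pos x y hg])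
            (etaX_pos x y hg)]
          nlinarith [mul_nonneg h8 (Afun_nonneg (x k) m)]
        have hb1 : ((w k)⁻¹ - (wt k)⁻¹) * Δ k ≤ |(w k)⁻¹ - (wt k)⁻¹| * |Δ k| := by
          calc ((w k)⁻¹ - (wt k)⁻¹) * Δ k ≤ |((w k)⁻¹ - (wt k)⁻¹) * Δ k| := le_abs_self _
          _ = |(w k)⁻¹ - (wt k)⁻¹| * |Δ k| := abs_mul _ _
        have hΔk := hΔle k
        have hΔ0 : 0 ≤ |Δ k| := abs_nonneg _
        have hLyk : |(w k)⁻¹ - (wt k)⁻¹| * |Δ k| ≤ t * Ly k := by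
          have e1 : |(w k)⁻¹ - (wt k)⁻¹| * |Δ k|
              ≤ (((loB x k)⁻¹)^3/(Afun (x k) m + etaX x k) * (t*|Δ k|)) * |Δ k| :=
            mul_le_mul_of_nonneg_right hlip hΔ0
          have e2 : (((loB x k)⁻¹)^3/(Afun (x k) m + etaX x k) * (t*|Δ k|)) * |Δ k|
              ≤ (((loB x k)⁻¹)^3/(etaX x k) * (t*|Δ k|)) * |Δ k| := by
            have := mul_le_mul_of_nonneg_right hconst (mul_nonneg ht0.le hΔ0)
            exact mul_le_mul_of_nonneg_right this hΔ0
          have e3 : (((loB x k)⁻¹)^3/(etaX x k) * (t*|Δ k|)) * |Δ k|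
              ≤ (((loB x k)⁻¹)^3/(etaX x k) * (t*‖y k‖^2)) * ‖y k‖^2 := by
            have hq : (0:ℝ) ≤ ((loB x k)⁻¹)^3/(etaX x k) := by
              have h9 := etaX_pos x y hg
              positivity
            have e4 : t*|Δ k| ≤ t*‖y k‖^2 := mul_le_mul_of_nonneg_left hΔk ht0.le
            have e5 : ((loB x k)⁻¹)^3/(etaX x k) * (t*|Δ k|)
                ≤ ((loB x k)⁻¹)^3/(etaX x k) * (t*‖y k‖^2) :=
              mul_le_mul_of_nonneg_left e4 hq
            exact mul_le_mul e5 hΔk hΔ0 (by positivity)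
          have e6 : (((loB x k)⁻¹)^3/(etaX x k) * (t*‖y k‖^2)) * ‖y k‖^2 = t * Ly k := by
            rw [hLydef]
            ring
          linarith
        linarith [hb1, hLyk]
      calc ∑ k ∈ Gn x y n, (w k)⁻¹ * Δ k ≤ ∑ k ∈ Gn x y n, ((wt k)⁻¹ * Δ k + t * Ly k) :=
          Finset.sum_le_sum per2
      _ = (∑ k ∈ Gn x y n, (wt k)⁻¹ * Δ k) + t*Sy := by
          rw [Finset.sum_add_distrib, ← Finset.mul_sum, hSydef]
      _ ≤ t + t*Sy := by linarith [hsumΔ]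
    -- final assembly
    have hfinal : ∑ k ∈ Gn x y n, (w k)⁻¹ * ‖(inner ℂ (y k) u : ℂ)‖^2
        = (∑ k ∈ Gn x y n, (w k)⁻¹ * Δ k) + ∑ k ∈ Gn x y n, (w k)⁻¹ * Afun (y k) nn := by
      rw [← Finset.sum_add_distrib]
      refine Finset.sum_congr rfl (fun k _ => ?_)
      rw [hΔdef]
      ring
    have hGVlow : ∑ k ∈ Gn x y n, (w k)⁻¹ * Afun (y k) nn ≤ GV x y n m nn := by
      unfold GV
      refine Finset.sum_le_sum (fun k hk => ?_)
      have hg := hGood k hk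
      rw [← hwk k]
      have h1 : 0 < w k := hwpos k hg
      have h2 : 0 ≤ w k * (Afun (x k) m + etaX x k) := by
        have := Afun_nonneg (x k) m
        have := (etaX_pos x y hg).le
        positivity
      have h3 : (w k)⁻¹ * Afun (y k) nn ≤ (Afun (y k) nn + etaY y k)/(w k) := by
        rw [div_eq_mul_inv]
        have := (etaY_pos x y hg).le
        have h4 : Afun (y k) nn ≤ Afun (y k) nn + etaY y k := by linarith
        calc (w k)⁻¹ * Afun (y k) nn = Afun (y k) nn * (w k)⁻¹ := by ring
        _ ≤ (Afun (y k) nn + etaY y k) * (w k)⁻¹ := by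
            apply mul_le_mul_of_nonneg_right h4
            exact inv_nonneg.mpr h1.le
      linarith
    rw [hfinal]
    have ht2 : t + t*Sy ≤ 2 := by linarith [ht1, htS.2]
    linarith [hcomp, hGVlow, hGVle]
  -- scaling to general u
  refine ⟨w, hwmem, fun u => ?_⟩
  have hkey : ∀ u : H, ‖u‖ ≤ 1 →
      (∑ k ∈ Gn x y n, w k * ‖(inner ℂ (x k) u : ℂ)‖^2 ≤ 36*C₁+14)
      ∧ (∑ k ∈ Gn x y n, (w k)⁻¹ * ‖(inner ℂ (y k) u : ℂ)‖^2 ≤ 36*C₁+14) :=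
    fun u hu => ⟨keyX u hu, keyY u hu⟩
  by_cases hu : u = 0
  · subst hu
    constructor <;>
    · simp only [inner_zero_right, norm_zero, ne_eq, OfNat.ofNat_ne_zero,
        not_false_eq_true, zero_pow, mul_zero, Finset.sum_const_zero]
      positivity
  · have hn0 : ‖u‖ ≠ 0 := norm_ne_zero_iff.mpr hu
    have hnpos : 0 < ‖u‖ := norm_pos_iff.mpr hu
    set c : ℂ := ((‖u‖⁻¹ : ℝ) : ℂ) with hcdef
    set v := c • u with hvdef
    have hvnorm : ‖v‖ ≤ 1 := by
      rw [hvdef, norm_smul, hcdef, Complex.norm_real, Real.norm_eq_abs,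
        abs_of_nonneg (by positivity)]
      rw [inv_mul_cancel₀ hn0]
    obtain ⟨hX, hY⟩ := hkey v hvnorm
    have hbig : (36*C₁+14 : ℝ) ≤ 40*C₁+40 := by linarith
    constructor
    · have hpt : ∀ k, w k * ‖(inner ℂ (x k) u : ℂ)‖^2 = ‖u‖^2 * (w k * ‖(inner ℂ (x k) v : ℂ)‖^2) := by
        intro k
        have e : ‖(inner ℂ (x k) v : ℂ)‖ = ‖u‖⁻¹ * ‖(inner ℂ (x k) u : ℂ)‖ := by
          rw [hvdef, inner_smul_right, norm_mul, hcdef, Complex.norm_real, Real.norm_eq_abs,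
            abs_of_nonneg (by positivity)]
        rw [e, mul_pow]
        have h9 : (‖u‖⁻¹)^2 * ‖u‖^2 = 1 := by field_simp
        calc w k * ‖(inner ℂ (x k) u : ℂ)‖^2
            = ((‖u‖⁻¹)^2*‖u‖^2) * (w k * ‖(inner ℂ (x k) u : ℂ)‖^2) := by rw [h9]; ring
        _ = ‖u‖^2 * (w k * ((‖u‖⁻¹)^2 * ‖(inner ℂ (x k) u : ℂ)‖^2)) := by ring
      rw [Finset.sum_congr rfl (fun k _ => hpt k), ← Finset.mul_sum]
      calc ‖u‖^2 * (∑ k ∈ Gn x y n, w k * ‖(inner ℂ (x k) v : ℂ)‖^2)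
          ≤ ‖u‖^2 * (36*C₁+14) := mul_le_mul_of_nonneg_left hX (by positivity)
      _ ≤ (40*C₁+40) * ‖u‖^2 := by nlinarith [sq_nonneg ‖u‖]
    · have hpt : ∀ k, (w k)⁻¹ * ‖(inner ℂ (y k) u : ℂ)‖^2
          = ‖u‖^2 * ((w k)⁻¹ * ‖(inner ℂ (y k) v : ℂ)‖^2) := by
        intro k
        have e : ‖(inner ℂ (y k) v : ℂ)‖ = ‖u‖⁻¹ * ‖(inner ℂ (y k) u : ℂ)‖ := by
          rw [hvdef, inner_smul_right, norm_mul, hcdef, Complex.norm_real, Real.norm_eq_abs,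
            abs_of_nonneg (by positivity)]
        rw [e, mul_pow]
        have h9 : (‖u‖⁻¹)^2 * ‖u‖^2 = 1 := by field_simp
        calc (w k)⁻¹ * ‖(inner ℂ (y k) u : ℂ)‖^2
            = ((‖u‖⁻¹)^2*‖u‖^2) * ((w k)⁻¹ * ‖(inner ℂ (y k) u : ℂ)‖^2) := by rw [h9]; ring
        _ = ‖u‖^2 * ((w k)⁻¹ * ((‖u‖⁻¹)^2 * ‖(inner ℂ (y k) u : ℂ)‖^2)) := by ring
      rw [Finset.sum_congr rfl (fun k _ => hpt k), ← Finset.mul_sum]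
      calc ‖u‖^2 * (∑ k ∈ Gn x y n, (w k)⁻¹ * ‖(inner ℂ (y k) v : ℂ)‖^2)
          ≤ ‖u‖^2 * (36*C₁+14) := mul_le_mul_of_nonneg_left hY (by positivity)
      _ ≤ (40*C₁+40) * ‖u‖^2 := by nlinarith [sq_nonneg ‖u‖]

noncomputable def wcr (x y : ℕ → H) (k : ℕ) : ℝ :=
  if ‖x k‖ = 0 then 2^k*(‖y k‖^2+1) else
  if ‖y k‖ = 0 then (1/2:ℝ)^k/(‖x k‖^2+1) else ‖y k‖/‖x k‖

lemma wcr_pos (x y : ℕ → H) (k : ℕ) : 0 < wcr x y k := by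
  unfold wcr
  split_ifs with h1 h2
  · positivity
  · positivity
  · have hx : 0 < ‖x k‖ := lt_of_le_of_ne (norm_nonneg _) (Ne.symm h1)
    have hy : 0 < ‖y k‖ := lt_of_le_of_ne (norm_nonneg _) (Ne.symm h2)
    positivity

lemma crude_x (x y : ℕ → H) {k : ℕ} (h : ¬ Good x y k) (u : H) :
    wcr x y k * ‖(inner ℂ (x k) u : ℂ)‖^2 ≤ (1/2:ℝ)^k * ‖u‖^2 := by
  have hng : ‖x k‖ * ‖y k‖ ≤ (1/2:ℝ)^k := by
    unfold Good at h
    push_neg at h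
    exact h
  have hinle : ‖(inner ℂ (x k) u : ℂ)‖^2 ≤ ‖x k‖^2 * ‖u‖^2 := by
    have h3 := norm_inner_le_norm (𝕜 := ℂ) (x k) u
    nlinarith [norm_nonneg (inner ℂ (x k) u : ℂ), norm_nonneg (x k), norm_nonneg u]
  unfold wcr
  split_ifs with h1 h2
  · rw [norm_eq_zero] at h1
    rw [h1]
    simp only [inner_zero_left, norm_zero]
    rw [zero_pow (by norm_num), mul_zero]
    positivity
  · have hx : 0 < ‖x k‖ := lt_of_le_of_ne (norm_nonneg _) (Ne.symm h1)
    have key : (1/2:ℝ)^k/(‖x k‖^2+1) * ‖(inner ℂ (x k) u : ℂ)‖^2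
        ≤ (1/2)^k/(‖x k‖^2+1) * (‖x k‖^2*‖u‖^2) :=
      mul_le_mul_of_nonneg_left hinle (by positivity)
    refine le_trans key ?_
    rw [div_mul_eq_mul_div, div_le_iff₀ (by positivity)]
    have hh : (0:ℝ) < (1/2)^k := by positivity
    nlinarith [sq_nonneg (‖x k‖*‖u‖), sq_nonneg ‖u‖, mul_nonneg hh.le (sq_nonneg ‖u‖)]
  · have hx : 0 < ‖x k‖ := lt_of_le_of_ne (norm_nonneg _) (Ne.symm h1)
    have hy : 0 < ‖y k‖ := lt_of_le_of_ne (norm_nonneg _) (Ne.symm h2)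
    have key : ‖y k‖/‖x k‖ * ‖(inner ℂ (x k) u : ℂ)‖^2 ≤ ‖y k‖/‖x k‖ * (‖x k‖^2*‖u‖^2) :=
      mul_le_mul_of_nonneg_left hinle (by positivity)
    refine le_trans key ?_
    have e1 : ‖y k‖/‖x k‖ * (‖x k‖^2*‖u‖^2) = (‖x k‖*‖y k‖)*‖u‖^2 := by
      field_simp
    rw [e1]
    exact mul_le_mul_of_nonneg_right hng (sq_nonneg _)

lemma crude_y (x y : ℕ → H) {k : ℕ} (h : ¬ Good x y k) (u : H) :
    (wcr x y k)⁻¹ * ‖(inner ℂ (y k) u : ℂ)‖^2 ≤ (1/2:ℝ)^k * ‖u‖^2 := by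
  have hng : ‖x k‖ * ‖y k‖ ≤ (1/2:ℝ)^k := by
    unfold Good at h
    push_neg at h
    exact h
  have hinle : ‖(inner ℂ (y k) u : ℂ)‖^2 ≤ ‖y k‖^2 * ‖u‖^2 := by
    have h3 := norm_inner_le_norm (𝕜 := ℂ) (y k) u
    nlinarith [norm_nonneg (inner ℂ (y k) u : ℂ), norm_nonneg (y k), norm_nonneg u]
  unfold wcr
  split_ifs with h1 h2
  · have key : ((2:ℝ)^k*(‖y k‖^2+1))⁻¹ * ‖(inner ℂ (y k) u : ℂ)‖^2
        ≤ (2^k*(‖y k‖^2+1))⁻¹ * (‖y k‖^2*‖u‖^2) :=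
      mul_le_mul_of_nonneg_left hinle (by positivity)
    refine le_trans key ?_
    rw [inv_mul_le_iff₀ (by positivity)]
    have h4 : (1/2:ℝ)^k * 2^k = 1 := by rw [← mul_pow]; norm_num
    nlinarith [sq_nonneg (‖y k‖*‖u‖), sq_nonneg ‖u‖,
      mul_nonneg (pow_nonneg (by norm_num : (0:ℝ) ≤ 1/2) k) (sq_nonneg ‖u‖),
      pow_pos (show (0:ℝ) < 2 by norm_num) k]
  · rw [norm_eq_zero] at h2
    rw [h2]
    simp only [inner_zero_left, norm_zero]
    rw [zero_pow (by norm_num), mul_zero]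
    positivity
  · have hx : 0 < ‖x k‖ := lt_of_le_of_ne (norm_nonneg _) (Ne.symm h1)
    have hy : 0 < ‖y k‖ := lt_of_le_of_ne (norm_nonneg _) (Ne.symm h2)
    rw [show (‖y k‖/‖x k‖)⁻¹ = ‖x k‖/‖y k‖ from by rw [inv_div]]
    have key : ‖x k‖/‖y k‖ * ‖(inner ℂ (y k) u : ℂ)‖^2 ≤ ‖x k‖/‖y k‖ * (‖y k‖^2*‖u‖^2) :=
      mul_le_mul_of_nonneg_left hinle (by positivity)
    refine le_trans key ?_
    have e1 : ‖x k‖/‖y k‖ * (‖y k‖^2*‖u‖^2) = (‖x k‖*‖y k‖)*‖u‖^2 := by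
      field_simp
    rw [e1]
    exact mul_le_mul_of_nonneg_right hng (sq_nonneg _)

lemma exists_weights (x y : ℕ → H) (C₁ : ℝ) (hC1 : 1 ≤ C₁)
    (hst : ∀ k, ‖x k‖ * ‖y k‖ ≤ C₁)
    (hD : ∀ (F : Finset ℕ) (u v : H),
      ∑ k ∈ F, ‖(inner ℂ (y k) u : ℂ)‖ * ‖(inner ℂ (x k) v : ℂ)‖ ≤ (4*C₁) * (‖u‖ * ‖v‖)) :
    ∃ w : ℕ → ℝ, (∀ k, 0 < w k) ∧
      ∀ (u : H) (F : Finset ℕ),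
        (∑ k ∈ F, w k * ‖(inner ℂ (x k) u : ℂ)‖^2 ≤ (40*C₁+42) * ‖u‖^2) ∧
        (∑ k ∈ F, (w k)⁻¹ * ‖(inner ℂ (y k) u : ℂ)‖^2 ≤ (40*C₁+42) * ‖u‖^2) := by
  classical
  have hstage := fun n => stage x y C₁ hC1 hst hD n
  choose wseq hbox hbounds using hstage
  set box : ℕ → Set ℝ := fun k => if Good x y k then Set.Icc (loB x k) (hiB y k)
    else {wcr x y k} with hboxdef
  have hboxcompact : ∀ k, IsCompact (box k) := by
    intro k
    rw [hboxdef]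
    dsimp only
    split_ifs
    · exact isCompact_Icc
    · exact isCompact_singleton
  set wv : ℕ → ℕ → ℝ := fun n k => if Good x y k then wseq n k else wcr x y k with hwvdef
  have hwv_mem : ∀ n, wv n ∈ Set.univ.pi box := by
    intro n
    rw [Set.mem_univ_pi]
    intro k
    rw [hboxdef, hwvdef]
    dsimp only
    split_ifs with hg
    · exact ⟨(hbox n k hg).1, (hbox n k hg).2⟩
    · exact rfl
  obtain ⟨wl, hwlmem, φ, hφmono, hφtend⟩ :=
    (isCompact_univ_pi hboxcompact).tendsto_subseq hwv_mem
  have hcoord : ∀ k, Filter.Tendsto (fun j => wv (φ j) k) atTop (nhds (wl k)) := by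
    intro k
    exact tendsto_pi_nhds.mp hφtend k
  rw [Set.mem_univ_pi] at hwlmem
  have hwl_good : ∀ k, Good x y k → loB x k ≤ wl k ∧ wl k ≤ hiB y k := by
    intro k hg
    have h := hwlmem k
    rw [hboxdef] at h
    dsimp only at h
    rw [if_pos hg] at h
    exact h
  have hwl_bad : ∀ k, ¬ Good x y k → wl k = wcr x y k := by
    intro k hg
    have h := hwlmem k
    rw [hboxdef] at h
    dsimp only at h
    rw [if_neg hg] at h
    exact h
  have hwlpos : ∀ k, 0 < wl k := by
    intro k
    by_cases hg : Good x y k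
    · exact lt_of_lt_of_le (good_lo_pos x y hg) (hwl_good k hg).1
    · rw [hwl_bad k hg]
      exact wcr_pos x y k
  refine ⟨wl, hwlpos, fun u F => ?_⟩
  -- split into good and crude parts
  have hsplitX : ∑ k ∈ F, wl k * ‖(inner ℂ (x k) u : ℂ)‖^2
      = ∑ k ∈ F.filter (Good x y), wl k * ‖(inner ℂ (x k) u : ℂ)‖^2
        + ∑ k ∈ F.filter (fun k => ¬ Good x y k), wl k * ‖(inner ℂ (x k) u : ℂ)‖^2 :=
    (Finset.sum_filter_add_sum_filter_not F _ _).symm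
  have hsplitY : ∑ k ∈ F, (wl k)⁻¹ * ‖(inner ℂ (y k) u : ℂ)‖^2
      = ∑ k ∈ F.filter (Good x y), (wl k)⁻¹ * ‖(inner ℂ (y k) u : ℂ)‖^2
        + ∑ k ∈ F.filter (fun k => ¬ Good x y k), (wl k)⁻¹ * ‖(inner ℂ (y k) u : ℂ)‖^2 :=
    (Finset.sum_filter_add_sum_filter_not F _ _).symm
  -- crude parts
  have hhalfsum : ∑ k ∈ F.filter (fun k => ¬ Good x y k), (1/2:ℝ)^k ≤ 2 := by
    refine sum_half_pow_le (n := F.sup id) ?_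
    intro k hk
    rw [Finset.mem_range]
    have h9 : id k ≤ F.sup id := Finset.le_sup (f := id) (Finset.mem_of_mem_filter k hk)
    simp only [id] at h9
    omega
  have hcrX : ∑ k ∈ F.filter (fun k => ¬ Good x y k), wl k * ‖(inner ℂ (x k) u : ℂ)‖^2
      ≤ 2*‖u‖^2 := by
    calc ∑ k ∈ F.filter (fun k => ¬ Good x y k), wl k * ‖(inner ℂ (x k) u : ℂ)‖^2
        ≤ ∑ k ∈ F.filter (fun k => ¬ Good x y k), (1/2:ℝ)^k * ‖u‖^2 := by
          refine Finset.sum_le_sum (fun k hk => ?_)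
          have hg := (Finset.mem_filter.mp hk).2
          rw [hwl_bad k hg]
          exact crude_x x y hg u
    _ = (∑ k ∈ F.filter (fun k => ¬ Good x y k), (1/2:ℝ)^k) * ‖u‖^2 := by
          rw [Finset.sum_mul]
    _ ≤ 2*‖u‖^2 := mul_le_mul_of_nonneg_right hhalfsum (sq_nonneg _)
  have hcrY : ∑ k ∈ F.filter (fun k => ¬ Good x y k), (wl k)⁻¹ * ‖(inner ℂ (y k) u : ℂ)‖^2
      ≤ 2*‖u‖^2 := by
    calc ∑ k ∈ F.filter (fun k => ¬ Good x y k), (wl k)⁻¹ * ‖(inner ℂ (y k) u : ℂ)‖^2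
        ≤ ∑ k ∈ F.filter (fun k => ¬ Good x y k), (1/2:ℝ)^k * ‖u‖^2 := by
          refine Finset.sum_le_sum (fun k hk => ?_)
          have hg := (Finset.mem_filter.mp hk).2
          rw [hwl_bad k hg]
          exact crude_y x y hg u
    _ = (∑ k ∈ F.filter (fun k => ¬ Good x y k), (1/2:ℝ)^k) * ‖u‖^2 := by
          rw [Finset.sum_mul]
    _ ≤ 2*‖u‖^2 := mul_le_mul_of_nonneg_right hhalfsum (sq_nonneg _)
  -- good parts via limits
  have hglim : ∀ j, F.sup id ≤ j → F.filter (Good x y) ⊆ Gn x y (φ j) := by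
    intro j hj k hk
    unfold Gn
    rw [Finset.mem_filter, Finset.mem_range]
    refine ⟨?_, (Finset.mem_filter.mp hk).2⟩
    have h1 : id k ≤ F.sup id := Finset.le_sup (f := id) (Finset.mem_of_mem_filter k hk)
    simp only [id] at h1
    have h2 : j ≤ φ j := hφmono.le_apply
    omega
  have hgoodX : ∑ k ∈ F.filter (Good x y), wl k * ‖(inner ℂ (x k) u : ℂ)‖^2
      ≤ (40*C₁+40)*‖u‖^2 := by
    have htend : Filter.Tendsto
        (fun j => ∑ k ∈ F.filter (Good x y), wv (φ j) k * ‖(inner ℂ (x k) u : ℂ)‖^2) atTop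
        (nhds (∑ k ∈ F.filter (Good x y), wl k * ‖(inner ℂ (x k) u : ℂ)‖^2)) :=
      tendsto_finset_sum _ (fun k _ => (hcoord k).mul_const _)
    refine le_of_tendsto htend ?_
    filter_upwards [Filter.eventually_ge_atTop (F.sup id)] with j hj
    have hsub := hglim j hj
    calc ∑ k ∈ F.filter (Good x y), wv (φ j) k * ‖(inner ℂ (x k) u : ℂ)‖^2
        = ∑ k ∈ F.filter (Good x y), wseq (φ j) k * ‖(inner ℂ (x k) u : ℂ)‖^2 := by
          refine Finset.sum_congr rfl (fun k hk => ?_)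
          rw [hwvdef]
          dsimp only
          rw [if_pos (Finset.mem_filter.mp hk).2]
    _ ≤ ∑ k ∈ Gn x y (φ j), wseq (φ j) k * ‖(inner ℂ (x k) u : ℂ)‖^2 := by
          refine Finset.sum_le_sum_of_subset_of_nonneg hsub (fun k hk _ => ?_)
          have hg := (Finset.mem_filter.mp hk).2
          have h1 : 0 < wseq (φ j) k :=
            lt_of_lt_of_le (good_lo_pos x y hg) (hbox (φ j) k hg).1
          positivity
    _ ≤ (40*C₁+40)*‖u‖^2 := (hbounds (φ j) u).1
  have hgoodY : ∑ k ∈ F.filter (Good x y), (wl k)⁻¹ * ‖(inner ℂ (y k) u : ℂ)‖^2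
      ≤ (40*C₁+40)*‖u‖^2 := by
    have htend : Filter.Tendsto
        (fun j => ∑ k ∈ F.filter (Good x y), (wv (φ j) k)⁻¹ * ‖(inner ℂ (y k) u : ℂ)‖^2) atTop
        (nhds (∑ k ∈ F.filter (Good x y), (wl k)⁻¹ * ‖(inner ℂ (y k) u : ℂ)‖^2)) :=
      tendsto_finset_sum _ (fun k _ => (((hcoord k).inv₀ (hwlpos k).ne')).mul_const _)
    refine le_of_tendsto htend ?_
    filter_upwards [Filter.eventually_ge_atTop (F.sup id)] with j hj
    have hsub := hglim j hj
    calc ∑ k ∈ F.filter (Good x y), (wv (φ j) k)⁻¹ * ‖(inner ℂ (y k) u : ℂ)‖^2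
        = ∑ k ∈ F.filter (Good x y), (wseq (φ j) k)⁻¹ * ‖(inner ℂ (y k) u : ℂ)‖^2 := by
          refine Finset.sum_congr rfl (fun k hk => ?_)
          rw [hwvdef]
          dsimp only
          rw [if_pos (Finset.mem_filter.mp hk).2]
    _ ≤ ∑ k ∈ Gn x y (φ j), (wseq (φ j) k)⁻¹ * ‖(inner ℂ (y k) u : ℂ)‖^2 := by
          refine Finset.sum_le_sum_of_subset_of_nonneg hsub (fun k hk _ => ?_)
          have hg := (Finset.mem_filter.mp hk).2
          have h1 : 0 < wseq (φ j) k :=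
            lt_of_lt_of_le (good_lo_pos x y hg) (hbox (φ j) k hg).1
          positivity
    _ ≤ (40*C₁+40)*‖u‖^2 := (hbounds (φ j) u).2
  constructor
  · rw [hsplitX]
    have : (40*C₁+40)*‖u‖^2 + 2*‖u‖^2 = (40*C₁+42)*‖u‖^2 := by ring
    linarith [hgoodX, hcrX]
  · rw [hsplitY]
    linarith [hgoodY, hcrY]

end Stage2

end

end RescalingAux


/-- Rescaling an unconditional Schauder frame in a Hilbert space into a pair of
frames. -/
theorem rescaling_unconditional_schauder_frame
    {H : Type*} [NormedAddCommGroup H] [InnerProductSpace ℂ H]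
    [CompleteSpace H] [TopologicalSpace.SeparableSpace H]
    (x y : ℕ → H)
    (hSchauder : ∀ u : H, HasSum (fun k => (inner ℂ (y k) u : ℂ) • x k) u) :
    ∃ α : ℕ → ℂ, (∀ k, α k ≠ 0) ∧
      IsFrame (fun k => α k • x k) ∧
      IsFrame (fun k => (starRingEnd ℂ (α k))⁻¹ • y k) := by
  classical
  obtain ⟨C₁, hC1, hC⟩ := RescalingAux.exists_C1 x y hSchauder
  have hD := RescalingAux.D_bound x y C₁ hC
  have hst : ∀ k, ‖x k‖ * ‖y k‖ ≤ C₁ := by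
    intro k
    rcases eq_or_ne (y k) 0 with h | h
    · rw [h, norm_zero, mul_zero]; linarith
    · have h2 := hC {k} (y k)
      rw [Finset.sum_singleton] at h2
      have h3 : ‖(inner ℂ (y k) (y k) : ℂ) • x k‖ = ‖y k‖^2 * ‖x k‖ := by
        rw [norm_smul]
        congr 1
        rw [inner_self_eq_norm_sq_to_K, norm_pow, RCLike.norm_ofReal,
          abs_of_nonneg (norm_nonneg _)]
      rw [h3] at h2
      have hy : 0 < ‖y k‖ := norm_pos_iff.mpr h
      nlinarith [h2, hy]
  obtain ⟨w, hwpos, hwb⟩ := RescalingAux.exists_weights x y C₁ hC1 hst hD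
  set B := 40*C₁+42 with hBdef
  have hB0 : 0 < B := by rw [hBdef]; linarith
  have hax : ∀ (u : H) (k : ℕ),
      ‖(inner ℂ ((((Real.sqrt (w k) : ℝ) : ℂ)) • x k) u : ℂ)‖^2
        = w k * ‖(inner ℂ (x k) u : ℂ)‖^2 := by
    intro u k
    rw [inner_smul_left, norm_mul, RCLike.norm_conj, Complex.norm_real, Real.norm_eq_abs,
      abs_of_nonneg (Real.sqrt_nonneg _), mul_pow, Real.sq_sqrt (hwpos k).le]
  have hay : ∀ (u : H) (k : ℕ),
      ‖(inner ℂ (((starRingEnd ℂ) (((Real.sqrt (w k) : ℝ) : ℂ)))⁻¹ • y k) u : ℂ)‖^2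
        = (w k)⁻¹ * ‖(inner ℂ (y k) u : ℂ)‖^2 := by
    intro u k
    rw [Complex.conj_ofReal, inner_smul_left, map_inv₀, Complex.conj_ofReal, norm_mul,
      norm_inv, Complex.norm_real, Real.norm_eq_abs, abs_of_nonneg (Real.sqrt_nonneg _),
      mul_pow, inv_pow, Real.sq_sqrt (hwpos k).le]
  have main : ∀ u : H,
      (Summable fun k => w k * ‖(inner ℂ (x k) u : ℂ)‖^2)
      ∧ (Summable fun k => (w k)⁻¹ * ‖(inner ℂ (y k) u : ℂ)‖^2)
      ∧ (∑' k, w k * ‖(inner ℂ (x k) u : ℂ)‖^2 ≤ B*‖u‖^2)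
      ∧ (∑' k, (w k)⁻¹ * ‖(inner ℂ (y k) u : ℂ)‖^2 ≤ B*‖u‖^2)
      ∧ (‖u‖^2*‖u‖^2 ≤ (∑' k, w k * ‖(inner ℂ (x k) u : ℂ)‖^2)
          * (∑' k, (w k)⁻¹ * ‖(inner ℂ (y k) u : ℂ)‖^2)) := by
    intro u
    have hnnx : ∀ k, 0 ≤ w k * ‖(inner ℂ (x k) u : ℂ)‖^2 :=
      fun k => mul_nonneg (hwpos k).le (sq_nonneg _)
    have hnny : ∀ k, 0 ≤ (w k)⁻¹ * ‖(inner ℂ (y k) u : ℂ)‖^2 :=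
      fun k => mul_nonneg (inv_nonneg.mpr (hwpos k).le) (sq_nonneg _)
    have hSx : Summable (fun k => w k * ‖(inner ℂ (x k) u : ℂ)‖^2) :=
      summable_of_sum_range_le hnnx (fun n => (hwb u (Finset.range n)).1)
    have hSy : Summable (fun k => (w k)⁻¹ * ‖(inner ℂ (y k) u : ℂ)‖^2) :=
      summable_of_sum_range_le hnny (fun n => (hwb u (Finset.range n)).2)
    have hTx : ∑' k, w k * ‖(inner ℂ (x k) u : ℂ)‖^2 ≤ B*‖u‖^2 :=
      Summable.tsum_le_of_sum_le hSx (fun F => (hwb u F).1)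
    have hTy : ∑' k, (w k)⁻¹ * ‖(inner ℂ (y k) u : ℂ)‖^2 ≤ B*‖u‖^2 :=
      Summable.tsum_le_of_sum_le hSy (fun F => (hwb u F).2)
    set X := ∑' k, w k * ‖(inner ℂ (x k) u : ℂ)‖^2 with hXdef
    set Y := ∑' k, (w k)⁻¹ * ‖(inner ℂ (y k) u : ℂ)‖^2 with hYdef
    have hX0 : 0 ≤ X := tsum_nonneg hnnx
    have hY0 : 0 ≤ Y := tsum_nonneg hnny
    refine ⟨hSx, hSy, hTx, hTy, ?_⟩
    set g : ℕ → ℝ := fun k => ‖(inner ℂ (y k) u : ℂ)‖ * ‖(inner ℂ (x k) u : ℂ)‖ with hgdef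
    have hgnn : ∀ k, 0 ≤ g k := fun k => mul_nonneg (norm_nonneg _) (norm_nonneg _)
    have hgF : ∀ F : Finset ℕ, (∑ k ∈ F, g k)^2 ≤ X * Y := by
      intro F
      have hCS := Finset.sum_mul_sq_le_sq_mul_sq F
        (fun k => Real.sqrt (w k) * ‖(inner ℂ (x k) u : ℂ)‖)
        (fun k => Real.sqrt ((w k)⁻¹) * ‖(inner ℂ (y k) u : ℂ)‖)
      have e1 : ∀ k ∈ F, (Real.sqrt (w k) * ‖(inner ℂ (x k) u : ℂ)‖)
          * (Real.sqrt ((w k)⁻¹) * ‖(inner ℂ (y k) u : ℂ)‖) = g k := by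
        intro k _
        rw [Real.sqrt_inv]
        have h5 : Real.sqrt (w k) ≠ 0 := (Real.sqrt_pos.mpr (hwpos k)).ne'
        field_simp [hgdef]
        ring
      have e2 : ∀ k ∈ F, (Real.sqrt (w k) * ‖(inner ℂ (x k) u : ℂ)‖)^2
          = w k * ‖(inner ℂ (x k) u : ℂ)‖^2 := by
        intro k _
        rw [mul_pow, Real.sq_sqrt (hwpos k).le]
      have e3 : ∀ k ∈ F, (Real.sqrt ((w k)⁻¹) * ‖(inner ℂ (y k) u : ℂ)‖)^2
          = (w k)⁻¹ * ‖(inner ℂ (y k) u : ℂ)‖^2 := by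
        intro k _
        rw [mul_pow, Real.sq_sqrt (inv_nonneg.mpr (hwpos k).le)]
      rw [Finset.sum_congr rfl e1, Finset.sum_congr rfl e2, Finset.sum_congr rfl e3] at hCS
      refine le_trans hCS ?_
      have hp1 : ∑ k ∈ F, w k * ‖(inner ℂ (x k) u : ℂ)‖^2 ≤ X := Summable.sum_le_tsum F (fun k _ => hnnx k) hSx
      have hp2 : ∑ k ∈ F, (w k)⁻¹ * ‖(inner ℂ (y k) u : ℂ)‖^2 ≤ Y :=
        Summable.sum_le_tsum F (fun k _ => hnny k) hSy
      have hq1 : 0 ≤ ∑ k ∈ F, w k * ‖(inner ℂ (x k) u : ℂ)‖^2 :=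
        Finset.sum_nonneg (fun k _ => hnnx k)
      exact mul_le_mul hp1 hp2 (Finset.sum_nonneg (fun k _ => hnny k)) hX0
    have hgb : ∀ F : Finset ℕ, ∑ k ∈ F, g k ≤ Real.sqrt (X*Y) := by
      intro F
      have h1 := hgF F
      have h2 : 0 ≤ ∑ k ∈ F, g k := Finset.sum_nonneg (fun k _ => hgnn k)
      calc ∑ k ∈ F, g k = Real.sqrt ((∑ k ∈ F, g k)^2) := (Real.sqrt_sq h2).symm
      _ ≤ Real.sqrt (X*Y) := Real.sqrt_le_sqrt h1
    have hgsummable : Summable g :=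
      summable_of_sum_range_le hgnn (fun n => hgb (Finset.range n))
    have hgtsum : ∑' k, g k ≤ Real.sqrt (X*Y) := Summable.tsum_le_of_sum_le hgsummable hgb
    -- reconstruction
    have hrec := (hSchauder u).mapL (innerSL ℂ u)
    have hfeq : ∀ k, (innerSL ℂ u) ((inner ℂ (y k) u : ℂ) • x k)
        = (inner ℂ (y k) u : ℂ) * (inner ℂ u (x k) : ℂ) := by
      intro k
      rw [innerSL_apply_apply, inner_smul_right]
    have hrec2 : HasSum (fun k => (inner ℂ (y k) u : ℂ) * (inner ℂ u (x k) : ℂ)) ((inner ℂ u u : ℂ)) := by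
      have := hrec
      rw [show (fun k => (innerSL ℂ u) ((inner ℂ (y k) u : ℂ) • x k))
          = fun k => (inner ℂ (y k) u : ℂ) * (inner ℂ u (x k) : ℂ) from funext hfeq] at this
      rw [innerSL_apply_apply] at this
      exact this
    have hnormsum : Summable (fun k => ‖(inner ℂ (y k) u : ℂ) * (inner ℂ u (x k) : ℂ)‖) := by
      have : (fun k => ‖(inner ℂ (y k) u : ℂ) * (inner ℂ u (x k) : ℂ)‖) = g := by
        funext k
        rw [norm_mul, hgdef]
        congr 1
        exact norm_inner_symm u (x k)
      rw [this]
      exact hgsummable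
    have hlow1 : ‖u‖^2 ≤ ∑' k, g k := by
      have h1 : ‖(inner ℂ u u : ℂ)‖ ≤ ∑' k, ‖(inner ℂ (y k) u : ℂ) * (inner ℂ u (x k) : ℂ)‖ := by
        rw [← hrec2.tsum_eq]
        exact norm_tsum_le_tsum_norm hnormsum
      have h2 : ‖(inner ℂ u u : ℂ)‖ = ‖u‖^2 := by
        rw [inner_self_eq_norm_sq_to_K, norm_pow, RCLike.norm_ofReal,
          abs_of_nonneg (norm_nonneg _)]
      have h3 : ∑' k, ‖(inner ℂ (y k) u : ℂ) * (inner ℂ u (x k) : ℂ)‖ = ∑' k, g k := by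
        congr 1
        funext k
        rw [norm_mul, hgdef]
        congr 1
        exact norm_inner_symm u (x k)
      rw [h2, h3] at h1
      exact h1
    have hlow2 : ‖u‖^2 ≤ Real.sqrt (X*Y) := le_trans hlow1 hgtsum
    have hlow3 : (‖u‖^2)^2 ≤ X*Y := by
      have h4 := mul_le_mul hlow2 hlow2 (sq_nonneg _) (Real.sqrt_nonneg _)
      rwa [Real.mul_self_sqrt (mul_nonneg hX0 hY0), ← pow_two] at h4
    nlinarith [hlow3]
  refine ⟨fun k => ((Real.sqrt (w k) : ℝ) : ℂ), fun k => ?_, ?_, ?_⟩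
  · have h1 : (0:ℝ) < Real.sqrt (w k) := Real.sqrt_pos.mpr (hwpos k)
    exact Complex.ofReal_ne_zero.mpr h1.ne'
  · refine ⟨B+1, 1/(B+1), by linarith, by positivity, fun u => ?_⟩
    obtain ⟨hSx, hSy, hTx, hTy, hlow⟩ := main u
    have hfun : (fun k => ‖(inner ℂ ((((Real.sqrt (w k) : ℝ):ℂ)) • x k) u : ℂ)‖^2)
        = fun k => w k * ‖(inner ℂ (x k) u : ℂ)‖^2 := funext (hax u)
    refine ⟨by rw [hfun]; exact hSx, ?_, ?_⟩
    · rw [hfun]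
      by_cases hu : u = 0
      · rw [hu]
        simp only [norm_zero]
        rw [show (0:ℝ)^2 = 0 from by norm_num, mul_zero]
        exact tsum_nonneg (fun k => mul_nonneg (hwpos k).le (sq_nonneg _))
      · have hupos : 0 < ‖u‖ := norm_pos_iff.mpr hu
        have hX0 : 0 ≤ ∑' k, w k * ‖(inner ℂ (x k) u : ℂ)‖^2 :=
          tsum_nonneg (fun k => mul_nonneg (hwpos k).le (sq_nonneg _))
        have h1 : ‖u‖^2*‖u‖^2 ≤ (∑' k, w k * ‖(inner ℂ (x k) u : ℂ)‖^2) * (B*‖u‖^2) :=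
          le_trans hlow (mul_le_mul_of_nonneg_left hTy hX0)
        have h2 : ‖u‖^2 ≤ (∑' k, w k * ‖(inner ℂ (x k) u : ℂ)‖^2) * B := by
          have h3 : ‖u‖^2*‖u‖^2 ≤ ((∑' k, w k * ‖(inner ℂ (x k) u : ℂ)‖^2) * B) * ‖u‖^2 := by
            calc ‖u‖^2*‖u‖^2 ≤ (∑' k, w k * ‖(inner ℂ (x k) u : ℂ)‖^2) * (B*‖u‖^2) := h1
            _ = ((∑' k, w k * ‖(inner ℂ (x k) u : ℂ)‖^2) * B) * ‖u‖^2 := by ring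
          exact le_of_mul_le_mul_right h3 (by positivity)
        rw [div_mul_eq_mul_div, div_le_iff₀ (by linarith), one_mul]
        calc ‖u‖^2 ≤ (∑' k, w k * ‖(inner ℂ (x k) u : ℂ)‖^2) * B := h2
        _ ≤ (∑' k, w k * ‖(inner ℂ (x k) u : ℂ)‖^2) * (B+1) := by
            apply mul_le_mul_of_nonneg_left (by linarith) hX0
    · rw [hfun]
      refine le_trans hTx ?_
      have := sq_nonneg ‖u‖
      nlinarith
  · refine ⟨B+1, 1/(B+1), by linarith, by positivity, fun u => ?_⟩
    obtain ⟨hSx, hSy, hTx, hTy, hlow⟩ := main u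
    have hfun : (fun k => ‖(inner ℂ (((starRingEnd ℂ) (((Real.sqrt (w k) : ℝ):ℂ)))⁻¹ • y k) u : ℂ)‖^2)
        = fun k => (w k)⁻¹ * ‖(inner ℂ (y k) u : ℂ)‖^2 := funext (hay u)
    refine ⟨by rw [hfun]; exact hSy, ?_, ?_⟩
    · rw [hfun]
      by_cases hu : u = 0
      · rw [hu]
        simp only [norm_zero]
        rw [show (0:ℝ)^2 = 0 from by norm_num, mul_zero]
        exact tsum_nonneg (fun k => mul_nonneg (inv_nonneg.mpr (hwpos k).le) (sq_nonneg _))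
      · have hupos : 0 < ‖u‖ := norm_pos_iff.mpr hu
        have hY0 : 0 ≤ ∑' k, (w k)⁻¹ * ‖(inner ℂ (y k) u : ℂ)‖^2 :=
          tsum_nonneg (fun k => mul_nonneg (inv_nonneg.mpr (hwpos k).le) (sq_nonneg _))
        have h1 : ‖u‖^2*‖u‖^2 ≤ (∑' k, (w k)⁻¹ * ‖(inner ℂ (y k) u : ℂ)‖^2) * (B*‖u‖^2) := by
          calc ‖u‖^2*‖u‖^2 ≤ (∑' k, w k * ‖(inner ℂ (x k) u : ℂ)‖^2)
              * (∑' k, (w k)⁻¹ * ‖(inner ℂ (y k) u : ℂ)‖^2) := hlow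
          _ = (∑' k, (w k)⁻¹ * ‖(inner ℂ (y k) u : ℂ)‖^2)
              * (∑' k, w k * ‖(inner ℂ (x k) u : ℂ)‖^2) := by ring
          _ ≤ (∑' k, (w k)⁻¹ * ‖(inner ℂ (y k) u : ℂ)‖^2) * (B*‖u‖^2) :=
              mul_le_mul_of_nonneg_left hTx hY0
        have h2 : ‖u‖^2 ≤ (∑' k, (w k)⁻¹ * ‖(inner ℂ (y k) u : ℂ)‖^2) * B := by
          have h3 : ‖u‖^2*‖u‖^2 ≤ ((∑' k, (w k)⁻¹ * ‖(inner ℂ (y k) u : ℂ)‖^2) * B) * ‖u‖^2 := by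
            calc ‖u‖^2*‖u‖^2 ≤ (∑' k, (w k)⁻¹ * ‖(inner ℂ (y k) u : ℂ)‖^2) * (B*‖u‖^2) := h1
            _ = ((∑' k, (w k)⁻¹ * ‖(inner ℂ (y k) u : ℂ)‖^2) * B) * ‖u‖^2 := by ring
          exact le_of_mul_le_mul_right h3 (by positivity)
        rw [div_mul_eq_mul_div, div_le_iff₀ (by linarith), one_mul]
        calc ‖u‖^2 ≤ (∑' k, (w k)⁻¹ * ‖(inner ℂ (y k) u : ℂ)‖^2) * B := h2
        _ ≤ (∑' k, (w k)⁻¹ * ‖(inner ℂ (y k) u : ℂ)‖^2) * (B+1) := by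
            apply mul_le_mul_of_nonneg_left (by linarith) hY0
    · rw [hfun]
      refine le_trans hTy ?_
      have := sq_nonneg ‖u‖
      nlinarith
end

section
/- Let H be a complex Hilbert space, n ≥ 1, C ≥ 0, and let x_1, …, x_n and y_1, …, y_n be vectors in H such that ‖∑_{k=1}^n ε_k ⟨u, y_k⟩ x_k‖ ≤ C‖u‖ for every u ∈ H and all complex scalars ε_1, …, ε_n with |ε_k| ≤ 1. Then for every m ≥ 1 and all vectors u_1, …, u_m, v_1, …, v_m ∈ H, one has ∑_{k=1}^n (∑_{j=1}^m |⟨u_j, y_k⟩|²)^{1/2} · (∑_{i=1}^m |⟨v_i, x_k⟩|²)^{1/2} ≤ 2C · (∑_{j=1}^m ‖u_j‖²)^{1/2} · (∑_{i=1}^m ‖v_i‖²)^{1/2}. -/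
open Finset Complex

noncomputable section
namespace KSE

local notation "conj'" => starRingEnd ℂ

def ω : Fin 4 → ℂ := fun t => Complex.I ^ (t : ℕ)

lemma ω0 : ω 0 = 1 := rfl
lemma ω1 : ω 1 = Complex.I := pow_one _
lemma ω2 : ω 2 = -1 := by simp [ω, show ((2:Fin 4):ℕ) = 2 from rfl, Complex.I_sq]
lemma ω3 : ω 3 = -Complex.I := by
  simp [ω, show ((3:Fin 4):ℕ) = 3 from rfl, pow_succ, Complex.I_sq]

lemma sum_S (a b : ℕ) (ha : a ≤ 2) (hb : b ≤ 2) :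
    ∑ t : Fin 4, ω t ^ a * conj' (ω t) ^ b = if a = b then 4 else 0 := by
  rw [Fin.sum_univ_four, ω0, ω1, ω2, ω3]
  interval_cases a <;> interval_cases b <;>
    simp [Complex.ext_iff, pow_succ, Complex.I_sq] <;> norm_num

lemma sum_pi_prod {m : ℕ} (f : Fin m → Fin 4 → ℂ) :
    ∑ σ : Fin m → Fin 4, ∏ p, f p (σ p) = ∏ p, ∑ t, f p t := by
  classical
  rw [Finset.prod_univ_sum, Fintype.piFinset_univ]


def ind {m : ℕ} (j : Fin m) : Fin m → ℕ := fun p => if p = j then 1 else 0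

lemma ind_le (j p : Fin m) : ind j p ≤ 1 := by unfold ind; split <;> omega

lemma master {m : ℕ} (g h : Fin m → ℕ) (hg : ∀ p, g p ≤ 2) (hh : ∀ p, h p ≤ 2) :
    ∑ σ : Fin m → Fin 4, ∏ p, (ω (σ p) ^ g p * conj' (ω (σ p)) ^ h p)
      = if g = h then (4 : ℂ) ^ m else 0 := by
  classical
  rw [sum_pi_prod fun p t => ω t ^ g p * conj' (ω t) ^ h p]
  by_cases hgh : g = h
  · rw [if_pos hgh]
    calc ∏ p, ∑ t, ω t ^ g p * conj' (ω t) ^ h p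
        = ∏ _p : Fin m, (4:ℂ) := Finset.prod_congr rfl fun p _ => by
          rw [sum_S _ _ (hg p) (hh p), if_pos (congrFun hgh p)]
      _ = 4 ^ m := by simp
  · rw [if_neg hgh]
    obtain ⟨p, hp⟩ := Function.ne_iff.mp hgh
    exact Finset.prod_eq_zero (mem_univ p)
      (by rw [sum_S _ _ (hg p) (hh p), if_neg hp])

lemma eval_as_prod {m : ℕ} (σ : Fin m → Fin 4) (j : Fin m) :
    ω (σ j) = ∏ p, ω (σ p) ^ ind j p := by
  classical
  have : ∀ p : Fin m, ω (σ p) ^ ind j p = if p = j then ω (σ p) else 1 := by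
    intro p; unfold ind; split <;> simp
  rw [Finset.prod_congr rfl fun p _ => this p, Finset.prod_ite_eq' univ j (fun p => ω (σ p)),
    if_pos (mem_univ j)]

lemma conj_eval_as_prod {m : ℕ} (σ : Fin m → Fin 4) (j : Fin m) :
    conj' (ω (σ j)) = ∏ p, conj' (ω (σ p)) ^ ind j p := by
  classical
  have : ∀ p : Fin m, conj' (ω (σ p)) ^ ind j p = if p = j then conj' (ω (σ p)) else 1 := by
    intro p; unfold ind; split <;> simp
  rw [Finset.prod_congr rfl fun p _ => this p, Finset.prod_ite_eq' univ j
    (fun p => conj' (ω (σ p))), if_pos (mem_univ j)]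

lemma ind_eq_iff {m : ℕ} (j k : Fin m) : ind j = ind k ↔ j = k := by
  constructor
  · intro h
    by_contra hc
    have := congrFun h j
    simp [ind, fun e : j = k => hc e] at this
  · rintro rfl; rfl


lemma orth2 {m : ℕ} (j k : Fin m) :
    ∑ σ : Fin m → Fin 4, ω (σ j) * conj' (ω (σ k)) = if j = k then (4:ℂ)^m else 0 := by
  classical
  have e1 : ∀ σ : Fin m → Fin 4,
      ω (σ j) * conj' (ω (σ k)) = ∏ p, ω (σ p) ^ ind j p * conj' (ω (σ p)) ^ ind k p := by
    intro σ
    rw [eval_as_prod σ j, conj_eval_as_prod σ k, Finset.prod_mul_distrib]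
  calc ∑ σ : Fin m → Fin 4, ω (σ j) * conj' (ω (σ k))
      = ∑ σ : Fin m → Fin 4, ∏ p, ω (σ p) ^ ind j p * conj' (ω (σ p)) ^ ind k p :=
        Finset.sum_congr rfl fun σ _ => e1 σ
    _ = if ind j = ind k then (4:ℂ)^m else 0 :=
        master (ind j) (ind k) (fun p => (ind_le j p).trans one_le_two)
          (fun p => (ind_le k p).trans one_le_two)
    _ = if j = k then (4:ℂ)^m else 0 := if_congr (ind_eq_iff j k) rfl rfl

lemma ind_add_eq_iff {m : ℕ} (j l k p : Fin m) :
    (fun q => ind j q + ind l q) = (fun q => ind k q + ind p q) ↔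
      ((k = j ∧ p = l) ∨ (k = l ∧ p = j)) := by
  classical
  constructor
  · intro h
    have key : ∀ q, ind j q + ind l q = ind k q + ind p q := fun q => congrFun h q
    by_cases h1 : j = k
    · subst h1
      by_cases h2 : p = l
      · exact Or.inl ⟨rfl, h2⟩
      · have hl := key l
        simp only [ind] at hl
        have h2' : ¬ l = p := fun e => h2 e.symm
        split_ifs at hl <;> simp_all
    · have hj := key j
      simp only [ind] at hj
      have h4 : j = p := by
        by_contra hc
        split_ifs at hj <;> simp_all
      subst h4
      have hk := key k
      simp only [ind] at hk
      have h5 : k = l := by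
        by_contra hc
        split_ifs at hk <;> simp_all
      exact Or.inr ⟨h5, rfl⟩
  · rintro (⟨rfl, rfl⟩ | ⟨rfl, rfl⟩)
    · rfl
    · funext q; exact add_comm _ _

lemma orth4 {m : ℕ} (j k l p : Fin m) :
    ∑ σ : Fin m → Fin 4, (ω (σ j) * conj' (ω (σ k))) * (ω (σ l) * conj' (ω (σ p)))
      = if (k = j ∧ p = l) ∨ (k = l ∧ p = j) then (4:ℂ)^m else 0 := by
  classical
  have e1 : ∀ σ : Fin m → Fin 4,
      (ω (σ j) * conj' (ω (σ k))) * (ω (σ l) * conj' (ω (σ p)))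
        = ∏ q, ω (σ q) ^ (ind j q + ind l q) * conj' (ω (σ q)) ^ (ind k q + ind p q) := by
    intro σ
    rw [eval_as_prod σ j, eval_as_prod σ l, conj_eval_as_prod σ k, conj_eval_as_prod σ p,
      ← Finset.prod_mul_distrib, ← Finset.prod_mul_distrib, ← Finset.prod_mul_distrib]
    exact Finset.prod_congr rfl fun q _ => by rw [pow_add, pow_add]; ring
  calc ∑ σ : Fin m → Fin 4, (ω (σ j) * conj' (ω (σ k))) * (ω (σ l) * conj' (ω (σ p)))
      = ∑ σ : Fin m → Fin 4, ∏ q, ω (σ q) ^ (ind j q + ind l q)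
          * conj' (ω (σ q)) ^ (ind k q + ind p q) :=
        Finset.sum_congr rfl fun σ _ => e1 σ
    _ = if (fun q => ind j q + ind l q) = (fun q => ind k q + ind p q) then (4:ℂ)^m else 0 :=
        master _ _ (fun q => add_le_add (ind_le j q) (ind_le l q))
          (fun q => add_le_add (ind_le k q) (ind_le p q))
    _ = if (k = j ∧ p = l) ∨ (k = l ∧ p = j) then (4:ℂ)^m else 0 :=
        if_congr (ind_add_eq_iff j l k p) rfl rfl


lemma second_moment {m : ℕ} (α : Fin m → ℂ) :
    ∑ σ : Fin m → Fin 4, ‖∑ j, ω (σ j) * α j‖ ^ 2 = 4 ^ m * ∑ j, ‖α j‖ ^ 2 := by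
  classical
  have expand : ∀ σ : Fin m → Fin 4, (∑ j, ω (σ j) * α j) * conj' (∑ j, ω (σ j) * α j)
      = ∑ j, ∑ k, (α j * conj' (α k)) * (ω (σ j) * conj' (ω (σ k))) := by
    intro σ
    rw [map_sum, Finset.sum_mul_sum]
    exact Finset.sum_congr rfl fun j _ => Finset.sum_congr rfl fun k _ => by
      rw [map_mul]; ring
  have key : ∑ σ : Fin m → Fin 4, ((∑ j, ω (σ j) * α j) * conj' (∑ j, ω (σ j) * α j))
      = (4:ℂ) ^ m * ∑ j, α j * conj' (α j) := by
    calc ∑ σ : Fin m → Fin 4, ((∑ j, ω (σ j) * α j) * conj' (∑ j, ω (σ j) * α j))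
        = ∑ σ : Fin m → Fin 4, ∑ j, ∑ k, (α j * conj' (α k)) * (ω (σ j) * conj' (ω (σ k))) :=
          Finset.sum_congr rfl fun σ _ => expand σ
      _ = ∑ j, ∑ k, (α j * conj' (α k)) * ∑ σ : Fin m → Fin 4, (ω (σ j) * conj' (ω (σ k))) := by
          rw [Finset.sum_comm]
          refine Finset.sum_congr rfl fun j _ => ?_
          rw [Finset.sum_comm]
          exact Finset.sum_congr rfl fun k _ => (Finset.mul_sum _ _ _).symm
      _ = ∑ j, ∑ k, (α j * conj' (α k)) * (if j = k then (4:ℂ)^m else 0) := by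
          refine Finset.sum_congr rfl fun j _ => Finset.sum_congr rfl fun k _ => by
            rw [orth2]
      _ = (4:ℂ)^m * ∑ j, α j * conj' (α j) := by
          rw [Finset.mul_sum]
          refine Finset.sum_congr rfl fun j _ => ?_
          simp [mul_ite, mul_zero, Finset.sum_ite_eq, mul_comm]
  have cast1 : ∀ z : ℂ, z * conj' z = ((‖z‖ ^ 2 : ℝ) : ℂ) := fun z => by
    rw [RCLike.mul_conj]; norm_cast
  have key2 : ∑ σ : Fin m → Fin 4, ((‖∑ j, ω (σ j) * α j‖ ^ 2 : ℝ) : ℂ)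
      = (4:ℂ) ^ m * ∑ j, ((‖α j‖ ^ 2 : ℝ) : ℂ) :=
    calc ∑ σ : Fin m → Fin 4, ((‖∑ j, ω (σ j) * α j‖ ^ 2 : ℝ) : ℂ)
        = ∑ σ : Fin m → Fin 4, ((∑ j, ω (σ j) * α j) * conj' (∑ j, ω (σ j) * α j)) :=
          Finset.sum_congr rfl fun σ _ => (cast1 _).symm
      _ = (4:ℂ) ^ m * ∑ j, α j * conj' (α j) := key
      _ = (4:ℂ) ^ m * ∑ j, ((‖α j‖ ^ 2 : ℝ) : ℂ) := by
          rw [Finset.sum_congr rfl fun j _ => cast1 (α j)]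
  exact_mod_cast key2


lemma ite_or_split {P Q : Prop} [Decidable P] [Decidable Q] (h : ¬(P ∧ Q)) (c : ℂ) :
    (if P ∨ Q then c else 0) = (if P then c else 0) + (if Q then c else 0) := by
  by_cases hP : P <;> by_cases hQ : Q <;> simp [hP, hQ]
  exact absurd ⟨hP, hQ⟩ h

lemma ite_and' {P Q : Prop} [Decidable P] [Decidable Q] (c : ℂ) :
    (if P ∧ Q then c else 0) = if Q then (if P then c else 0) else 0 := by
  by_cases hP : P <;> by_cases hQ : Q <;> simp [hP, hQ]

lemma fourth_moment {m : ℕ} (α : Fin m → ℂ) :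
    ∑ σ : Fin m → Fin 4, ‖∑ j, ω (σ j) * α j‖ ^ 4
      ≤ 2 * 4 ^ m * (∑ j, ‖α j‖ ^ 2) ^ 2 := by
  classical
  have expand4 : ∀ σ : Fin m → Fin 4,
      ((∑ j, ω (σ j) * α j) * conj' (∑ j, ω (σ j) * α j)) ^ 2
      = ∑ j, ∑ l, ∑ k, ∑ p, (α j * α l * conj' (α k) * conj' (α p))
          * ((ω (σ j) * conj' (ω (σ k))) * (ω (σ l) * conj' (ω (σ p)))) := by
    intro σ
    have h0 : ((∑ j, ω (σ j) * α j) * conj' (∑ j, ω (σ j) * α j)) ^ 2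
        = ((∑ j, ω (σ j) * α j) * (∑ l, ω (σ l) * α l))
          * ((∑ k, conj' (ω (σ k)) * conj' (α k)) * (∑ p, conj' (ω (σ p)) * conj' (α p))) := by
      simp only [map_sum, map_mul]
      ring
    rw [h0, Finset.sum_mul_sum, Finset.sum_mul]
    refine Finset.sum_congr rfl fun j _ => ?_
    rw [Finset.sum_mul]
    refine Finset.sum_congr rfl fun l _ => ?_
    rw [Finset.sum_mul_sum, Finset.mul_sum]
    refine Finset.sum_congr rfl fun k _ => ?_
    rw [Finset.mul_sum]
    refine Finset.sum_congr rfl fun p _ => by ring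
  have key : ∑ σ : Fin m → Fin 4, ((∑ j, ω (σ j) * α j) * conj' (∑ j, ω (σ j) * α j)) ^ 2
      = ∑ j, ∑ l, ∑ k, ∑ p, (α j * α l * conj' (α k) * conj' (α p))
          * (if (k = j ∧ p = l) ∨ (k = l ∧ p = j) then (4:ℂ)^m else 0) := by
    rw [Finset.sum_congr rfl fun σ _ => expand4 σ, Finset.sum_comm]
    refine Finset.sum_congr rfl fun j _ => ?_
    rw [Finset.sum_comm]
    refine Finset.sum_congr rfl fun l _ => ?_
    rw [Finset.sum_comm]
    refine Finset.sum_congr rfl fun k _ => ?_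
    rw [Finset.sum_comm]
    refine Finset.sum_congr rfl fun p _ => ?_
    rw [← Finset.mul_sum, orth4]
  have inner_eval : ∀ j l : Fin m,
      (∑ k, ∑ p, (α j * α l * conj' (α k) * conj' (α p))
          * (if (k = j ∧ p = l) ∨ (k = l ∧ p = j) then (4:ℂ)^m else 0))
        = (4:ℂ)^m * (((if j = l then ‖α j‖ ^ 4
            else 2 * (‖α j‖ ^ 2 * ‖α l‖ ^ 2) : ℝ)) : ℂ) := by
    intro j l
    have hnsq : ∀ z : ℂ, (‖z‖ : ℝ) ^ 2 = Complex.normSq z := fun z => by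
      rw [Complex.sq_norm]
    have habs : ∀ z w : ℂ, z * w * conj' z * conj' w = ((‖z‖ ^ 2 * ‖w‖ ^ 2 : ℝ) : ℂ) := by
      intro z w
      rw [hnsq, hnsq, Complex.ofReal_mul, ← Complex.mul_conj, ← Complex.mul_conj]
      ring
    by_cases hjl : j = l
    · subst hjl
      rw [if_pos rfl]
      have e1 : ∀ k p : Fin m, (α j * α j * conj' (α k) * conj' (α p))
            * (if (k = j ∧ p = j) ∨ (k = j ∧ p = j) then (4:ℂ)^m else 0)
          = if p = j then (if k = j then
              (α j * α j * conj' (α k) * conj' (α p)) * (4:ℂ)^m else 0) else 0 := by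
        intro k p
        have hcongr : (if (k = j ∧ p = j) ∨ (k = j ∧ p = j)
              then (α j * α j * conj' (α k) * conj' (α p)) * (4:ℂ)^m else 0)
            = if (k = j ∧ p = j)
              then (α j * α j * conj' (α k) * conj' (α p)) * (4:ℂ)^m else 0 :=
          if_congr or_self_iff rfl rfl
        rw [mul_ite, mul_zero, hcongr, ite_and']
      rw [Finset.sum_congr rfl fun k _ => Finset.sum_congr rfl fun p _ => e1 k p]
      rw [Finset.sum_congr rfl fun k _ => Finset.sum_ite_eq' Finset.univ j
        (fun p => if k = j then (α j * α j * conj' (α k) * conj' (α p)) * (4:ℂ)^m else 0)]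
      simp only [Finset.mem_univ, if_true]
      rw [Finset.sum_ite_eq' Finset.univ j
        (fun k => (α j * α j * conj' (α k) * conj' (α j)) * (4:ℂ)^m)]
      simp only [Finset.mem_univ, if_true]
      rw [habs (α j) (α j)]
      have : (‖α j‖ ^ 2 * ‖α j‖ ^ 2 : ℝ) = ‖α j‖ ^ 4 := by ring
      rw [this]
      ring
    · rw [if_neg hjl]
      have e1 : ∀ k p : Fin m, (α j * α l * conj' (α k) * conj' (α p))
            * (if (k = j ∧ p = l) ∨ (k = l ∧ p = j) then (4:ℂ)^m else 0)
          = (if p = l then (if k = j then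
              (α j * α l * conj' (α k) * conj' (α p)) * (4:ℂ)^m else 0) else 0)
            + (if p = j then (if k = l then
              (α j * α l * conj' (α k) * conj' (α p)) * (4:ℂ)^m else 0) else 0) := by
        intro k p
        rw [mul_ite, mul_zero,
          ite_or_split (fun h => hjl (h.1.1.symm.trans h.2.1)), ite_and', ite_and']
      rw [Finset.sum_congr rfl fun k _ => Finset.sum_congr rfl fun p _ => e1 k p]
      rw [Finset.sum_congr rfl fun k _ => Finset.sum_add_distrib, Finset.sum_add_distrib]
      rw [Finset.sum_congr rfl fun k _ => Finset.sum_ite_eq' Finset.univ l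
        (fun p => if k = j then (α j * α l * conj' (α k) * conj' (α p)) * (4:ℂ)^m else 0)]
      rw [Finset.sum_congr rfl fun k _ => Finset.sum_ite_eq' Finset.univ j
        (fun p => if k = l then (α j * α l * conj' (α k) * conj' (α p)) * (4:ℂ)^m else 0)]
      simp only [Finset.mem_univ, if_true]
      rw [Finset.sum_ite_eq' Finset.univ j
        (fun k => (α j * α l * conj' (α k) * conj' (α l)) * (4:ℂ)^m)]
      rw [Finset.sum_ite_eq' Finset.univ l
        (fun k => (α j * α l * conj' (α k) * conj' (α j)) * (4:ℂ)^m)]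
      simp only [Finset.mem_univ, if_true]
      have h1 : α j * α l * conj' (α j) * conj' (α l) = ((‖α j‖ ^ 2 * ‖α l‖ ^ 2 : ℝ) : ℂ) :=
        habs (α j) (α l)
      have h2 : α j * α l * conj' (α l) * conj' (α j) = ((‖α j‖ ^ 2 * ‖α l‖ ^ 2 : ℝ) : ℂ) := by
        rw [← h1]; ring
      rw [h1, h2]
      push_cast
      ring
  have keyR : ∑ σ : Fin m → Fin 4, ‖∑ j, ω (σ j) * α j‖ ^ 4
      = 4 ^ m * ∑ j, ∑ l, (if j = l then ‖α j‖ ^ 4 else 2 * (‖α j‖ ^ 2 * ‖α l‖ ^ 2)) := by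
    have cast2 : ∀ z : ℂ, (z * conj' z) ^ 2 = ((‖z‖ ^ 4 : ℝ) : ℂ) := fun z => by
      have hz : Complex.normSq z = ‖z‖ ^ 2 := by rw [Complex.sq_norm]
      rw [Complex.mul_conj, hz]
      push_cast
      ring
    have hcx : ((∑ σ : Fin m → Fin 4, ‖∑ j, ω (σ j) * α j‖ ^ 4 : ℝ) : ℂ)
        = (((4:ℝ) ^ m * ∑ j, ∑ l, (if j = l then ‖α j‖ ^ 4
            else 2 * (‖α j‖ ^ 2 * ‖α l‖ ^ 2)) : ℝ) : ℂ) := by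
      push_cast
      calc ∑ σ : Fin m → Fin 4, ((‖∑ j, ω (σ j) * α j‖ : ℂ)) ^ 4
          = ∑ σ : Fin m → Fin 4, ((∑ j, ω (σ j) * α j) * conj' (∑ j, ω (σ j) * α j)) ^ 2 := by
            refine Finset.sum_congr rfl fun σ _ => ?_
            rw [cast2]
            push_cast
            ring
        _ = ∑ j, ∑ l, ∑ k, ∑ p, (α j * α l * conj' (α k) * conj' (α p))
            * (if (k = j ∧ p = l) ∨ (k = l ∧ p = j) then (4:ℂ)^m else 0) := key
        _ = ∑ j, ∑ l, (4:ℂ)^m * (((if j = l then ‖α j‖ ^ 4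
            else 2 * (‖α j‖ ^ 2 * ‖α l‖ ^ 2) : ℝ)) : ℂ) :=
            Finset.sum_congr rfl fun j _ => Finset.sum_congr rfl fun l _ => inner_eval j l
        _ = 4 ^ m * ∑ j, ∑ l, (((if j = l then ‖α j‖ ^ 4
            else 2 * (‖α j‖ ^ 2 * ‖α l‖ ^ 2) : ℝ)) : ℂ) := by
            rw [Finset.mul_sum]
            exact Finset.sum_congr rfl fun j _ => (Finset.mul_sum _ _ _).symm
        _ = (4:ℂ) ^ m * ∑ j, ∑ l, (if j = l then ((‖α j‖ ^ 4 : ℝ) : ℂ)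
            else ((2 * (‖α j‖ ^ 2 * ‖α l‖ ^ 2) : ℝ) : ℂ)) := by
            refine congrArg _ (Finset.sum_congr rfl fun j _ => Finset.sum_congr rfl fun l _ => ?_)
            exact apply_ite Complex.ofReal _ _ _
        _ = (4:ℝ) ^ m * ∑ j, ∑ l, (if j = l then ((‖α j‖ ^ 4 : ℝ) : ℂ)
            else ((2 * (‖α j‖ ^ 2 * ‖α l‖ ^ 2) : ℝ) : ℂ)) := by norm_cast
      · push_cast
        refine congrArg _ (Finset.sum_congr rfl fun j _ => Finset.sum_congr rfl fun l _ => ?_)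
        rw [apply_ite Complex.ofReal]
        push_cast
        rfl
    exact_mod_cast hcx
  rw [keyR]
  have hbound : ∑ j, ∑ l, (if j = l then ‖α j‖ ^ 4 else 2 * (‖α j‖ ^ 2 * ‖α l‖ ^ 2))
      ≤ 2 * (∑ j, ‖α j‖ ^ 2) ^ 2 := by
    have : (∑ j, ‖α j‖ ^ 2) ^ 2 = ∑ j, ∑ l, ‖α j‖ ^ 2 * ‖α l‖ ^ 2 := by
      rw [sq, Finset.sum_mul_sum]
    rw [this, Finset.mul_sum]
    refine Finset.sum_le_sum fun j _ => ?_
    rw [Finset.mul_sum]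
    refine Finset.sum_le_sum fun l _ => ?_
    by_cases hjl : j = l
    · subst hjl
      rw [if_pos rfl]
      nlinarith [norm_nonneg (α j), pow_nonneg (norm_nonneg (α j)) 2]
    · rw [if_neg hjl]
  calc (4:ℝ) ^ m * ∑ j, ∑ l, (if j = l then ‖α j‖ ^ 4 else 2 * (‖α j‖ ^ 2 * ‖α l‖ ^ 2))
      ≤ (4:ℝ) ^ m * (2 * (∑ j, ‖α j‖ ^ 2) ^ 2) :=
        mul_le_mul_of_nonneg_left hbound (by positivity)
    _ = 2 * 4 ^ m * (∑ j, ‖α j‖ ^ 2) ^ 2 := by ring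


lemma vector_second_moment {H : Type*} [NormedAddCommGroup H] [InnerProductSpace ℂ H]
    {m : ℕ} (u : Fin m → H) :
    ∑ σ : Fin m → Fin 4, ‖∑ j, ω (σ j) • u j‖ ^ 2 = 4 ^ m * ∑ j, ‖u j‖ ^ 2 := by
  classical
  have expand : ∀ σ : Fin m → Fin 4,
      (inner ℂ (∑ j, ω (σ j) • u j) (∑ j, ω (σ j) • u j) : ℂ)
        = ∑ j, ∑ k, (inner ℂ (u j) (u k) : ℂ) * (ω (σ k) * conj' (ω (σ j))) := by
    intro σ
    rw [sum_inner]
    refine Finset.sum_congr rfl fun j _ => ?_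
    rw [inner_smul_left, inner_sum]
    rw [Finset.mul_sum]
    refine Finset.sum_congr rfl fun k _ => ?_
    rw [inner_smul_right]
    ring
  have key : ∑ σ : Fin m → Fin 4, (inner ℂ (∑ j, ω (σ j) • u j) (∑ j, ω (σ j) • u j) : ℂ)
      = (4:ℂ) ^ m * ∑ j, (inner ℂ (u j) (u j) : ℂ) := by
    calc ∑ σ : Fin m → Fin 4, (inner ℂ (∑ j, ω (σ j) • u j) (∑ j, ω (σ j) • u j) : ℂ)
        = ∑ σ : Fin m → Fin 4, ∑ j, ∑ k, (inner ℂ (u j) (u k) : ℂ)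
            * (ω (σ k) * conj' (ω (σ j))) := Finset.sum_congr rfl fun σ _ => expand σ
      _ = ∑ j, ∑ k, (inner ℂ (u j) (u k) : ℂ)
            * ∑ σ : Fin m → Fin 4, (ω (σ k) * conj' (ω (σ j))) := by
          rw [Finset.sum_comm]
          refine Finset.sum_congr rfl fun j _ => ?_
          rw [Finset.sum_comm]
          exact Finset.sum_congr rfl fun k _ => (Finset.mul_sum _ _ _).symm
      _ = ∑ j, ∑ k, (inner ℂ (u j) (u k) : ℂ) * (if k = j then (4:ℂ)^m else 0) := by
          refine Finset.sum_congr rfl fun j _ => Finset.sum_congr rfl fun k _ => by rw [orth2]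
      _ = (4:ℂ)^m * ∑ j, (inner ℂ (u j) (u j) : ℂ) := by
          rw [Finset.mul_sum]
          refine Finset.sum_congr rfl fun j _ => ?_
          simp [mul_ite, mul_zero, Finset.sum_ite_eq', mul_comm]
  have cast3 : ∀ w : H, (inner ℂ w w : ℂ) = ((‖w‖ ^ 2 : ℝ) : ℂ) := fun w => by
    rw [inner_self_eq_norm_sq_to_K]
    norm_cast
  have key2 : ∑ σ : Fin m → Fin 4, ((‖∑ j, ω (σ j) • u j‖ ^ 2 : ℝ) : ℂ)
      = (4:ℂ) ^ m * ∑ j, ((‖u j‖ ^ 2 : ℝ) : ℂ) :=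
    calc ∑ σ : Fin m → Fin 4, ((‖∑ j, ω (σ j) • u j‖ ^ 2 : ℝ) : ℂ)
        = ∑ σ : Fin m → Fin 4, (inner ℂ (∑ j, ω (σ j) • u j) (∑ j, ω (σ j) • u j) : ℂ) :=
          Finset.sum_congr rfl fun σ _ => (cast3 _).symm
      _ = (4:ℂ) ^ m * ∑ j, (inner ℂ (u j) (u j) : ℂ) := key
      _ = (4:ℂ) ^ m * ∑ j, ((‖u j‖ ^ 2 : ℝ) : ℂ) := by
          rw [Finset.sum_congr rfl fun j _ => cast3 (u j)]
  exact_mod_cast key2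

lemma khintchine {m : ℕ} (Z : (Fin m → Fin 4) → ℝ) (hZ : ∀ σ, 0 ≤ Z σ) (a : ℝ) (ha : 0 ≤ a)
    (h2 : ∑ σ : Fin m → Fin 4, Z σ ^ 2 = 4 ^ m * a ^ 2)
    (h4 : ∑ σ : Fin m → Fin 4, Z σ ^ 4 ≤ 2 * 4 ^ m * a ^ 4) :
    (4:ℝ) ^ m * a ≤ Real.sqrt 2 * ∑ σ : Fin m → Fin 4, Z σ := by
  have hS1 : 0 ≤ ∑ σ : Fin m → Fin 4, Z σ := Finset.sum_nonneg fun σ _ => hZ σ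
  rcases ha.eq_or_lt with h0 | h0
  · rw [← h0, mul_zero]
    exact mul_nonneg (Real.sqrt_nonneg 2) hS1
  set M : ℝ := (4:ℝ) ^ m with hM
  have hMpos : (0:ℝ) < M := by positivity
  set S1 : ℝ := ∑ σ : Fin m → Fin 4, Z σ with hS1d
  set S3 : ℝ := ∑ σ : Fin m → Fin 4, Z σ ^ 3 with hS3d
  set S4 : ℝ := ∑ σ : Fin m → Fin 4, Z σ ^ 4 with hS4d
  have hS3 : 0 ≤ S3 := Finset.sum_nonneg fun σ _ => pow_nonneg (hZ σ) 3
  have hS4 : 0 ≤ S4 := Finset.sum_nonneg fun σ _ => pow_nonneg (hZ σ) 4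
  have cs1 : (∑ σ : Fin m → Fin 4, Z σ ^ 2) ^ 2 ≤ S1 * S3 := by
    have := Finset.sum_mul_sq_le_sq_mul_sq Finset.univ
      (fun σ => Real.sqrt (Z σ)) (fun σ => Real.sqrt (Z σ) * Z σ)
    have e1 : ∀ σ : Fin m → Fin 4, Real.sqrt (Z σ) * (Real.sqrt (Z σ) * Z σ) = Z σ ^ 2 := by
      intro σ
      rw [← mul_assoc, Real.mul_self_sqrt (hZ σ)]
      ring
    have e2 : ∀ σ : Fin m → Fin 4, Real.sqrt (Z σ) ^ 2 = Z σ := fun σ => Real.sq_sqrt (hZ σ)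
    have e3 : ∀ σ : Fin m → Fin 4, (Real.sqrt (Z σ) * Z σ) ^ 2 = Z σ ^ 3 := by
      intro σ
      rw [mul_pow, Real.sq_sqrt (hZ σ)]
      ring
    calc (∑ σ : Fin m → Fin 4, Z σ ^ 2) ^ 2
        = (∑ σ : Fin m → Fin 4, Real.sqrt (Z σ) * (Real.sqrt (Z σ) * Z σ)) ^ 2 := by
          rw [Finset.sum_congr rfl fun σ _ => e1 σ]
      _ ≤ (∑ σ : Fin m → Fin 4, Real.sqrt (Z σ) ^ 2)
          * ∑ σ : Fin m → Fin 4, (Real.sqrt (Z σ) * Z σ) ^ 2 := this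
      _ = S1 * S3 := by
          rw [Finset.sum_congr rfl fun σ _ => e2 σ, Finset.sum_congr rfl fun σ _ => e3 σ]
  have cs2 : S3 ^ 2 ≤ (∑ σ : Fin m → Fin 4, Z σ ^ 2) * S4 := by
    have := Finset.sum_mul_sq_le_sq_mul_sq Finset.univ (fun σ => Z σ) (fun σ => Z σ ^ 2)
    have e1 : ∀ σ : Fin m → Fin 4, Z σ * Z σ ^ 2 = Z σ ^ 3 := fun σ => by ring
    have e2 : ∀ σ : Fin m → Fin 4, (Z σ ^ 2) ^ 2 = Z σ ^ 4 := fun σ => by ring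
    calc S3 ^ 2 = (∑ σ : Fin m → Fin 4, Z σ * Z σ ^ 2) ^ 2 := by
          rw [Finset.sum_congr rfl fun σ _ => e1 σ]
      _ ≤ (∑ σ : Fin m → Fin 4, Z σ ^ 2) * ∑ σ : Fin m → Fin 4, (Z σ ^ 2) ^ 2 := this
      _ = (∑ σ : Fin m → Fin 4, Z σ ^ 2) * S4 := by
          rw [Finset.sum_congr rfl fun σ _ => e2 σ]
  rw [h2] at cs1 cs2
  -- cs1 : (M * a^2)^2 ≤ S1 * S3 ; cs2 : S3^2 ≤ M * a^2 * S4 ; h4 : S4 ≤ 2*M*a^4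
  have hstep : M ^ 4 * a ^ 8 ≤ 2 * S1 ^ 2 * (M ^ 2 * a ^ 6) := by
    nlinarith [cs1, cs2, h4, hS1, hS3, hS4, hMpos, h0, sq_nonneg a,
      mul_le_mul_of_nonneg_left h4 (mul_nonneg hMpos.le (sq_nonneg a)),
      mul_le_mul_of_nonneg_left cs2 (sq_nonneg S1)]
  have hdiv : M ^ 2 * a ^ 2 ≤ 2 * S1 ^ 2 := by
    have hpos : (0:ℝ) < M ^ 2 * a ^ 6 := by positivity
    have : M ^ 2 * a ^ 2 * (M ^ 2 * a ^ 6) ≤ 2 * S1 ^ 2 * (M ^ 2 * a ^ 6) := by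
      calc M ^ 2 * a ^ 2 * (M ^ 2 * a ^ 6) = M ^ 4 * a ^ 8 := by ring
        _ ≤ 2 * S1 ^ 2 * (M ^ 2 * a ^ 6) := hstep
    exact le_of_mul_le_mul_right this hpos
  have hMa : 0 ≤ M * a := mul_nonneg hMpos.le ha
  calc M * a = Real.sqrt ((M * a) ^ 2) := (Real.sqrt_sq hMa).symm
    _ ≤ Real.sqrt (2 * S1 ^ 2) := Real.sqrt_le_sqrt (by nlinarith [hdiv])
    _ = Real.sqrt 2 * S1 := by
        rw [Real.sqrt_mul (by norm_num : (0:ℝ) ≤ 2), Real.sqrt_sq hS1]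

lemma bilinear {H : Type*} [NormedAddCommGroup H] [InnerProductSpace ℂ H] {n : ℕ}
    (C : ℝ) (x y : Fin n → H)
    (hΦ : ∀ (u : H) (ε : Fin n → ℂ), (∀ k, ‖ε k‖ ≤ 1) →
      ‖∑ k, (ε k * (inner ℂ (y k) u : ℂ)) • x k‖ ≤ C * ‖u‖)
    (u v : H) :
    ∑ k, ‖(inner ℂ (y k) u : ℂ)‖ * ‖(inner ℂ (x k) v : ℂ)‖ ≤ C * ‖u‖ * ‖v‖ := by
  classical
  set w : Fin n → ℂ := fun k => conj' (inner ℂ (y k) u : ℂ) * (inner ℂ (x k) v : ℂ) with hw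
  set ε : Fin n → ℂ := fun k => if w k = 0 then 0 else conj' ((‖w k‖ : ℂ) / w k) with hε
  have hε1 : ∀ k, ‖ε k‖ ≤ 1 := by
    intro k
    rw [hε]
    dsimp only
    split_ifs with h
    · simp
    · rw [RCLike.norm_conj, norm_div, Complex.norm_real, Real.norm_eq_abs,
        _root_.abs_of_nonneg (norm_nonneg _), div_self (norm_ne_zero_iff.mpr h)]
  have hwnorm : ∀ k, ‖(inner ℂ (y k) u : ℂ)‖ * ‖(inner ℂ (x k) v : ℂ)‖ = ‖w k‖ := by
    intro k
    rw [hw]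
    dsimp only
    rw [norm_mul, RCLike.norm_conj]
  have hterm : ∀ k, conj' (ε k * (inner ℂ (y k) u : ℂ)) * (inner ℂ (x k) v : ℂ)
      = ((‖w k‖ : ℝ) : ℂ) := by
    intro k
    have h1 : conj' (ε k * (inner ℂ (y k) u : ℂ)) * (inner ℂ (x k) v : ℂ)
        = conj' (ε k) * w k := by
      rw [map_mul, hw]
      ring
    rw [h1, hε]
    dsimp only
    split_ifs with h
    · simp [h]
    · rw [Complex.conj_conj, div_mul_cancel₀ _ h]
  have hsum : ((∑ k, ‖(inner ℂ (y k) u : ℂ)‖ * ‖(inner ℂ (x k) v : ℂ)‖ : ℝ) : ℂ)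
      = (inner ℂ (∑ k, (ε k * (inner ℂ (y k) u : ℂ)) • x k) v : ℂ) := by
    rw [sum_inner]
    push_cast
    refine Finset.sum_congr rfl fun k _ => ?_
    rw [inner_smul_left, hterm k, ← Complex.ofReal_mul, hwnorm k]
  have hnn : 0 ≤ ∑ k, ‖(inner ℂ (y k) u : ℂ)‖ * ‖(inner ℂ (x k) v : ℂ)‖ :=
    Finset.sum_nonneg fun k _ => mul_nonneg (norm_nonneg _) (norm_nonneg _)
  calc ∑ k, ‖(inner ℂ (y k) u : ℂ)‖ * ‖(inner ℂ (x k) v : ℂ)‖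
      = ‖((∑ k, ‖(inner ℂ (y k) u : ℂ)‖ * ‖(inner ℂ (x k) v : ℂ)‖ : ℝ) : ℂ)‖ := by
        rw [Complex.norm_real, Real.norm_eq_abs, _root_.abs_of_nonneg hnn]
    _ = ‖(inner ℂ (∑ k, (ε k * (inner ℂ (y k) u : ℂ)) • x k) v : ℂ)‖ := by rw [hsum]
    _ ≤ ‖∑ k, (ε k * (inner ℂ (y k) u : ℂ)) • x k‖ * ‖v‖ := norm_inner_le_norm _ _
    _ ≤ C * ‖u‖ * ‖v‖ := mul_le_mul_of_nonneg_right (hΦ u ε hε1) (norm_nonneg v)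


end KSE
end

section Main
open KSE



/-- If `‖∑ₖ εₖ ⟨u, yₖ⟩ xₖ‖ ≤ C‖u‖` for all `u ∈ H` and all scalars `|εₖ| ≤ 1`,
then for all `u₁,…,u_m, v₁,…,v_m ∈ H`,
`∑ₖ (∑ⱼ|⟨uⱼ, yₖ⟩|²)^(1/2) (∑ᵢ|⟨vᵢ, xₖ⟩|²)^(1/2)
  ≤ 2C (∑ⱼ‖uⱼ‖²)^(1/2) (∑ᵢ‖vᵢ‖²)^(1/2)`.
Here `⟨u, y⟩` (linear in the first argument) is Mathlib's `inner y u`. -/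
theorem key_square_function_estimate
    {H : Type*} [NormedAddCommGroup H] [InnerProductSpace ℂ H]
    (n : ℕ) (hn : 1 ≤ n) (C : ℝ) (hC : 0 ≤ C) (x y : Fin n → H)
    (hΦ : ∀ (u : H) (ε : Fin n → ℂ), (∀ k, ‖ε k‖ ≤ 1) →
      ‖∑ k, (ε k * (inner ℂ (y k) u : ℂ)) • x k‖ ≤ C * ‖u‖)
    (m : ℕ) (hm : 1 ≤ m) (u v : Fin m → H) :
    ∑ k, Real.sqrt (∑ j, ‖(inner ℂ (y k) (u j) : ℂ)‖ ^ 2) *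
        Real.sqrt (∑ i, ‖(inner ℂ (x k) (v i) : ℂ)‖ ^ 2) ≤
      2 * C * Real.sqrt (∑ j, ‖u j‖ ^ 2) * Real.sqrt (∑ i, ‖v i‖ ^ 2) := by
  classical
  have hM : (0:ℝ) < 4 ^ m := by positivity
  set M : ℝ := (4:ℝ) ^ m with hMdef
  set A : ℝ := Real.sqrt (∑ j, ‖u j‖ ^ 2) with hA
  set B : ℝ := Real.sqrt (∑ i, ‖v i‖ ^ 2) with hB
  set U : (Fin m → Fin 4) → H := fun σ => ∑ j, ω (σ j) • u j with hUdef
  set V : (Fin m → Fin 4) → H := fun τ => ∑ i, ω (τ i) • v i with hVdef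
  set a : Fin n → ℝ := fun k => Real.sqrt (∑ j, ‖(inner ℂ (y k) (u j) : ℂ)‖ ^ 2) with ha
  set b : Fin n → ℝ := fun k => Real.sqrt (∑ i, ‖(inner ℂ (x k) (v i) : ℂ)‖ ^ 2) with hb
  set S : Fin n → ℝ := fun k => ∑ σ : Fin m → Fin 4, ‖(inner ℂ (y k) (U σ) : ℂ)‖ with hS
  set T : Fin n → ℝ := fun k => ∑ τ : Fin m → Fin 4, ‖(inner ℂ (x k) (V τ) : ℂ)‖ with hT
  have hSnn : ∀ k, 0 ≤ S k := fun k => Finset.sum_nonneg fun σ _ => norm_nonneg _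
  have hTnn : ∀ k, 0 ≤ T k := fun k => Finset.sum_nonneg fun τ _ => norm_nonneg _
  have hann : ∀ k, 0 ≤ a k := fun k => Real.sqrt_nonneg _
  have hbnn : ∀ k, 0 ≤ b k := fun k => Real.sqrt_nonneg _
  -- Khintchine bounds per k
  have hka : ∀ k, M * a k ≤ Real.sqrt 2 * S k := by
    intro k
    have hU : ∀ σ : Fin m → Fin 4,
        (inner ℂ (y k) (U σ) : ℂ) = ∑ j, ω (σ j) * (inner ℂ (y k) (u j) : ℂ) := by
      intro σ
      rw [hUdef]
      simp only [inner_sum, inner_smul_right]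
    have hnn : 0 ≤ ∑ j, ‖(inner ℂ (y k) (u j) : ℂ)‖ ^ 2 :=
      Finset.sum_nonneg fun j _ => sq_nonneg _
    have hsq : a k ^ 2 = ∑ j, ‖(inner ℂ (y k) (u j) : ℂ)‖ ^ 2 := Real.sq_sqrt hnn
    have kh := khintchine (fun σ => ‖∑ j, ω (σ j) * (inner ℂ (y k) (u j) : ℂ)‖)
      (fun σ => norm_nonneg _) (a k) (hann k)
      (by rw [hsq]; exact second_moment _)
      (by
        have h4 := fourth_moment (fun j => (inner ℂ (y k) (u j) : ℂ))
        have : a k ^ 4 = (∑ j, ‖(inner ℂ (y k) (u j) : ℂ)‖ ^ 2) ^ 2 := by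
          rw [← hsq]; ring
        rw [this]
        exact h4)
    rw [hS]
    dsimp only
    rw [Finset.sum_congr rfl fun σ _ => congrArg norm (hU σ)]
    exact kh
  have hkb : ∀ k, M * b k ≤ Real.sqrt 2 * T k := by
    intro k
    have hV : ∀ τ : Fin m → Fin 4,
        (inner ℂ (x k) (V τ) : ℂ) = ∑ i, ω (τ i) * (inner ℂ (x k) (v i) : ℂ) := by
      intro τ
      rw [hVdef]
      simp only [inner_sum, inner_smul_right]
    have hnn : 0 ≤ ∑ i, ‖(inner ℂ (x k) (v i) : ℂ)‖ ^ 2 :=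
      Finset.sum_nonneg fun i _ => sq_nonneg _
    have hsq : b k ^ 2 = ∑ i, ‖(inner ℂ (x k) (v i) : ℂ)‖ ^ 2 := Real.sq_sqrt hnn
    have kh := khintchine (fun τ => ‖∑ i, ω (τ i) * (inner ℂ (x k) (v i) : ℂ)‖)
      (fun τ => norm_nonneg _) (b k) (hbnn k)
      (by rw [hsq]; exact second_moment _)
      (by
        have h4 := fourth_moment (fun i => (inner ℂ (x k) (v i) : ℂ))
        have : b k ^ 4 = (∑ i, ‖(inner ℂ (x k) (v i) : ℂ)‖ ^ 2) ^ 2 := by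
          rw [← hsq]; ring
        rw [this]
        exact h4)
    rw [hT]
    dsimp only
    rw [Finset.sum_congr rfl fun τ _ => congrArg norm (hV τ)]
    exact kh
  -- product bound per k
  have h22 : Real.sqrt 2 * Real.sqrt 2 = 2 := Real.mul_self_sqrt (by norm_num)
  have hprod : ∀ k, M ^ 2 * (a k * b k) ≤ 2 * (S k * T k) := by
    intro k
    have h1 : (M * a k) * (M * b k) ≤ (Real.sqrt 2 * S k) * (Real.sqrt 2 * T k) :=
      mul_le_mul (hka k) (hkb k) (mul_nonneg hM.le (hbnn k))
        (mul_nonneg (Real.sqrt_nonneg 2) (hSnn k))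
    calc M ^ 2 * (a k * b k) = (M * a k) * (M * b k) := by ring
      _ ≤ (Real.sqrt 2 * S k) * (Real.sqrt 2 * T k) := h1
      _ = (Real.sqrt 2 * Real.sqrt 2) * (S k * T k) := by ring
      _ = 2 * (S k * T k) := by rw [h22]
  -- sum over k and swap
  have hswap : ∑ k, S k * T k
      = ∑ σ : Fin m → Fin 4, ∑ τ : Fin m → Fin 4,
          ∑ k, ‖(inner ℂ (y k) (U σ) : ℂ)‖ * ‖(inner ℂ (x k) (V τ) : ℂ)‖ := by
    rw [Finset.sum_congr rfl fun k _ => (Finset.sum_mul_sum Finset.univ Finset.univ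
      (fun σ => ‖(inner ℂ (y k) (U σ) : ℂ)‖) (fun τ => ‖(inner ℂ (x k) (V τ) : ℂ)‖))]
    rw [Finset.sum_comm]
    exact Finset.sum_congr rfl fun σ _ => Finset.sum_comm
  have hbil : ∑ σ : Fin m → Fin 4, ∑ τ : Fin m → Fin 4,
        ∑ k, ‖(inner ℂ (y k) (U σ) : ℂ)‖ * ‖(inner ℂ (x k) (V τ) : ℂ)‖
      ≤ C * ((∑ σ : Fin m → Fin 4, ‖U σ‖) * (∑ τ : Fin m → Fin 4, ‖V τ‖)) := by
    calc ∑ σ : Fin m → Fin 4, ∑ τ : Fin m → Fin 4,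
          ∑ k, ‖(inner ℂ (y k) (U σ) : ℂ)‖ * ‖(inner ℂ (x k) (V τ) : ℂ)‖
        ≤ ∑ σ : Fin m → Fin 4, ∑ τ : Fin m → Fin 4, C * ‖U σ‖ * ‖V τ‖ :=
          Finset.sum_le_sum fun σ _ => Finset.sum_le_sum fun τ _ =>
            bilinear C x y hΦ (U σ) (V τ)
      _ = C * ((∑ σ : Fin m → Fin 4, ‖U σ‖) * (∑ τ : Fin m → Fin 4, ‖V τ‖)) := by
          rw [Finset.sum_mul_sum, Finset.mul_sum]
          exact Finset.sum_congr rfl fun σ _ => by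
            rw [Finset.mul_sum]
            exact Finset.sum_congr rfl fun τ _ => by ring
  -- L1 bound for ‖U σ‖
  have hcard : (Finset.univ : Finset (Fin m → Fin 4)).card = 4 ^ m := by
    rw [Finset.card_univ, Fintype.card_fun]
    simp
  have hUL1 : ∑ σ : Fin m → Fin 4, ‖U σ‖ ≤ M * A := by
    have h2U : ∑ σ : Fin m → Fin 4, ‖U σ‖ ^ 2 = M * A ^ 2 := by
      rw [hA, Real.sq_sqrt (Finset.sum_nonneg fun j _ => sq_nonneg _)]
      exact vector_second_moment u
    have cs := Finset.sum_mul_sq_le_sq_mul_sq Finset.univ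
      (fun _ : Fin m → Fin 4 => (1:ℝ)) (fun σ => ‖U σ‖)
    simp only [one_mul, one_pow] at cs
    rw [Finset.sum_const, hcard, nsmul_eq_mul, mul_one] at cs
    have hnn : 0 ≤ ∑ σ : Fin m → Fin 4, ‖U σ‖ :=
      Finset.sum_nonneg fun σ _ => norm_nonneg _
    have hAnn : 0 ≤ A := Real.sqrt_nonneg _
    calc ∑ σ : Fin m → Fin 4, ‖U σ‖
        = Real.sqrt ((∑ σ : Fin m → Fin 4, ‖U σ‖) ^ 2) := (Real.sqrt_sq hnn).symm
      _ ≤ Real.sqrt ((M * A) ^ 2) := by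
          apply Real.sqrt_le_sqrt
          calc (∑ σ : Fin m → Fin 4, ‖U σ‖) ^ 2
              ≤ (4:ℝ) ^ m * ∑ σ : Fin m → Fin 4, ‖U σ‖ ^ 2 := by exact_mod_cast cs
            _ = M * (M * A ^ 2) := by rw [h2U]
            _ = (M * A) ^ 2 := by ring
      _ = M * A := Real.sqrt_sq (mul_nonneg hM.le hAnn)
  have hVL1 : ∑ τ : Fin m → Fin 4, ‖V τ‖ ≤ M * B := by
    have h2V : ∑ τ : Fin m → Fin 4, ‖V τ‖ ^ 2 = M * B ^ 2 := by
      rw [hB, Real.sq_sqrt (Finset.sum_nonneg fun i _ => sq_nonneg _)]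
      exact vector_second_moment v
    have cs := Finset.sum_mul_sq_le_sq_mul_sq Finset.univ
      (fun _ : Fin m → Fin 4 => (1:ℝ)) (fun τ => ‖V τ‖)
    simp only [one_mul, one_pow] at cs
    rw [Finset.sum_const, hcard, nsmul_eq_mul, mul_one] at cs
    have hnn : 0 ≤ ∑ τ : Fin m → Fin 4, ‖V τ‖ :=
      Finset.sum_nonneg fun τ _ => norm_nonneg _
    have hBnn : 0 ≤ B := Real.sqrt_nonneg _
    calc ∑ τ : Fin m → Fin 4, ‖V τ‖
        = Real.sqrt ((∑ τ : Fin m → Fin 4, ‖V τ‖) ^ 2) := (Real.sqrt_sq hnn).symm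
      _ ≤ Real.sqrt ((M * B) ^ 2) := by
          apply Real.sqrt_le_sqrt
          calc (∑ τ : Fin m → Fin 4, ‖V τ‖) ^ 2
              ≤ (4:ℝ) ^ m * ∑ τ : Fin m → Fin 4, ‖V τ‖ ^ 2 := by exact_mod_cast cs
            _ = M * (M * B ^ 2) := by rw [h2V]
            _ = (M * B) ^ 2 := by ring
      _ = M * B := Real.sqrt_sq (mul_nonneg hM.le hBnn)
  -- final assembly
  have main : M ^ 2 * ∑ k, a k * b k ≤ M ^ 2 * (2 * C * A * B) := by
    calc M ^ 2 * ∑ k, a k * b k = ∑ k, M ^ 2 * (a k * b k) := Finset.mul_sum _ _ _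
      _ ≤ ∑ k, 2 * (S k * T k) := Finset.sum_le_sum fun k _ => hprod k
      _ = 2 * ∑ k, S k * T k := (Finset.mul_sum _ _ _).symm
      _ ≤ 2 * (C * ((∑ σ : Fin m → Fin 4, ‖U σ‖) * (∑ τ : Fin m → Fin 4, ‖V τ‖))) := by
          apply mul_le_mul_of_nonneg_left _ (by norm_num : (0:ℝ) ≤ 2)
          rw [hswap]
          exact hbil
      _ ≤ 2 * (C * ((M * A) * (M * B))) := by
          apply mul_le_mul_of_nonneg_left _ (by norm_num : (0:ℝ) ≤ 2)
          apply mul_le_mul_of_nonneg_left _ hC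
          exact mul_le_mul hUL1 hVL1
            (Finset.sum_nonneg fun τ _ => norm_nonneg _)
            (mul_nonneg hM.le (Real.sqrt_nonneg _))
      _ = M ^ 2 * (2 * C * A * B) := by ring
  have hM2 : (0:ℝ) < M ^ 2 := by positivity
  have := le_of_mul_le_mul_left main hM2
  exact this

end Main
end

section
/- Let H be a complex Hilbert space, n ≥ 1, C ≥ 0, and let x_1, …, x_n and y_1, …, y_n be vectors in H such that ‖∑_{k=1}^n ε_k ⟨u, y_k⟩ x_k‖ ≤ C‖u‖ for every u ∈ H and all complex scalars ε_1, …, ε_n with |ε_k| ≤ 1. Then for every m ≥ 1 and all vectors u_1, …, u_m, v_1, …, v_m ∈ H, one has ∑_{k=1}^n (2^{-m} ∑_{ε ∈ {−1,1}^m} |∑_{j=1}^m ε_j ⟨u_j, y_k⟩|) · (2^{-m} ∑_{δ ∈ {−1,1}^m} |∑_{i=1}^m δ_i ⟨v_i, x_k⟩|) ≤ C · (∑_{j=1}^m ‖u_j‖²)^{1/2} · (∑_{i=1}^m ‖v_i‖²)^{1/2}, where the averages are taken over all choices of signs ε, δ ∈ {−1,1}^m. -/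
open Finset

local notation "⟪" a ", " b "⟫" => @inner ℂ _ _ a b

/-- Sum of products of two Rademacher signs over all sign assignments. -/
lemma sign_sum_mul (m : ℕ) (j j' : Fin m) :
    ∑ ε : Fin m → Bool, ((if ε j then (1:ℂ) else -1) * (if ε j' then (1:ℂ) else -1))
      = if j = j' then (2:ℂ)^m else 0 := by
  rcases eq_or_ne j j' with h | h
  · subst h
    have : ∀ ε : Fin m → Bool,
        ((if ε j then (1:ℂ) else -1) * (if ε j then (1:ℂ) else -1)) = 1 := by
      intro ε; by_cases hb : ε j <;> simp [hb]
    rw [Finset.sum_congr rfl fun ε _ => this ε]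
    simp [Fintype.card_fun]
  · simp only [if_neg h]
    apply Finset.sum_ninvolution (g := fun ε => Function.update ε j (!ε j))
    · intro ε
      have h1 : Function.update ε j (!ε j) j = !ε j := Function.update_self _ _ _
      have h2 : Function.update ε j (!ε j) j' = ε j' := Function.update_of_ne (Ne.symm h) _ _
      rw [h1, h2]
      by_cases hb : ε j <;> by_cases hb' : ε j' <;> simp [hb, hb']
    · intro ε hne
      intro hcontra
      have := congrFun hcontra j
      rw [Function.update_self] at this
      exact (Bool.not_ne_self (ε j)) this
    · intro ε; exact Finset.mem_univ _
    · intro ε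
      funext i
      by_cases hi : i = j
      · subst hi; simp
      · simp [Function.update_of_ne hi]

/-- The average of the squared norm of Rademacher sums. -/
lemma sum_sq_norm_signs {H : Type*} [NormedAddCommGroup H] [InnerProductSpace ℂ H]
    (m : ℕ) (u : Fin m → H) :
    ∑ ε : Fin m → Bool, ‖∑ j, (if ε j then (1:ℂ) else -1) • u j‖^2
      = 2^m * ∑ j, ‖u j‖^2 := by
  have hexp : ∀ ε : Fin m → Bool,
      ‖∑ j, (if ε j then (1:ℂ) else -1) • u j‖^2
        = ∑ j, ∑ j', Complex.re (((if ε j then (1:ℂ) else -1) * (if ε j' then (1:ℂ) else -1))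
            * ⟪u j, u j'⟫) := by
    intro ε
    rw [← inner_self_eq_norm_sq (𝕜 := ℂ), RCLike.re_to_complex, sum_inner, Complex.re_sum]
    refine Finset.sum_congr rfl fun j _ => ?_
    rw [inner_sum, Complex.re_sum]
    refine Finset.sum_congr rfl fun j' _ => ?_
    rw [inner_smul_left, inner_smul_right]
    congr 1
    have : (starRingEnd ℂ) (if ε j then (1:ℂ) else -1) = (if ε j then (1:ℂ) else -1) := by
      by_cases hb : ε j <;> simp [hb]
    rw [this]; ring
  calc ∑ ε : Fin m → Bool, ‖∑ j, (if ε j then (1:ℂ) else -1) • u j‖^2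
      = ∑ j, ∑ j', Complex.re ((∑ ε : Fin m → Bool,
          ((if ε j then (1:ℂ) else -1) * (if ε j' then (1:ℂ) else -1))) * ⟪u j, u j'⟫) := by
        rw [Finset.sum_congr rfl fun ε _ => hexp ε]
        rw [Finset.sum_comm]
        refine Finset.sum_congr rfl fun j _ => ?_
        rw [Finset.sum_comm]
        refine Finset.sum_congr rfl fun j' _ => ?_
        conv_rhs => rw [Finset.sum_mul, Complex.re_sum]
    _ = ∑ j, Complex.re ((2:ℂ)^m * ⟪u j, u j⟫) := by
        refine Finset.sum_congr rfl fun j _ => ?_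
        rw [Finset.sum_eq_single j]
        · rw [sign_sum_mul, if_pos rfl]
        · intro j' _ hne
          rw [sign_sum_mul, if_neg (Ne.symm hne), zero_mul, Complex.zero_re]
        · intro h; exact absurd (Finset.mem_univ j) h
    _ = 2^m * ∑ j, ‖u j‖^2 := by
        rw [Finset.mul_sum]
        refine Finset.sum_congr rfl fun j _ => ?_
        rw [show ((2:ℂ)^m) = (((2:ℝ)^m : ℝ) : ℂ) by push_cast; ring,
          Complex.re_ofReal_mul, ← RCLike.re_to_complex, inner_self_eq_norm_sq]

/-- Average of norms of Rademacher sums is at most the square root of the sum of squared norms. -/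
lemma avg_norm_signs_le {H : Type*} [NormedAddCommGroup H] [InnerProductSpace ℂ H]
    (m : ℕ) (u : Fin m → H) :
    ((2:ℝ)^m)⁻¹ * ∑ ε : Fin m → Bool, ‖∑ j, (if ε j then (1:ℂ) else -1) • u j‖
      ≤ Real.sqrt (∑ j, ‖u j‖^2) := by
  have hcard : (Finset.univ : Finset (Fin m → Bool)).card = 2^m := by
    simp [Fintype.card_fun]
  have hcs : (∑ ε : Fin m → Bool, ‖∑ j, (if ε j then (1:ℂ) else -1) • u j‖)^2
      ≤ (2:ℝ)^m * (2^m * ∑ j, ‖u j‖^2) := by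
    calc (∑ ε : Fin m → Bool, ‖∑ j, (if ε j then (1:ℂ) else -1) • u j‖)^2
        ≤ (Finset.univ : Finset (Fin m → Bool)).card
            * ∑ ε : Fin m → Bool, ‖∑ j, (if ε j then (1:ℂ) else -1) • u j‖^2 :=
          sq_sum_le_card_mul_sum_sq
      _ = (2:ℝ)^m * (2^m * ∑ j, ‖u j‖^2) := by
          rw [hcard, sum_sq_norm_signs]; push_cast; ring
  have hpos : (0:ℝ) < (2:ℝ)^m := by positivity
  have hnn : 0 ≤ ∑ ε : Fin m → Bool, ‖∑ j, (if ε j then (1:ℂ) else -1) • u j‖ :=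
    Finset.sum_nonneg fun _ _ => norm_nonneg _
  rw [inv_mul_le_iff₀ hpos]
  rw [← Real.sqrt_sq hnn]
  calc Real.sqrt ((∑ ε : Fin m → Bool, ‖∑ j, (if ε j then (1:ℂ) else -1) • u j‖)^2)
      ≤ Real.sqrt ((2:ℝ)^m * (2^m * ∑ j, ‖u j‖^2)) := Real.sqrt_le_sqrt hcs
    _ = (2:ℝ)^m * Real.sqrt (∑ j, ‖u j‖^2) := by
        rw [show (2:ℝ)^m * (2^m * ∑ j, ‖u j‖^2) = ((2:ℝ)^m)^2 * ∑ j, ‖u j‖^2 by ring,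
          Real.sqrt_mul (by positivity), Real.sqrt_sq (by positivity)]

/-- If `‖∑ₖ εₖ ⟨u, yₖ⟩ xₖ‖ ≤ C‖u‖` for all `u ∈ H` and all scalars `|εₖ| ≤ 1`,
then for all `u₁,…,u_m, v₁,…,v_m ∈ H`, the averages over all sign choices
`ε, δ ∈ {−1,1}^m` (encoded by `Fin m → Bool`) satisfy
`∑ₖ (2^{-m} ∑_ε |∑ⱼ εⱼ⟨uⱼ, yₖ⟩|)(2^{-m} ∑_δ |∑ᵢ δᵢ⟨vᵢ, xₖ⟩|)
  ≤ C (∑ⱼ‖uⱼ‖²)^(1/2) (∑ᵢ‖vᵢ‖²)^(1/2)`.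
Here `⟨u, y⟩` (linear in the first argument) is Mathlib's `inner y u`. -/
theorem rademacher_average_estimate
    {H : Type*} [NormedAddCommGroup H] [InnerProductSpace ℂ H]
    (n : ℕ) (hn : 1 ≤ n) (C : ℝ) (hC : 0 ≤ C) (x y : Fin n → H)
    (hΦ : ∀ (u : H) (ε : Fin n → ℂ), (∀ k, ‖ε k‖ ≤ 1) →
      ‖∑ k, (ε k * (inner ℂ (y k) u : ℂ)) • x k‖ ≤ C * ‖u‖)
    (m : ℕ) (hm : 1 ≤ m) (u v : Fin m → H) :
    ∑ k : Fin n,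
        (((2 : ℝ) ^ m)⁻¹ * ∑ ε : Fin m → Bool,
            ‖∑ j, (if ε j then (1 : ℂ) else -1) * (inner ℂ (y k) (u j) : ℂ)‖) *
        (((2 : ℝ) ^ m)⁻¹ * ∑ δ : Fin m → Bool,
            ‖∑ i, (if δ i then (1 : ℂ) else -1) * (inner ℂ (x k) (v i) : ℂ)‖) ≤
      C * Real.sqrt (∑ j, ‖u j‖ ^ 2) * Real.sqrt (∑ i, ‖v i‖ ^ 2) := by
  classical
  set U : (Fin m → Bool) → H := fun ε => ∑ j, (if ε j then (1:ℂ) else -1) • u j with hU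
  set V : (Fin m → Bool) → H := fun δ => ∑ i, (if δ i then (1:ℂ) else -1) • v i with hV
  -- rewrite the inner-product sums via U, V
  have ha : ∀ k (ε : Fin m → Bool),
      ∑ j, (if ε j then (1:ℂ) else -1) * ⟪y k, u j⟫ = ⟪y k, U ε⟫ := by
    intro k ε; rw [hU, inner_sum]
    exact Finset.sum_congr rfl fun j _ => (inner_smul_right _ _ _).symm
  have hb : ∀ k (δ : Fin m → Bool),
      ∑ i, (if δ i then (1:ℂ) else -1) * ⟪x k, v i⟫ = ⟪x k, V δ⟫ := by
    intro k δ; rw [hV, inner_sum]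
    exact Finset.sum_congr rfl fun i _ => (inner_smul_right _ _ _).symm
  -- key pointwise estimate
  have key : ∀ (ε δ : Fin m → Bool),
      ∑ k, ‖⟪y k, U ε⟫‖ * ‖⟪x k, V δ⟫‖ ≤ C * ‖U ε‖ * ‖V δ‖ := by
    intro ε δ
    set a : Fin n → ℂ := fun k => ⟪y k, U ε⟫ with haa
    set b : Fin n → ℂ := fun k => ⟪x k, V δ⟫ with hbb
    set c : Fin n → ℂ := fun k =>
      if h : a k * (starRingEnd ℂ) (b k) = 0 then 0
      else (‖a k‖ * ‖b k‖ : ℂ) / (a k * (starRingEnd ℂ) (b k)) with hcc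
    have hcle : ∀ k, ‖c k‖ ≤ 1 := by
      intro k
      simp only [hcc]
      by_cases h : a k * (starRingEnd ℂ) (b k) = 0
      · simp [h]
      · simp only [dif_neg h]
        rw [norm_div, norm_mul, norm_mul, RCLike.norm_conj]
        rw [Complex.norm_real, Complex.norm_real]
        simp only [Real.norm_eq_abs, abs_of_nonneg (norm_nonneg _)]
        rcases mul_ne_zero_iff.1 h with ⟨h1, h2⟩
        have hb0 : b k ≠ 0 := fun hb0 => h2 (by simp [hb0])
        rw [div_le_one (mul_pos (norm_pos_iff.2 h1) (norm_pos_iff.2 hb0))]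
    have hceq : ∀ k, c k * (a k * (starRingEnd ℂ) (b k)) = (‖a k‖ * ‖b k‖ : ℝ) := by
      intro k
      simp only [hcc]
      by_cases h : a k * (starRingEnd ℂ) (b k) = 0
      · simp only [dif_pos h, zero_mul]
        rcases mul_eq_zero.1 h with h1 | h1
        · simp [h1]
        · have : b k = 0 := by simpa using h1
          simp [this]
      · rw [dif_neg h, div_mul_cancel₀ _ h]; push_cast; ring
    -- the vector w
    set w : H := ∑ k, (c k * a k) • x k with hw
    have hwnorm : ‖w‖ ≤ C * ‖U ε‖ := by
      rw [hw, haa]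
      simpa [mul_assoc] using hΦ (U ε) c hcle
    have hVw : ⟪V δ, w⟫ = ∑ k, c k * a k * (starRingEnd ℂ) (b k) := by
      rw [hw, inner_sum]
      refine Finset.sum_congr rfl fun k _ => ?_
      rw [inner_smul_right]
      congr 1
      simp only [hbb]
      exact (inner_conj_symm (V δ) (x k)).symm
    have hsum : (∑ k, ‖a k‖ * ‖b k‖ : ℝ) = Complex.re ⟪V δ, w⟫ := by
      rw [hVw, Complex.re_sum]
      refine Finset.sum_congr rfl fun k _ => ?_
      rw [mul_assoc, hceq k]
      simp
    calc ∑ k, ‖a k‖ * ‖b k‖ = Complex.re ⟪V δ, w⟫ := hsum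
      _ ≤ ‖⟪V δ, w⟫‖ := Complex.re_le_norm _
      _ ≤ ‖V δ‖ * ‖w‖ := norm_inner_le_norm _ _
      _ ≤ ‖V δ‖ * (C * ‖U ε‖) := by
          exact mul_le_mul_of_nonneg_left hwnorm (norm_nonneg _)
      _ = C * ‖U ε‖ * ‖V δ‖ := by ring
  -- now average
  have hpos : (0:ℝ) < (2:ℝ)^m := by positivity
  have step1 : ∑ k : Fin n,
        (((2 : ℝ) ^ m)⁻¹ * ∑ ε : Fin m → Bool, ‖⟪y k, U ε⟫‖) *
        (((2 : ℝ) ^ m)⁻¹ * ∑ δ : Fin m → Bool, ‖⟪x k, V δ⟫‖)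
      ≤ C * (((2:ℝ)^m)⁻¹ * ∑ ε : Fin m → Bool, ‖U ε‖)
          * (((2:ℝ)^m)⁻¹ * ∑ δ : Fin m → Bool, ‖V δ‖) := by
    have expand : ∑ k : Fin n,
        (((2 : ℝ) ^ m)⁻¹ * ∑ ε : Fin m → Bool, ‖⟪y k, U ε⟫‖) *
        (((2 : ℝ) ^ m)⁻¹ * ∑ δ : Fin m → Bool, ‖⟪x k, V δ⟫‖)
        = ((2:ℝ)^m)⁻¹ * ((2:ℝ)^m)⁻¹ *
            ∑ ε : Fin m → Bool, ∑ δ : Fin m → Bool, ∑ k, ‖⟪y k, U ε⟫‖ * ‖⟪x k, V δ⟫‖ := by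
      have hk : ∀ k : Fin n,
          (((2 : ℝ) ^ m)⁻¹ * ∑ ε : Fin m → Bool, ‖⟪y k, U ε⟫‖) *
          (((2 : ℝ) ^ m)⁻¹ * ∑ δ : Fin m → Bool, ‖⟪x k, V δ⟫‖)
          = ((2:ℝ)^m)⁻¹ * ((2:ℝ)^m)⁻¹ *
              ∑ ε : Fin m → Bool, ∑ δ : Fin m → Bool, ‖⟪y k, U ε⟫‖ * ‖⟪x k, V δ⟫‖ := by
        intro k
        rw [← Finset.sum_mul_sum]
        ring
      rw [Finset.sum_congr rfl fun k _ => hk k, ← Finset.mul_sum]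
      congr 1
      rw [Finset.sum_comm]
      exact Finset.sum_congr rfl fun ε _ => Finset.sum_comm
    rw [expand]
    have hbound : ∑ ε : Fin m → Bool, ∑ δ : Fin m → Bool, ∑ k, ‖⟪y k, U ε⟫‖ * ‖⟪x k, V δ⟫‖
        ≤ ∑ ε : Fin m → Bool, ∑ δ : Fin m → Bool, C * ‖U ε‖ * ‖V δ‖ :=
      Finset.sum_le_sum fun ε _ => Finset.sum_le_sum fun δ _ => key ε δ
    have hfact : ∑ ε : Fin m → Bool, ∑ δ : Fin m → Bool, C * ‖U ε‖ * ‖V δ‖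
        = C * (∑ ε : Fin m → Bool, ‖U ε‖) * (∑ δ : Fin m → Bool, ‖V δ‖) := by
      calc ∑ ε : Fin m → Bool, ∑ δ : Fin m → Bool, C * ‖U ε‖ * ‖V δ‖
          = ∑ ε : Fin m → Bool, (C * ‖U ε‖) * ∑ δ : Fin m → Bool, ‖V δ‖ :=
            Finset.sum_congr rfl fun ε _ => (Finset.mul_sum _ _ _).symm
        _ = (∑ ε : Fin m → Bool, C * ‖U ε‖) * ∑ δ : Fin m → Bool, ‖V δ‖ :=
            (Finset.sum_mul _ _ _).symm
        _ = C * (∑ ε : Fin m → Bool, ‖U ε‖) * (∑ δ : Fin m → Bool, ‖V δ‖) := by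
            rw [← Finset.mul_sum]
    calc ((2:ℝ)^m)⁻¹ * ((2:ℝ)^m)⁻¹ *
            ∑ ε : Fin m → Bool, ∑ δ : Fin m → Bool, ∑ k, ‖⟪y k, U ε⟫‖ * ‖⟪x k, V δ⟫‖
        ≤ ((2:ℝ)^m)⁻¹ * ((2:ℝ)^m)⁻¹ *
            ∑ ε : Fin m → Bool, ∑ δ : Fin m → Bool, C * ‖U ε‖ * ‖V δ‖ :=
          mul_le_mul_of_nonneg_left hbound (by positivity)
      _ = C * (((2:ℝ)^m)⁻¹ * ∑ ε : Fin m → Bool, ‖U ε‖)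
          * (((2:ℝ)^m)⁻¹ * ∑ δ : Fin m → Bool, ‖V δ‖) := by
          rw [hfact]; ring
  have hEU : ((2:ℝ)^m)⁻¹ * ∑ ε : Fin m → Bool, ‖U ε‖ ≤ Real.sqrt (∑ j, ‖u j‖^2) :=
    avg_norm_signs_le m u
  have hEV : ((2:ℝ)^m)⁻¹ * ∑ δ : Fin m → Bool, ‖V δ‖ ≤ Real.sqrt (∑ i, ‖v i‖^2) :=
    avg_norm_signs_le m v
  have hfinal : C * (((2:ℝ)^m)⁻¹ * ∑ ε : Fin m → Bool, ‖U ε‖)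
          * (((2:ℝ)^m)⁻¹ * ∑ δ : Fin m → Bool, ‖V δ‖)
        ≤ C * Real.sqrt (∑ j, ‖u j‖ ^ 2) * Real.sqrt (∑ i, ‖v i‖ ^ 2) := by
    have h1 : (0:ℝ) ≤ ((2:ℝ)^m)⁻¹ * ∑ ε : Fin m → Bool, ‖U ε‖ := by positivity
    have h2 : (0:ℝ) ≤ ((2:ℝ)^m)⁻¹ * ∑ δ : Fin m → Bool, ‖V δ‖ := by positivity
    gcongr
  refine le_trans (le_of_eq ?_) (le_trans step1 hfinal)
  refine Finset.sum_congr rfl fun k _ => ?_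
  congr 1
  · congr 1
    exact Finset.sum_congr rfl fun ε _ => by rw [← ha k ε]
  · congr 1
    exact Finset.sum_congr rfl fun δ _ => by rw [← hb k δ]
end
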